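/- arXiv:2502.10020 — 6 statements merged into one kernel-verified Lean document; each statement's English description precedes it below -/
import Mathlib

section
/- Let d, T ∈ ℕ, B, α > 0, and 𝒯 ⊆ [T] a set of update rounds. For each t ∈ [T] let S_t be a finite assortment with feature vectors x_{ti} ∈ ℝ^d satisfying ‖x_{ti}‖₂ ≤ 1, let y_t be a one-hot response vector over S_t ∪ {0}, and let ℓ_t(w) = −Σ_{i∈S_t∪{0}} y_{ti} log p_t(i|S_t,w) be the MNL loss. Let w* ∈ ℝ^d with ‖w*‖₂ ≤ B, let η = 1 + (3√2/2)α and λ ≥ 12√2 ηα. For each t ∈ 𝒯 let 𝒲_t ⊆ ℝ^d be a compact convex set with w* ∈ 𝒲_t and sup_{w∈𝒲_t} |x_{ti}ᵀ(w − w*)| ≤ α for all i ∈ S_t. Define: H_t = λ I_d + Σ_{s∈𝒯, s<t} ∇²ℓ_s(w_{s+1}); at the first update round t₁, w_{t₁} arbitrary with ‖w_{t₁}‖₂ ≤ B; at each update round t ∈ 𝒯, w_t' = argmin_{w∈𝒲_t} ‖w − w_t‖_{H_t} and w_{t+1} = argmin_{w∈𝒲_t} [ ℓ̃_t(w) + (1/(2η))‖w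 − w_t'‖²_{H_t} ], where ℓ̃_t(w) = ℓ_t(w_t') + ⟨∇ℓ_t(w_t'), w − w_t'⟩ + (1/2)‖w − w_t'‖²_{∇²ℓ_t(w_t')}; and w_{t+1} = w_t on non-update rounds. Then for every t ∈ 𝒯, writing 𝒯_{t+1} = {s ∈ 𝒯 : s ≤ t}: ‖w_{t+1} − w*‖²_{H_{t+1}} ≤ 2η Σ_{s∈𝒯_{t+1}} (ℓ_s(w*) − ℓ_s(w_{s+1})) + 4B²λ − (1/2) Σ_{s∈𝒯_{t+1}} ‖w_{s+1} − w_s'‖²_{H_s}. -/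
open Matrix

noncomputable section

/-- MNL choice probability of item `i ∈ S`. -/
def mnlProb {d : ℕ} {ι : Type*} (S : Finset ι) (x : ι → Fin d → ℝ)
    (w : Fin d → ℝ) (i : ι) : ℝ :=
  Real.exp (x i ⬝ᵥ w) / (1 + ∑ j ∈ S, Real.exp (x j ⬝ᵥ w))

/-- MNL probability of the outside option. -/
def mnlProb0 {d : ℕ} {ι : Type*} (S : Finset ι) (x : ι → Fin d → ℝ)
    (w : Fin d → ℝ) : ℝ :=
  1 / (1 + ∑ j ∈ S, Real.exp (x j ⬝ᵥ w))

/-- MNL loss for a response `y` over `S ∪ {0}` (with `y0` the response for the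
outside option). -/
def mnlLoss {d : ℕ} {ι : Type*} (S : Finset ι) (x : ι → Fin d → ℝ)
    (y : ι → ℝ) (y0 : ℝ) (w : Fin d → ℝ) : ℝ :=
  -(y0 * Real.log (mnlProb0 S x w) + ∑ i ∈ S, y i * Real.log (mnlProb S x w i))

/-- Gradient of the MNL loss: `∇ℓ(w) = Σ_{i∈S} (p(i|S,w) − yᵢ) xᵢ`. -/
def mnlGrad {d : ℕ} {ι : Type*} (S : Finset ι) (x : ι → Fin d → ℝ)
    (y : ι → ℝ) (w : Fin d → ℝ) : Fin d → ℝ :=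
  ∑ i ∈ S, (mnlProb S x w i - y i) • x i

/-- Hessian of the MNL loss. -/
def mnlHess {d : ℕ} {ι : Type*} (S : Finset ι) (x : ι → Fin d → ℝ)
    (w : Fin d → ℝ) : Matrix (Fin d) (Fin d) ℝ :=
  (∑ i ∈ S, mnlProb S x w i • vecMulVec (x i) (x i))
    - vecMulVec (∑ i ∈ S, mnlProb S x w i • x i) (∑ i ∈ S, mnlProb S x w i • x i)

/-- Quadratic form `vᵀ M v` (i.e. `‖v‖²_M`). -/
def quadForm {d : ℕ} (M : Matrix (Fin d) (Fin d) ℝ) (v : Fin d → ℝ) : ℝ :=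
  v ⬝ᵥ M.mulVec v

/-- Matrix-weighted norm `‖v‖_M = √(vᵀMv)`. -/
def mnorm {d : ℕ} (M : Matrix (Fin d) (Fin d) ℝ) (v : Fin d → ℝ) : ℝ :=
  Real.sqrt (quadForm M v)

/-- Euclidean (ℓ₂) norm on `Fin d → ℝ`. -/
def l2norm {d : ℕ} (v : Fin d → ℝ) : ℝ := Real.sqrt (v ⬝ᵥ v)

end


open Matrix Finset

noncomputable section OMDCore

namespace OMD

variable {ι : Type*} (S : Finset ι) (a b c : ι → ℝ)

def zz (s : ℝ) : ℝ := 1 + ∑ i ∈ S, Real.exp (a i + s * b i)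

def pp (i : ι) (s : ℝ) : ℝ := Real.exp (a i + s * b i) / zz S a b s

def mm (s : ℝ) : ℝ := ∑ i ∈ S, pp S a b i s * b i

def vv (s : ℝ) : ℝ := (∑ i ∈ S, pp S a b i s * (b i)^2) - (mm S a b s)^2

def cc (s : ℝ) : ℝ := ∑ i ∈ S, pp S a b i s * c i

def gg (s : ℝ) : ℝ := (∑ i ∈ S, pp S a b i s * (b i * c i)) - mm S a b s * cc S a b c s

lemma zz_pos (s : ℝ) : 0 < zz S a b s := by
  have : (0:ℝ) ≤ ∑ i ∈ S, Real.exp (a i + s * b i) :=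
    Finset.sum_nonneg fun i _ => (Real.exp_pos _).le
  unfold zz; linarith

lemma pp_pos (i : ι) (s : ℝ) : 0 < pp S a b i s :=
  div_pos (Real.exp_pos _) (zz_pos S a b s)

lemma sum_pp_add (s : ℝ) : 1 / zz S a b s + ∑ i ∈ S, pp S a b i s = 1 := by
  have hz := (zz_pos S a b s).ne'
  unfold pp
  rw [← Finset.sum_div]
  rw [← add_div, div_eq_one_iff_eq hz]
  rfl

lemma sum_pp_le_one (s : ℝ) : ∑ i ∈ S, pp S a b i s ≤ 1 := by
  have h := sum_pp_add S a b s
  have h2 : 0 < 1 / zz S a b s := div_pos one_pos (zz_pos S a b s)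
  linarith

lemma hasDerivAt_exp_term (i : ι) (s : ℝ) :
    HasDerivAt (fun s => Real.exp (a i + s * b i)) (Real.exp (a i + s * b i) * b i) s :=
  (((hasDerivAt_mul_const (b i)).const_add (a i)).exp)

lemma sum_exp_mul (s : ℝ) :
    ∑ i ∈ S, Real.exp (a i + s * b i) * b i = zz S a b s * mm S a b s := by
  unfold mm pp
  rw [Finset.mul_sum]
  refine Finset.sum_congr rfl fun i _ => ?_
  field_simp [(zz_pos S a b s).ne']

lemma hasDerivAt_zz (s : ℝ) :
    HasDerivAt (zz S a b) (zz S a b s * mm S a b s) s := by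
  have h : HasDerivAt (fun s => 1 + ∑ i ∈ S, Real.exp (a i + s * b i))
      (∑ i ∈ S, Real.exp (a i + s * b i) * b i) s :=
    (HasDerivAt.fun_sum fun i _ => hasDerivAt_exp_term a b i s).const_add 1
  rw [sum_exp_mul] at h
  exact h

lemma hasDerivAt_log_zz (s : ℝ) :
    HasDerivAt (fun s => Real.log (zz S a b s)) (mm S a b s) s := by
  have h := (hasDerivAt_zz S a b s).log (zz_pos S a b s).ne'
  have : zz S a b s * mm S a b s / zz S a b s = mm S a b s :=
    mul_div_cancel_left₀ _ (zz_pos S a b s).ne'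
  rwa [this] at h

lemma hasDerivAt_pp (i : ι) (s : ℝ) :
    HasDerivAt (pp S a b i) (pp S a b i s * (b i - mm S a b s)) s := by
  have h := (hasDerivAt_exp_term a b i s).div (hasDerivAt_zz S a b s) (zz_pos S a b s).ne'
  have heq : (Real.exp (a i + s * b i) * b i * zz S a b s -
      Real.exp (a i + s * b i) * (zz S a b s * mm S a b s)) / zz S a b s ^ 2
      = pp S a b i s * (b i - mm S a b s) := by
    have hz := (zz_pos S a b s).ne'
    have h2 : Real.exp (a i + s * b i) * b i * zz S a b s -
        Real.exp (a i + s * b i) * (zz S a b s * mm S a b s)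
        = (Real.exp (a i + s * b i) * (b i - mm S a b s)) * zz S a b s := by ring
    rw [h2, sq, mul_div_mul_right _ _ hz]
    unfold pp
    ring
  rwa [heq] at h

lemma hasDerivAt_mm (s : ℝ) : HasDerivAt (mm S a b) (vv S a b s) s := by
  have h : HasDerivAt (mm S a b)
      (∑ i ∈ S, pp S a b i s * (b i - mm S a b s) * b i) s :=
    HasDerivAt.fun_sum fun i _ => (hasDerivAt_pp S a b i s).mul_const (b i)
  have heq : ∑ i ∈ S, pp S a b i s * (b i - mm S a b s) * b i = vv S a b s := by
    have h1 : ∑ i ∈ S, pp S a b i s * (b i - mm S a b s) * b i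
        = (∑ i ∈ S, pp S a b i s * (b i)^2) - mm S a b s * mm S a b s := by
      rw [Finset.sum_congr rfl (fun i _ => (by ring :
        pp S a b i s * (b i - mm S a b s) * b i
          = pp S a b i s * (b i)^2 - mm S a b s * (pp S a b i s * b i))),
        Finset.sum_sub_distrib, ← Finset.mul_sum]
      rfl
    rw [h1]; unfold vv; ring
  rwa [heq] at h

lemma hasDerivAt_cc (s : ℝ) :
    HasDerivAt (cc S a b c) (∑ i ∈ S, pp S a b i s * (b i - mm S a b s) * c i) s :=
  HasDerivAt.fun_sum fun i _ => (hasDerivAt_pp S a b i s).mul_const (c i)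

lemma hasDerivAt_gg (s : ℝ) :
    HasDerivAt (gg S a b c)
      ((∑ i ∈ S, pp S a b i s * (b i - mm S a b s) * (b i * c i))
        - (vv S a b s * cc S a b c s
            + mm S a b s * ∑ i ∈ S, pp S a b i s * (b i - mm S a b s) * c i)) s := by
  exact (HasDerivAt.fun_sum fun i _ => (hasDerivAt_pp S a b i s).mul_const (b i * c i)).sub
    ((hasDerivAt_mm S a b s).mul (hasDerivAt_cc S a b c s))

-- ==== bounds ====

lemma abs_sum_pp_mul_le (f : ι → ℝ) {M : ℝ} (hM : 0 ≤ M)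
    (hf : ∀ i ∈ S, |f i| ≤ M) (s : ℝ) :
    |∑ i ∈ S, pp S a b i s * f i| ≤ M := by
  calc |∑ i ∈ S, pp S a b i s * f i| ≤ ∑ i ∈ S, |pp S a b i s * f i| :=
        Finset.abs_sum_le_sum_abs _ _
    _ ≤ ∑ i ∈ S, pp S a b i s * M := by
        refine Finset.sum_le_sum fun i hi => ?_
        rw [abs_mul, abs_of_pos (pp_pos S a b i s)]
        exact mul_le_mul_of_nonneg_left (hf i hi) (pp_pos S a b i s).le
    _ = (∑ i ∈ S, pp S a b i s) * M := by rw [Finset.sum_mul]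
    _ ≤ 1 * M := mul_le_mul_of_nonneg_right (sum_pp_le_one S a b s) hM
    _ = M := one_mul M

lemma abs_mm_le {β : ℝ} (hβ : 0 ≤ β) (hb : ∀ i ∈ S, |b i| ≤ β) (s : ℝ) :
    |mm S a b s| ≤ β := abs_sum_pp_mul_le S a b b hβ hb s

lemma vv_nonneg (s : ℝ) : 0 ≤ vv S a b s := by
  have h := sum_mul_sq_le_sq_mul_sq S (fun i => Real.sqrt (pp S a b i s))
    (fun i => Real.sqrt (pp S a b i s) * b i)
  have h1 : ∑ i ∈ S, Real.sqrt (pp S a b i s) * (Real.sqrt (pp S a b i s) * b i)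
      = mm S a b s := by
    refine Finset.sum_congr rfl fun i _ => ?_
    rw [← mul_assoc, Real.mul_self_sqrt (pp_pos S a b i s).le]
  have h2 : ∑ i ∈ S, (Real.sqrt (pp S a b i s))^2 = ∑ i ∈ S, pp S a b i s := by
    refine Finset.sum_congr rfl fun i _ => Real.sq_sqrt (pp_pos S a b i s).le
  have h3 : ∑ i ∈ S, (Real.sqrt (pp S a b i s) * b i)^2
      = ∑ i ∈ S, pp S a b i s * (b i)^2 := by
    refine Finset.sum_congr rfl fun i _ => ?_
    rw [mul_pow, Real.sq_sqrt (pp_pos S a b i s).le]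
  rw [h1, h2, h3] at h
  have h4 : 0 ≤ ∑ i ∈ S, pp S a b i s * (b i)^2 :=
    Finset.sum_nonneg fun i _ => mul_nonneg (pp_pos S a b i s).le (sq_nonneg _)
  have h5 : (∑ i ∈ S, pp S a b i s) * (∑ i ∈ S, pp S a b i s * (b i)^2)
      ≤ ∑ i ∈ S, pp S a b i s * (b i)^2 :=
    mul_le_of_le_one_left h4 (sum_pp_le_one S a b s)
  unfold vv
  nlinarith [h, h5]

lemma vv_le_sq {β : ℝ} (hβ : 0 ≤ β) (hb : ∀ i ∈ S, |b i| ≤ β) (s : ℝ) :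
    vv S a b s ≤ β^2 := by
  have h1 : ∑ i ∈ S, pp S a b i s * (b i)^2 ≤ β^2 := by
    have := abs_sum_pp_mul_le S a b (fun i => (b i)^2) (sq_nonneg β)
      (fun i hi => by
        rw [abs_of_nonneg (sq_nonneg _)]
        exact sq_le_sq' (by linarith [(abs_le.mp (hb i hi)).1]) (abs_le.mp (hb i hi)).2) s
    exact (abs_le.mp this).2
  have h2 : (0:ℝ) ≤ (mm S a b s)^2 := sq_nonneg _
  unfold vv; linarith

-- ==== probability comparison along the segment ====

lemma zz_upper {β : ℝ} (hβ : 0 ≤ β) (hb : ∀ i ∈ S, |b i| ≤ β) {s : ℝ} (hs : 0 ≤ s) :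
    zz S a b s ≤ Real.exp (β * s) * zz S a b 0 := by
  unfold zz
  rw [mul_add, mul_one, Finset.mul_sum]
  refine add_le_add (Real.one_le_exp (mul_nonneg hβ hs)) (Finset.sum_le_sum fun i hi => ?_)
  rw [← Real.exp_add]
  refine Real.exp_le_exp.2 ?_
  have := (abs_le.mp (hb i hi)).2
  have h0 : 0 * b i = 0 := zero_mul _
  nlinarith [mul_le_mul_of_nonneg_left this hs]

lemma exp_term_lower {β : ℝ} (hb : ∀ i ∈ S, |b i| ≤ β) {s : ℝ} (hs : 0 ≤ s)
    {i : ι} (hi : i ∈ S) :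
    Real.exp (-(β * s)) * Real.exp (a i + 0 * b i) ≤ Real.exp (a i + s * b i) := by
  rw [← Real.exp_add]
  refine Real.exp_le_exp.2 ?_
  have := (abs_le.mp (hb i hi)).1
  nlinarith [mul_le_mul_of_nonneg_left this hs]

lemma exp_ratio {β s : ℝ} :
    Real.exp (-(2*β)*s) = Real.exp (-(β*s)) / Real.exp (β*s) := by
  rw [← Real.exp_sub]; ring_nf

lemma pp_lower {β : ℝ} (hβ : 0 ≤ β) (hb : ∀ i ∈ S, |b i| ≤ β) {s : ℝ} (hs : 0 ≤ s)
    {i : ι} (hi : i ∈ S) :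
    Real.exp (-(2*β)*s) * pp S a b i 0 ≤ pp S a b i s := by
  have key : Real.exp (-(2*β)*s) * pp S a b i 0
      = (Real.exp (-(β*s)) * Real.exp (a i + 0 * b i)) / (Real.exp (β*s) * zz S a b 0) := by
    rw [exp_ratio, pp, div_mul_div_comm]
  rw [key, pp]
  exact div_le_div₀ (Real.exp_pos _).le (exp_term_lower S a b hb hs hi)
    (zz_pos S a b s) (zz_upper S a b hβ hb hs)

lemma zz_inv_lower {β : ℝ} (hβ : 0 ≤ β) (hb : ∀ i ∈ S, |b i| ≤ β) {s : ℝ} (hs : 0 ≤ s) :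
    Real.exp (-(2*β)*s) * (1 / zz S a b 0) ≤ 1 / zz S a b s := by
  rw [mul_one_div, div_le_div_iff₀ (zz_pos S a b 0) (zz_pos S a b s)]
  calc Real.exp (-(2*β)*s) * zz S a b s
      ≤ Real.exp (-(2*β)*s) * (Real.exp (β*s) * zz S a b 0) :=
        mul_le_mul_of_nonneg_left (zz_upper S a b hβ hb hs) (Real.exp_pos _).le
    _ = Real.exp (-(β*s)) * zz S a b 0 := by
        rw [← mul_assoc, ← Real.exp_add]; ring_nf
    _ ≤ 1 * zz S a b 0 := by
        refine mul_le_mul_of_nonneg_right (Real.exp_le_one_iff.2 ?_) (zz_pos S a b 0).le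
        nlinarith

-- ==== variance identity and comparison ====

lemma vv_eq_W (cv s : ℝ) :
    (1 / zz S a b s) * cv^2 + ∑ i ∈ S, pp S a b i s * (b i - cv)^2
      = vv S a b s + (cv - mm S a b s)^2 := by
  have h1 : ∑ i ∈ S, pp S a b i s * (b i - cv)^2
      = (∑ i ∈ S, pp S a b i s * (b i)^2) - 2*cv*(mm S a b s)
        + cv^2 * (∑ i ∈ S, pp S a b i s) := by
    rw [Finset.sum_congr rfl (fun i _ => (by ring :
      pp S a b i s * (b i - cv)^2
        = (pp S a b i s * (b i)^2 - 2*cv*(pp S a b i s * b i)) + cv^2 * pp S a b i s)),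
      Finset.sum_add_distrib, Finset.sum_sub_distrib, ← Finset.mul_sum, ← Finset.mul_sum]
    rfl
  have h2 := sum_pp_add S a b s
  rw [h1]
  unfold vv
  linear_combination cv^2 * h2

lemma vv_lower {β : ℝ} (hβ : 0 ≤ β) (hb : ∀ i ∈ S, |b i| ≤ β) {s : ℝ} (hs : 0 ≤ s) :
    Real.exp (-(2*β)*s) * vv S a b 0 ≤ vv S a b s := by
  set θ := Real.exp (-(2*β)*s) with hθdef
  have hθ : 0 < θ := Real.exp_pos _
  have step1 : θ * vv S a b 0 ≤ θ * (vv S a b 0 + (mm S a b s - mm S a b 0)^2) := by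
    nlinarith [sq_nonneg (mm S a b s - mm S a b 0)]
  have step2 : θ * (vv S a b 0 + (mm S a b s - mm S a b 0)^2)
      = θ * ((1 / zz S a b 0) * (mm S a b s)^2
          + ∑ i ∈ S, pp S a b i 0 * (b i - mm S a b s)^2) := by
    rw [vv_eq_W]
  have step3 : θ * ((1 / zz S a b 0) * (mm S a b s)^2
        + ∑ i ∈ S, pp S a b i 0 * (b i - mm S a b s)^2)
      ≤ (1 / zz S a b s) * (mm S a b s)^2
        + ∑ i ∈ S, pp S a b i s * (b i - mm S a b s)^2 := by
    rw [mul_add, Finset.mul_sum]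
    refine add_le_add ?_ (Finset.sum_le_sum fun i hi => ?_)
    · rw [← mul_assoc]
      exact mul_le_mul_of_nonneg_right (zz_inv_lower S a b hβ hb hs) (sq_nonneg _)
    · rw [← mul_assoc]
      exact mul_le_mul_of_nonneg_right (pp_lower S a b hβ hb hs hi) (sq_nonneg _)
  have step4 : (1 / zz S a b s) * (mm S a b s)^2
      + ∑ i ∈ S, pp S a b i s * (b i - mm S a b s)^2 = vv S a b s := by
    rw [vv_eq_W]; simp
  linarith

-- ==== monotonicity helper ====

lemma le_on_Icc_of_deriv {f f' : ℝ → ℝ} (hf : ∀ s, HasDerivAt f (f' s) s)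
    (h' : ∀ s ∈ Set.Icc (0:ℝ) 1, 0 ≤ f' s) :
    ∀ s ∈ Set.Icc (0:ℝ) 1, f 0 ≤ f s := by
  have hmono : MonotoneOn f (Set.Icc (0:ℝ) 1) := by
    refine monotoneOn_of_deriv_nonneg (convex_Icc 0 1)
      (fun s _ => (hf s).continuousAt.continuousWithinAt)
      (fun s _ => (hf s).differentiableAt.differentiableWithinAt) (fun s hs => ?_)
    rw [(hf s).deriv]
    exact h' s (interior_subset hs)
  intro s hs
  exact hmono (Set.left_mem_Icc.2 zero_le_one) hs hs.1

lemma cc_deriv_eq (s : ℝ) :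
    ∑ i ∈ S, pp S a b i s * (b i - mm S a b s) * c i = gg S a b c s := by
  rw [Finset.sum_congr rfl (fun i _ => (by ring :
    pp S a b i s * (b i - mm S a b s) * c i
      = pp S a b i s * (b i * c i) - mm S a b s * (pp S a b i s * c i))),
    Finset.sum_sub_distrib, ← Finset.mul_sum]
  rfl

lemma hasDerivAt_cc' (s : ℝ) :
    HasDerivAt (cc S a b c) (gg S a b c s) s := by
  have h := hasDerivAt_cc S a b c s
  rwa [cc_deriv_eq] at h

-- ==== core lemma A : second-order lower bound ====

lemma coreA {β : ℝ} (hβ : 0 < β) (hb : ∀ i ∈ S, |b i| ≤ β) :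
    Real.log (zz S a b 0) + mm S a b 0
      + vv S a b 0 * ((Real.exp (-(2*β)) + 2*β - 1)/(4*β^2))
      ≤ Real.log (zz S a b 1) := by
  set φ : ℝ → ℝ := fun s => (Real.exp (-(2*β)*s) + 2*β*s - 1)/(4*β^2) with hφdef
  set ψ : ℝ → ℝ := fun s => (1 - Real.exp (-(2*β)*s))/(2*β) with hψdef
  have hlin : ∀ s : ℝ, HasDerivAt (fun s : ℝ => -(2*β)*s) (-(2*β)) s := fun s => by
    simpa using (hasDerivAt_id s).const_mul (-(2*β))
  have hdφ : ∀ s, HasDerivAt φ (ψ s) s := by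
    intro s
    have h2 : HasDerivAt (fun s => Real.exp (-(2*β)*s) + 2*β*s - 1)
        (Real.exp (-(2*β)*s) * (-(2*β)) + 2*β) s := by
      have ha := ((hlin s).exp).add ((hasDerivAt_id s).const_mul (2*β))
      simpa using ha.sub_const 1
    have h3 := h2.div_const (4*β^2)
    refine h3.congr_deriv ?_
    rw [hψdef]
    field_simp
    ring
  have hdψ : ∀ s, HasDerivAt ψ (Real.exp (-(2*β)*s)) s := by
    intro s
    have h2 : HasDerivAt (fun s => 1 - Real.exp (-(2*β)*s))
        (-(Real.exp (-(2*β)*s) * (-(2*β)))) s := ((hlin s).exp).const_sub 1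
    have h3 := h2.div_const (2*β)
    refine h3.congr_deriv ?_
    field_simp
  set F : ℝ → ℝ := fun s => Real.log (zz S a b s)
      - (s * mm S a b 0 + vv S a b 0 * φ s) with hFdef
  set F' : ℝ → ℝ := fun s => mm S a b s - (mm S a b 0 + vv S a b 0 * ψ s) with hF'def
  have hdF : ∀ s, HasDerivAt F (F' s) s := fun s =>
    (hasDerivAt_log_zz S a b s).sub
      ((hasDerivAt_mul_const (mm S a b 0)).add ((hdφ s).const_mul (vv S a b 0)))
  have hdF' : ∀ s, HasDerivAt F' (vv S a b s - vv S a b 0 * Real.exp (-(2*β)*s)) s :=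
    fun s => (hasDerivAt_mm S a b s).sub
      (((hdψ s).const_mul (vv S a b 0)).const_add (mm S a b 0))
  have hF'nonneg : ∀ s ∈ Set.Icc (0:ℝ) 1, 0 ≤ F' s := by
    have h0 : F' 0 = 0 := by
      rw [hF'def]
      simp [hψdef]
    intro s hs
    have := le_on_Icc_of_deriv hdF' (fun s hs => by
      have := vv_lower S a b hβ.le hb hs.1
      linarith [mul_comm (vv S a b 0) (Real.exp (-(2*β)*s))]) s hs
    rw [h0] at this
    exact this
  have hmain := le_on_Icc_of_deriv hdF hF'nonneg 1 (Set.right_mem_Icc.2 zero_le_one)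
  have hF0 : F 0 = Real.log (zz S a b 0) := by
    rw [hFdef]
    simp [hφdef]
  have hF1 : F 1 = Real.log (zz S a b 1)
      - (mm S a b 0 + vv S a b 0 * ((Real.exp (-(2*β)) + 2*β - 1)/(4*β^2))) := by
    rw [hFdef, hφdef]
    simp
  rw [hF0, hF1] at hmain
  linarith

-- ==== core lemma B : gradient Taylor error bound ====

lemma coreB {β γ : ℝ} (hβ : 0 ≤ β) (hγ : 0 ≤ γ) (hb : ∀ i ∈ S, |b i| ≤ β)
    (hc : ∀ i ∈ S, |c i| ≤ γ) :
    cc S a b c 1 ≤ cc S a b c 0 + gg S a b c 0 + 3 * γ * β^2 := by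
  have habs_b_mm : ∀ s : ℝ, ∀ i ∈ S, |b i - mm S a b s| ≤ 2*β := by
    intro s i hi
    calc |b i - mm S a b s| ≤ |b i| + |mm S a b s| := abs_sub _ _
      _ ≤ β + β := add_le_add (hb i hi) (abs_mm_le S a b hβ hb s)
      _ = 2*β := by ring
  have hggbound : ∀ s : ℝ,
      |(∑ i ∈ S, pp S a b i s * (b i - mm S a b s) * (b i * c i))
        - (vv S a b s * cc S a b c s
            + mm S a b s * ∑ i ∈ S, pp S a b i s * (b i - mm S a b s) * c i)|
        ≤ 6 * γ * β^2 := by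
    intro s
    have hT1 : |∑ i ∈ S, pp S a b i s * (b i - mm S a b s) * (b i * c i)| ≤ 2*β*(β*γ) := by
      rw [Finset.sum_congr rfl (fun i _ => mul_assoc (pp S a b i s) _ _)]
      refine abs_sum_pp_mul_le S a b _ (by positivity) (fun i hi => ?_) s
      rw [abs_mul, abs_mul]
      refine mul_le_mul (habs_b_mm s i hi) ?_ (by positivity) (by positivity)
      exact mul_le_mul (hb i hi) (hc i hi) (abs_nonneg _) hβ
    have hT2 : |vv S a b s * cc S a b c s| ≤ β^2 * γ := by
      rw [abs_mul]
      refine mul_le_mul ?_ (abs_sum_pp_mul_le S a b c hγ hc s) (abs_nonneg _) (by positivity)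
      rw [abs_of_nonneg (vv_nonneg S a b s)]
      exact vv_le_sq S a b hβ hb s
    have hT3 : |mm S a b s * ∑ i ∈ S, pp S a b i s * (b i - mm S a b s) * c i|
        ≤ β * (2*β*γ) := by
      rw [abs_mul]
      refine mul_le_mul (abs_mm_le S a b hβ hb s) ?_ (abs_nonneg _) hβ
      rw [Finset.sum_congr rfl (fun i _ => mul_assoc (pp S a b i s) _ _)]
      refine abs_sum_pp_mul_le S a b _ (by positivity) (fun i hi => ?_) s
      rw [abs_mul]
      exact mul_le_mul (habs_b_mm s i hi) (hc i hi) (abs_nonneg _) (by positivity)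
    calc |(∑ i ∈ S, pp S a b i s * (b i - mm S a b s) * (b i * c i))
        - (vv S a b s * cc S a b c s
            + mm S a b s * ∑ i ∈ S, pp S a b i s * (b i - mm S a b s) * c i)|
        ≤ |∑ i ∈ S, pp S a b i s * (b i - mm S a b s) * (b i * c i)|
          + |vv S a b s * cc S a b c s
            + mm S a b s * ∑ i ∈ S, pp S a b i s * (b i - mm S a b s) * c i| := abs_sub _ _
      _ ≤ |∑ i ∈ S, pp S a b i s * (b i - mm S a b s) * (b i * c i)|
          + (|vv S a b s * cc S a b c s|
            + |mm S a b s * ∑ i ∈ S, pp S a b i s * (b i - mm S a b s) * c i|) :=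
          add_le_add_right (abs_add_le _ _) _
      _ ≤ 2*β*(β*γ) + (β^2*γ + β*(2*β*γ)) := by
          refine add_le_add hT1 (add_le_add hT2 hT3)
      _ ≤ 6 * γ * β^2 := by nlinarith
  -- step 1 : gg s ≤ gg 0 + K s on [0,1]
  have step1 : ∀ s ∈ Set.Icc (0:ℝ) 1, gg S a b c s ≤ gg S a b c 0 + 6*γ*β^2 * s := by
    have hd : ∀ s : ℝ, HasDerivAt (fun s => gg S a b c 0 + 6*γ*β^2 * s - gg S a b c s)
        (6*γ*β^2 - ((∑ i ∈ S, pp S a b i s * (b i - mm S a b s) * (b i * c i))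
          - (vv S a b s * cc S a b c s
              + mm S a b s * ∑ i ∈ S, pp S a b i s * (b i - mm S a b s) * c i))) s := by
      intro s
      have h1 : HasDerivAt (fun s : ℝ => gg S a b c 0 + 6*γ*β^2 * s) (6*γ*β^2) s := by
        simpa using ((hasDerivAt_id s).const_mul (6*γ*β^2)).const_add (gg S a b c 0)
      exact h1.sub (hasDerivAt_gg S a b c s)
    intro s hs
    have := le_on_Icc_of_deriv hd
      (fun s _ => by linarith [(abs_le.mp (hggbound s)).2]) s hs
    simp only [mul_zero, add_zero] at this
    linarith
  -- step 2 : integrate once more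
  have hd2 : ∀ s : ℝ, HasDerivAt
      (fun s => cc S a b c 0 + (s * gg S a b c 0 + 6*γ*β^2 * s^2/2) - cc S a b c s)
      (gg S a b c 0 + 6*γ*β^2 * s - gg S a b c s) s := by
    intro s
    have h1 : HasDerivAt (fun s : ℝ => 6*γ*β^2 * s^2/2) (6*γ*β^2 * s) s := by
      have := ((hasDerivAt_pow 2 s).const_mul (6*γ*β^2)).div_const 2
      refine this.congr_deriv ?_
      ring
    have h2 : HasDerivAt (fun s : ℝ => cc S a b c 0 + (s * gg S a b c 0 + 6*γ*β^2 * s^2/2))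
        (gg S a b c 0 + 6*γ*β^2 * s) s :=
      ((hasDerivAt_mul_const (gg S a b c 0)).add h1).const_add (cc S a b c 0)
    exact h2.sub (hasDerivAt_cc' S a b c s)
  have hfin := le_on_Icc_of_deriv hd2
    (fun s hs => by linarith [step1 s hs]) 1 (Set.right_mem_Icc.2 zero_le_one)
  simp only [mul_zero, zero_mul, add_zero, zero_pow, one_pow, mul_one, one_mul] at hfin
  nlinarith [hfin]

end OMD

end OMDCore

noncomputable section Bridge

open OMD

variable {d : ℕ} {ι : Type*}

lemma dot_sum_left {κ : Type*} (s : Finset κ) (F : κ → (Fin d → ℝ)) (u : Fin d → ℝ) :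
    (∑ i ∈ s, F i) ⬝ᵥ u = ∑ i ∈ s, F i ⬝ᵥ u := by
  unfold dotProduct
  rw [Finset.sum_comm]
  refine Finset.sum_congr rfl fun k _ => ?_
  rw [Finset.sum_apply, Finset.sum_mul]

lemma dot_sum_right {κ : Type*} (s : Finset κ) (F : κ → (Fin d → ℝ)) (u : Fin d → ℝ) :
    u ⬝ᵥ (∑ i ∈ s, F i) = ∑ i ∈ s, u ⬝ᵥ F i := by
  rw [dotProduct_comm, dot_sum_left]
  exact Finset.sum_congr rfl fun i _ => dotProduct_comm _ _

lemma mulVec_sum' {κ : Type*} (s : Finset κ) (M : κ → Matrix (Fin d) (Fin d) ℝ)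
    (z : Fin d → ℝ) : (∑ i ∈ s, M i).mulVec z = ∑ i ∈ s, (M i).mulVec z := by
  ext k
  simp only [Matrix.mulVec, Finset.sum_apply, dotProduct, Matrix.sum_apply, Finset.sum_mul]
  rw [Finset.sum_comm]

lemma vecMulVec_mulVec' (p q z : Fin d → ℝ) :
    (vecMulVec p q).mulVec z = (q ⬝ᵥ z) • p := by
  ext k
  simp only [Matrix.mulVec, Matrix.vecMulVec_apply, dotProduct, Pi.smul_apply, smul_eq_mul]
  rw [Finset.sum_mul]
  refine Finset.sum_congr rfl fun j _ => by ring

lemma hess_bilin (S : Finset ι) (x : ι → Fin d → ℝ) (w u z : Fin d → ℝ) :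
    u ⬝ᵥ (mnlHess S x w).mulVec z
      = (∑ i ∈ S, mnlProb S x w i * ((x i ⬝ᵥ u) * (x i ⬝ᵥ z)))
        - (∑ i ∈ S, mnlProb S x w i * (x i ⬝ᵥ u))
          * (∑ i ∈ S, mnlProb S x w i * (x i ⬝ᵥ z)) := by
  unfold mnlHess
  rw [Matrix.sub_mulVec, dotProduct_sub, mulVec_sum', dot_sum_right]
  congr 1
  · refine Finset.sum_congr rfl fun i _ => ?_
    rw [Matrix.smul_mulVec, vecMulVec_mulVec', dotProduct_smul, dotProduct_smul,
      smul_eq_mul, smul_eq_mul, dotProduct_comm u (x i)]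
    ring
  · rw [vecMulVec_mulVec', dotProduct_smul, smul_eq_mul]
    have h1 : (∑ i ∈ S, mnlProb S x w i • x i) ⬝ᵥ z
        = ∑ i ∈ S, mnlProb S x w i * (x i ⬝ᵥ z) := by
      rw [dot_sum_left]
      exact Finset.sum_congr rfl fun i _ => smul_dotProduct _ _ _
    have h2 : u ⬝ᵥ (∑ i ∈ S, mnlProb S x w i • x i)
        = ∑ i ∈ S, mnlProb S x w i * (x i ⬝ᵥ u) := by
      rw [dot_sum_right]
      refine Finset.sum_congr rfl fun i _ => ?_
      rw [dotProduct_smul, smul_eq_mul, dotProduct_comm]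
    rw [h1, h2]
    ring

lemma grad_dot (S : Finset ι) (x : ι → Fin d → ℝ) (y : ι → ℝ) (w u : Fin d → ℝ) :
    mnlGrad S x y w ⬝ᵥ u = ∑ i ∈ S, (mnlProb S x w i - y i) * (x i ⬝ᵥ u) := by
  unfold mnlGrad
  rw [dot_sum_left]
  exact Finset.sum_congr rfl fun i _ => smul_dotProduct _ _ _

-- segment parameters
lemma dot_segment (x v Δ : Fin d → ℝ) (s : ℝ) :
    x ⬝ᵥ (v + s • Δ) = x ⬝ᵥ v + s * (x ⬝ᵥ Δ) := by
  rw [dotProduct_add, dotProduct_smul, smul_eq_mul]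

lemma zz_eq (S : Finset ι) (x : ι → Fin d → ℝ) (v Δ : Fin d → ℝ) (s : ℝ) :
    zz S (fun i => x i ⬝ᵥ v) (fun i => x i ⬝ᵥ Δ) s
      = 1 + ∑ i ∈ S, Real.exp (x i ⬝ᵥ (v + s • Δ)) := by
  unfold zz
  congr 1
  exact Finset.sum_congr rfl fun i _ => by rw [dot_segment]

lemma pp_eq (S : Finset ι) (x : ι → Fin d → ℝ) (v Δ : Fin d → ℝ) (s : ℝ) (i : ι) :
    pp S (fun i => x i ⬝ᵥ v) (fun i => x i ⬝ᵥ Δ) i s = mnlProb S x (v + s • Δ) i := by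
  unfold pp mnlProb
  rw [zz_eq, dot_segment]

lemma pp_eq_zero (S : Finset ι) (x : ι → Fin d → ℝ) (v Δ : Fin d → ℝ) (i : ι) :
    pp S (fun i => x i ⬝ᵥ v) (fun i => x i ⬝ᵥ Δ ) i 0 = mnlProb S x v i := by
  rw [pp_eq]
  congr 1
  funext k
  simp

lemma pp_eq_one (S : Finset ι) (x : ι → Fin d → ℝ) (v Δ : Fin d → ℝ) (i : ι) :
    pp S (fun i => x i ⬝ᵥ v) (fun i => x i ⬝ᵥ Δ) i 1 = mnlProb S x (v + Δ) i := by
  rw [pp_eq]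
  congr 1
  funext k
  simp

lemma loss_eq (S : Finset ι) (x : ι → Fin d → ℝ) (y : ι → ℝ) (y0 : ℝ)
    (hsum : y0 + ∑ i ∈ S, y i = 1) (w : Fin d → ℝ) :
    mnlLoss S x y y0 w
      = Real.log (1 + ∑ i ∈ S, Real.exp (x i ⬝ᵥ w)) - ∑ i ∈ S, y i * (x i ⬝ᵥ w) := by
  set Z := 1 + ∑ i ∈ S, Real.exp (x i ⬝ᵥ w) with hZdef
  have hZ : 0 < Z := by
    have : (0:ℝ) ≤ ∑ i ∈ S, Real.exp (x i ⬝ᵥ w) :=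
      Finset.sum_nonneg fun i _ => (Real.exp_pos _).le
    rw [hZdef]; linarith
  unfold mnlLoss mnlProb0 mnlProb
  rw [← hZdef]
  have h0 : Real.log (1 / Z) = -Real.log Z := by
    rw [one_div, Real.log_inv]
  have h1 : ∀ i ∈ S, y i * Real.log (Real.exp (x i ⬝ᵥ w) / Z)
      = y i * (x i ⬝ᵥ w) - y i * Real.log Z := by
    intro i _
    rw [Real.log_div (Real.exp_ne_zero _) hZ.ne', Real.log_exp]
    ring
  rw [h0, Finset.sum_congr rfl h1, Finset.sum_sub_distrib, ← Finset.sum_mul]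
  have : (∑ i ∈ S, y i) = 1 - y0 := by linarith
  rw [this]
  ring

lemma quadForm_hess (S : Finset ι) (x : ι → Fin d → ℝ) (w u z : Fin d → ℝ) :
    u ⬝ᵥ (mnlHess S x w).mulVec z
      = gg S (fun i => x i ⬝ᵥ w) (fun i => x i ⬝ᵥ z) (fun i => x i ⬝ᵥ u) 0 := by
  rw [hess_bilin]
  unfold gg mm cc
  simp only [pp_eq_zero]
  congr 1
  · exact Finset.sum_congr rfl fun i _ => by ring
  · ring

/-- Lemma A at the MNL level : second-order Taylor lower bound. -/
lemma mnl_bregman (S : Finset ι) (x : ι → Fin d → ℝ) (y : ι → ℝ) (y0 : ℝ)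
    (hsum : y0 + ∑ i ∈ S, y i = 1) {α : ℝ} (hα : 0 < α) (v Δ : Fin d → ℝ)
    (hb : ∀ i ∈ S, |x i ⬝ᵥ Δ| ≤ α) :
    mnlLoss S x y y0 v + mnlGrad S x y v ⬝ᵥ Δ
      + ((Real.exp (-(2*α)) + 2*α - 1)/(4*α^2)) * quadForm (mnlHess S x v) Δ
      ≤ mnlLoss S x y y0 (v + Δ) := by
  set a : ι → ℝ := fun i => x i ⬝ᵥ v with hadef
  set b : ι → ℝ := fun i => x i ⬝ᵥ Δ with hbdef
  have hcore := coreA S a b hα hb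
  have e0 : v + (0:ℝ) • Δ = v := by simp
  have e1 : v + (1:ℝ) • Δ = v + Δ := by simp
  have hl0 : mnlLoss S x y y0 v = Real.log (zz S a b 0) - ∑ i ∈ S, y i * a i := by
    rw [loss_eq S x y y0 hsum v, zz_eq S x v Δ 0, e0]
  have hl1 : mnlLoss S x y y0 (v + Δ)
      = Real.log (zz S a b 1) - ∑ i ∈ S, y i * (a i + b i) := by
    rw [loss_eq S x y y0 hsum (v + Δ), zz_eq S x v Δ 1, e1]
    have hsum2 : ∀ i ∈ S, y i * (x i ⬝ᵥ (v + Δ)) = y i * (a i + b i) := by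
      intro i _
      rw [hadef, hbdef]
      simp [dotProduct_add]
    rw [Finset.sum_congr rfl hsum2]
  have hg : mnlGrad S x y v ⬝ᵥ Δ = mm S a b 0 - ∑ i ∈ S, y i * b i := by
    rw [grad_dot]
    unfold mm
    rw [← Finset.sum_sub_distrib]
    refine Finset.sum_congr rfl fun i _ => ?_
    rw [pp_eq_zero S x v Δ]
    ring
  have hq : quadForm (mnlHess S x v) Δ = vv S a b 0 := by
    unfold quadForm
    rw [quadForm_hess S x v Δ Δ]
    show gg S a b b 0 = vv S a b 0
    unfold gg vv mm cc
    rw [Finset.sum_congr rfl (fun i (_ : i ∈ S) => (by ring :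
      pp S a b i 0 * (b i * b i) = pp S a b i 0 * (b i)^2)), sq]
  rw [hl0, hl1, hg, hq, Finset.sum_congr rfl
    (fun i (_ : i ∈ S) => (mul_add (y i) (a i) (b i) : y i * (a i + b i) = _)),
    Finset.sum_add_distrib]
  linarith

/-- Lemma B at the MNL level : gradient Taylor error bound. -/
lemma mnl_grad_err (S : Finset ι) (x : ι → Fin d → ℝ) (y : ι → ℝ)
    {α D : ℝ} (hα : 0 ≤ α) (hD : 0 ≤ D) (v Δ u : Fin d → ℝ)
    (hb : ∀ i ∈ S, |x i ⬝ᵥ Δ| ≤ D) (hc : ∀ i ∈ S, |x i ⬝ᵥ u| ≤ α) :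
    mnlGrad S x y (v + Δ) ⬝ᵥ u
      ≤ mnlGrad S x y v ⬝ᵥ u + u ⬝ᵥ (mnlHess S x v).mulVec Δ + 3*α*D^2 := by
  set a : ι → ℝ := fun i => x i ⬝ᵥ v with hadef
  set b : ι → ℝ := fun i => x i ⬝ᵥ Δ with hbdef
  set c : ι → ℝ := fun i => x i ⬝ᵥ u with hcdef
  have hcore := coreB S a b c hD hα hb hc
  have h1 : mnlGrad S x y (v + Δ) ⬝ᵥ u
      = cc S a b c 1 - ∑ i ∈ S, y i * c i := by
    rw [grad_dot]
    unfold cc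
    rw [← Finset.sum_sub_distrib]
    refine Finset.sum_congr rfl fun i _ => ?_
    rw [pp_eq_one S x v Δ]
    ring
  have h0 : mnlGrad S x y v ⬝ᵥ u = cc S a b c 0 - ∑ i ∈ S, y i * c i := by
    rw [grad_dot]
    unfold cc
    rw [← Finset.sum_sub_distrib]
    refine Finset.sum_congr rfl fun i _ => ?_
    rw [pp_eq_zero S x v Δ]
    ring
  have h2 : u ⬝ᵥ (mnlHess S x v).mulVec Δ = gg S a b c 0 := by
    rw [quadForm_hess S x v u Δ]
  rw [h1, h0, h2]
  linarith

end Bridge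

noncomputable section QFAlg

variable {d : ℕ} {ι : Type*}

lemma dot_self_nonneg (v : Fin d → ℝ) : 0 ≤ v ⬝ᵥ v :=
  Finset.sum_nonneg fun k _ => mul_self_nonneg _

lemma quadForm_hess_eq_vv (S : Finset ι) (x : ι → Fin d → ℝ) (w v : Fin d → ℝ) :
    quadForm (mnlHess S x w) v
      = OMD.vv S (fun i => x i ⬝ᵥ w) (fun i => x i ⬝ᵥ v) 0 := by
  unfold quadForm
  rw [quadForm_hess S x w v v]
  unfold OMD.gg OMD.vv OMD.mm OMD.cc
  rw [Finset.sum_congr rfl (fun i (_ : i ∈ S) => (by ring :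
    OMD.pp S (fun i => x i ⬝ᵥ w) (fun i => x i ⬝ᵥ v) i 0
        * ((fun i => x i ⬝ᵥ v) i * (fun i => x i ⬝ᵥ v) i)
      = OMD.pp S (fun i => x i ⬝ᵥ w) (fun i => x i ⬝ᵥ v) i 0
        * ((fun i => x i ⬝ᵥ v) i)^2)), sq]

lemma hess_psd (S : Finset ι) (x : ι → Fin d → ℝ) (w v : Fin d → ℝ) :
    0 ≤ quadForm (mnlHess S x w) v := by
  rw [quadForm_hess_eq_vv]
  exact OMD.vv_nonneg S _ _ 0

lemma hess_symm (S : Finset ι) (x : ι → Fin d → ℝ) (w u z : Fin d → ℝ) :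
    u ⬝ᵥ (mnlHess S x w).mulVec z = z ⬝ᵥ (mnlHess S x w).mulVec u := by
  rw [hess_bilin, hess_bilin]
  rw [Finset.sum_congr rfl (fun i (_ : i ∈ S) => (by ring :
    mnlProb S x w i * ((x i ⬝ᵥ u) * (x i ⬝ᵥ z))
      = mnlProb S x w i * ((x i ⬝ᵥ z) * (x i ⬝ᵥ u))))]
  ring

lemma quadForm_add (M N : Matrix (Fin d) (Fin d) ℝ) (v : Fin d → ℝ) :
    quadForm (M + N) v = quadForm M v + quadForm N v := by
  unfold quadForm
  rw [Matrix.add_mulVec, dotProduct_add]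

lemma one_bilin (lam : ℝ) (u z : Fin d → ℝ) :
    u ⬝ᵥ ((lam • (1 : Matrix (Fin d) (Fin d) ℝ)).mulVec z) = lam * (u ⬝ᵥ z) := by
  rw [Matrix.smul_mulVec, Matrix.one_mulVec, dotProduct_smul, smul_eq_mul]

lemma quad_neg (M : Matrix (Fin d) (Fin d) ℝ)
    (hsymm : ∀ u z, u ⬝ᵥ M.mulVec z = z ⬝ᵥ M.mulVec u) (v : Fin d → ℝ) :
    quadForm M (-v) = quadForm M v := by
  unfold quadForm
  rw [Matrix.mulVec_neg, dotProduct_neg, neg_dotProduct, neg_neg]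

lemma quad_expand (M : Matrix (Fin d) (Fin d) ℝ)
    (hsymm : ∀ u z, u ⬝ᵥ M.mulVec z = z ⬝ᵥ M.mulVec u)
    (a c : Fin d → ℝ) (θ : ℝ) :
    quadForm M (a + θ • c)
      = quadForm M a + 2*θ*(c ⬝ᵥ M.mulVec a) + θ^2 * quadForm M c := by
  unfold quadForm
  rw [Matrix.mulVec_add, Matrix.mulVec_smul, add_dotProduct, dotProduct_add, dotProduct_add]
  simp only [smul_dotProduct, dotProduct_smul, smul_eq_mul]
  rw [hsymm a c]
  ring

/-- From minimality of a quadratic along segments, first-order optimality. -/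
lemma vi_helper {L K : ℝ} (h : ∀ θ : ℝ, 0 < θ → θ ≤ 1 → 0 ≤ θ * L + θ^2 * K) : 0 ≤ L := by
  rcases le_or_gt K 0 with hK | hK
  · have h1 := h 1 one_pos le_rfl
    nlinarith
  · by_contra hL
    push_neg at hL
    set θ := min 1 (-L/(2*K)) with hθdef
    have hθpos : 0 < θ := lt_min one_pos (div_pos (by linarith) (by positivity))
    have hθ1 : θ ≤ 1 := min_le_left _ _
    have hθ2 : θ ≤ -L/(2*K) := min_le_right _ _
    have h1 := h θ hθpos hθ1
    have h2 : θ * K ≤ -L/2 := by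
      rw [le_div_iff₀ (by positivity : (0:ℝ) < 2*K)] at hθ2
      nlinarith
    nlinarith

/-- Cauchy–Schwarz for dotProduct. -/
lemma abs_dot_le_sqrt (x v : Fin d → ℝ) :
    |x ⬝ᵥ v| ≤ Real.sqrt (x ⬝ᵥ x) * Real.sqrt (v ⬝ᵥ v) := by
  have h := Finset.sum_mul_sq_le_sq_mul_sq Finset.univ x v
  have h2 : |x ⬝ᵥ v| = Real.sqrt ((x ⬝ᵥ v)^2) := (Real.sqrt_sq_eq_abs _).symm
  rw [h2, ← Real.sqrt_mul (dot_self_nonneg x)]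
  refine Real.sqrt_le_sqrt ?_
  have hx : x ⬝ᵥ x = ∑ k, x k ^ 2 := Finset.sum_congr rfl fun k _ => (sq (x k)).symm
  have hv : v ⬝ᵥ v = ∑ k, v k ^ 2 := Finset.sum_congr rfl fun k _ => (sq (v k)).symm
  rw [hx, hv]
  exact h

lemma abs_dot_le_of_norm_le_one {x : Fin d → ℝ} (hx : Real.sqrt (x ⬝ᵥ x) ≤ 1)
    (v : Fin d → ℝ) : |x ⬝ᵥ v| ≤ Real.sqrt (v ⬝ᵥ v) := by
  have h := abs_dot_le_sqrt x v
  have h2 : Real.sqrt (x ⬝ᵥ x) * Real.sqrt (v ⬝ᵥ v) ≤ 1 * Real.sqrt (v ⬝ᵥ v) :=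
    mul_le_mul_of_nonneg_right hx (Real.sqrt_nonneg _)
  rw [one_mul] at h2
  linarith

/-- Variational inequality for the `mnorm`-projection onto a convex set. -/
lemma proj_ineq {W : Set (Fin d → ℝ)} (hW : Convex ℝ W)
    {M : Matrix (Fin d) (Fin d) ℝ}
    (hsymm : ∀ u z, u ⬝ᵥ M.mulVec z = z ⬝ᵥ M.mulVec u)
    (hpsd : ∀ v, 0 ≤ quadForm M v)
    {wv p : Fin d → ℝ} (hp : p ∈ W)
    (hmin : ∀ v ∈ W, mnorm M (p - wv) ≤ mnorm M (v - wv))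
    {v : Fin d → ℝ} (hv : v ∈ W) :
    quadForm M (v - p) ≤ quadForm M (v - wv) := by
  have hqmin : ∀ u ∈ W, quadForm M (p - wv) ≤ quadForm M (u - wv) := by
    intro u hu
    have h := hmin u hu
    unfold mnorm at h
    nlinarith [Real.sq_sqrt (hpsd (p - wv)), Real.sq_sqrt (hpsd (u - wv)),
      Real.sqrt_nonneg (quadForm M (p - wv)), Real.sqrt_nonneg (quadForm M (u - wv))]
  have hL : 0 ≤ (v - p) ⬝ᵥ M.mulVec (p - wv) := by
    have key : ∀ θ : ℝ, 0 < θ → θ ≤ 1 →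
        0 ≤ θ * (2 * ((v - p) ⬝ᵥ M.mulVec (p - wv))) + θ^2 * quadForm M (v - p) := by
      intro θ hθ0 hθ1
      have hmem : p + θ • (v - p) ∈ W := by
        have := hW hp hv (by linarith : (0:ℝ) ≤ 1 - θ) hθ0.le (by ring)
        have he : (1 - θ) • p + θ • v = p + θ • (v - p) := by
          funext k
          simp only [Pi.add_apply, Pi.smul_apply, Pi.sub_apply, smul_eq_mul]
          ring
        rwa [he] at this
      have h1 := hqmin _ hmem
      have h2 : p + θ • (v - p) - wv = (p - wv) + θ • (v - p) := by
        funext k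
        simp only [Pi.add_apply, Pi.smul_apply, Pi.sub_apply, smul_eq_mul]
        ring
      rw [h2, quad_expand M hsymm] at h1
      nlinarith
    have := vi_helper key
    linarith
  have h3 : v - wv = (v - p) + (1:ℝ) • (p - wv) := by
    funext k
    simp only [Pi.add_apply, Pi.smul_apply, Pi.sub_apply, one_smul, smul_eq_mul]
    ring
  rw [h3, quad_expand M hsymm]
  nlinarith [hpsd (p - wv), hL, hsymm (v - p) (p - wv)]

/-- Variational inequality for the OMD quadratic-minimization step. -/
lemma omd_vi {W : Set (Fin d → ℝ)} (hW : Convex ℝ W)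
    {A P : Matrix (Fin d) (Fin d) ℝ}
    (hAs : ∀ u z, u ⬝ᵥ A.mulVec z = z ⬝ᵥ A.mulVec u)
    (hPs : ∀ u z, u ⬝ᵥ P.mulVec z = z ⬝ᵥ P.mulVec u)
    {g p' e : Fin d → ℝ} {η C : ℝ} (hη : 0 < η) (he : e ∈ W)
    (hmin : ∀ v ∈ W,
      C + g ⬝ᵥ (e - p') + (1/2) * quadForm A (e - p') + (1/(2*η)) * quadForm P (e - p')
        ≤ C + g ⬝ᵥ (v - p') + (1/2) * quadForm A (v - p') + (1/(2*η)) * quadForm P (v - p'))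
    {v : Fin d → ℝ} (hv : v ∈ W) :
    0 ≤ g ⬝ᵥ (v - e) + ((v - e) ⬝ᵥ A.mulVec (e - p'))
      + (1/η) * ((v - e) ⬝ᵥ P.mulVec (e - p')) := by
  have key : ∀ θ : ℝ, 0 < θ → θ ≤ 1 →
      0 ≤ θ * (g ⬝ᵥ (v - e) + ((v - e) ⬝ᵥ A.mulVec (e - p'))
          + (1/η) * ((v - e) ⬝ᵥ P.mulVec (e - p')))
        + θ^2 * ((1/2) * quadForm A (v - e) + (1/(2*η)) * quadForm P (v - e)) := by
    intro θ hθ0 hθ1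
    have hmem : e + θ • (v - e) ∈ W := by
      have := hW he hv (by linarith : (0:ℝ) ≤ 1 - θ) hθ0.le (by ring)
      have heq : (1 - θ) • e + θ • v = e + θ • (v - e) := by
        funext k
        simp only [Pi.add_apply, Pi.smul_apply, Pi.sub_apply, smul_eq_mul]
        ring
      rwa [heq] at this
    have h1 := hmin _ hmem
    have h2 : e + θ • (v - e) - p' = (e - p') + θ • (v - e) := by
      funext k
      simp only [Pi.add_apply, Pi.smul_apply, Pi.sub_apply, smul_eq_mul]
      ring
    have h3 : g ⬝ᵥ ((e - p') + θ • (v - e)) = g ⬝ᵥ (e - p') + θ * (g ⬝ᵥ (v - e)) := by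
      rw [dotProduct_add, dotProduct_smul, smul_eq_mul]
    rw [h2, quad_expand A hAs, quad_expand P hPs, h3] at h1
    have hηne : η ≠ 0 := hη.ne'
    have e1 : (1/(2*η)) * (2*θ*((v - e) ⬝ᵥ P.mulVec (e - p')))
        = θ * ((1/η) * ((v - e) ⬝ᵥ P.mulVec (e - p'))) := by
      field_simp
    nlinarith [h1, e1]
  exact vi_helper key

/-- The key exponential inequality : `(2 - c) ≤ (2 + c) e^{-c}` for `c ≥ 0`. -/
lemma keyexp {cv : ℝ} (hc : 0 ≤ cv) : 2 - cv ≤ (2 + cv) * Real.exp (-cv) := by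
  set G : ℝ → ℝ := fun s => (2 + s) * Real.exp (-s) + s - 2 with hGdef
  have hd : ∀ s : ℝ, HasDerivAt G (1 - (1 + s) * Real.exp (-s)) s := by
    intro s
    have h1 : HasDerivAt (fun s : ℝ => Real.exp (-s)) (-Real.exp (-s)) s := by
      simpa using (hasDerivAt_neg s).exp
    have h2 : HasDerivAt (fun s : ℝ => (2 + s) * Real.exp (-s))
        (1 * Real.exp (-s) + (2 + s) * (-Real.exp (-s))) s :=
      (((hasDerivAt_id s).const_add 2).mul h1)
    have h3 := (h2.add (hasDerivAt_id s)).sub_const 2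
    refine h3.congr_deriv ?_
    ring
  have hderiv : ∀ s : ℝ, 0 ≤ 1 - (1 + s) * Real.exp (-s) := by
    intro s
    have h1 : s + 1 ≤ Real.exp s := Real.add_one_le_exp s
    have h2 : (s + 1) * Real.exp (-s) ≤ Real.exp s * Real.exp (-s) :=
      mul_le_mul_of_nonneg_right h1 (Real.exp_pos _).le
    rw [← Real.exp_add] at h2
    simp only [add_neg_cancel, Real.exp_zero] at h2
    nlinarith
  have hmono : Monotone G :=
    monotone_of_deriv_nonneg (fun s => (hd s).differentiableAt)
      (fun s => by rw [(hd s).deriv]; exact hderiv s)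
  have h0 : G 0 = 0 := by
    rw [hGdef]
    simp
  have := hmono hc
  rw [h0] at this
  rw [hGdef] at this
  simp only at this
  linarith

lemma sqrt_two_ge_one : (1:ℝ) ≤ Real.sqrt 2 := by
  rw [show (1:ℝ) = Real.sqrt 1 by simp]
  exact Real.sqrt_le_sqrt (by norm_num)

/-- The self-concordance constant dominates `1/(2η)`. -/
lemma const_A {α : ℝ} (hα : 0 < α) :
    1/(2*(1 + (3*Real.sqrt 2/2)*α)) ≤ (Real.exp (-(2*α)) + 2*α - 1)/(4*α^2) := by
  have hc : (0:ℝ) ≤ 2*α := by linarith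
  have hkey := keyexp hc
  have hexp : -(2*α) + 1 ≤ Real.exp (-(2*α)) := Real.add_one_le_exp _
  have hX : 0 ≤ Real.exp (-(2*α)) + 2*α - 1 := by linarith
  have h1 : (2*α)^2 ≤ (2 + 2*α) * (Real.exp (-(2*α)) + 2*α - 1) := by nlinarith
  have hs2 := sqrt_two_ge_one
  have hd1 : (0:ℝ) < 2*(1 + (3*Real.sqrt 2/2)*α) := by nlinarith
  have hd2 : (0:ℝ) < 4*α^2 := by positivity
  rw [div_le_div_iff₀ hd1 hd2]
  nlinarith [mul_le_mul_of_nonneg_right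
    (by nlinarith : (2 + 2*α) ≤ 2*(1 + (3*Real.sqrt 2/2)*α)) hX]

set_option maxHeartbeats 1000000 in
/-- One step of the OMD analysis. -/
lemma step_lemma (S : Finset ι) (x : ι → Fin d → ℝ) (y : ι → ℝ) (y0 : ℝ)
    (hsum : y0 + ∑ i ∈ S, y i = 1)
    (hx1 : ∀ i ∈ S, Real.sqrt (x i ⬝ᵥ x i) ≤ 1)
    {α η lam : ℝ} (hα : 0 < α)
    (hη : η = 1 + (3 * Real.sqrt 2 / 2) * α)
    (hlam : 12 * Real.sqrt 2 * η * α ≤ lam)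
    (wstar : Fin d → ℝ)
    {W : Set (Fin d → ℝ)} (hWc : Convex ℝ W) (hWs : wstar ∈ W)
    (hWα : ∀ i ∈ S, ∀ v ∈ W, |x i ⬝ᵥ (v - wstar)| ≤ α)
    (wcur wproj wnext : Fin d → ℝ)
    {P : Matrix (Fin d) (Fin d) ℝ}
    (hPsymm : ∀ u z, u ⬝ᵥ P.mulVec z = z ⬝ᵥ P.mulVec u)
    (hPlow : ∀ v, lam * (v ⬝ᵥ v) ≤ quadForm P v)
    (hproj1 : wproj ∈ W)
    (hproj2 : ∀ v ∈ W, mnorm P (wproj - wcur) ≤ mnorm P (v - wcur))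
    (hupd1 : wnext ∈ W)
    (hupd2 : ∀ v ∈ W,
      mnlLoss S x y y0 wproj + mnlGrad S x y wproj ⬝ᵥ (wnext - wproj)
        + (1/2) * quadForm (mnlHess S x wproj) (wnext - wproj)
        + (1/(2*η)) * quadForm P (wnext - wproj)
      ≤ mnlLoss S x y y0 wproj + mnlGrad S x y wproj ⬝ᵥ (v - wproj)
        + (1/2) * quadForm (mnlHess S x wproj) (v - wproj)
        + (1/(2*η)) * quadForm P (v - wproj)) :
    quadForm P (wnext - wstar) + quadForm (mnlHess S x wnext) (wnext - wstar)
      ≤ quadForm P (wcur - wstar)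
        + 2*η*(mnlLoss S x y y0 wstar - mnlLoss S x y y0 wnext)
        - (1/2) * quadForm P (wnext - wproj) := by
  have hs2 := sqrt_two_ge_one
  have hη0 : 0 < η := by rw [hη]; nlinarith
  have hlam0 : 0 < lam := by
    have h12 : (0:ℝ) < 12 * Real.sqrt 2 * η * α :=
      mul_pos (mul_pos (mul_pos (by norm_num) (Real.sqrt_pos.mpr two_pos)) hη0) hα
    linarith
  have hPpsd : ∀ v, 0 ≤ quadForm P v := fun v =>
    le_trans (mul_nonneg hlam0.le (dot_self_nonneg v)) (hPlow v)
  -- abbreviations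
  set u : Fin d → ℝ := wnext - wstar with hudef
  set Δ : Fin d → ℝ := wnext - wproj with hΔdef
  have hneg : wstar - wnext = -u := by rw [hudef, neg_sub]
  have hdd : 0 ≤ Δ ⬝ᵥ Δ := dot_self_nonneg Δ
  set D : ℝ := Real.sqrt (Δ ⬝ᵥ Δ) with hDdef
  have hD : 0 ≤ D := Real.sqrt_nonneg _
  have hD2 : D^2 = Δ ⬝ᵥ Δ := Real.sq_sqrt hdd
  set Lstar := mnlLoss S x y y0 wstar with hLstar
  set Lnext := mnlLoss S x y y0 wnext with hLnext
  set geu := mnlGrad S x y wnext ⬝ᵥ u with hgeu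
  set gpu := mnlGrad S x y wproj ⬝ᵥ u with hgpu
  set qplus := quadForm (mnlHess S x wnext) u with hqplus
  set crossA := u ⬝ᵥ (mnlHess S x wproj).mulVec Δ with hcrossA
  set crossP := u ⬝ᵥ P.mulVec Δ with hcrossP
  -- ===== A1 : Bregman lower bound at wnext towards wstar =====
  have hbA1 : ∀ i ∈ S, |x i ⬝ᵥ (wstar - wnext)| ≤ α := by
    intro i hi
    rw [hneg, dotProduct_neg, abs_neg]
    exact hWα i hi wnext hupd1
  have hA1 := mnl_bregman S x y y0 hsum hα wnext (wstar - wnext) hbA1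
  rw [show wnext + (wstar - wnext) = wstar from by funext k; simp] at hA1
  rw [hneg, dotProduct_neg, quad_neg _ (hess_symm S x wnext)] at hA1
  -- hA1 : Lnext + -(geu) + ρ * qplus ≤ Lstar
  have hqplus0 : 0 ≤ qplus := hess_psd S x wnext u
  have hρ : 1/(2*η) ≤ (Real.exp (-(2*α)) + 2*α - 1)/(4*α^2) := by
    rw [hη]; exact const_A hα
  have hi1 : (1/(2*η)) * qplus ≤ Lstar - Lnext + geu := by
    nlinarith [mul_le_mul_of_nonneg_right hρ hqplus0]
  -- multiply by 2η
  have hi1' : qplus ≤ 2*η*(Lstar - Lnext + geu) := by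
    have h := mul_le_mul_of_nonneg_left hi1 (by linarith : (0:ℝ) ≤ 2*η)
    have he : 2*η*((1/(2*η))*qplus) = qplus := by field_simp
    linarith [he ▸ h]
  -- ===== A2 : gradient Taylor error =====
  have hbB : ∀ i ∈ S, |x i ⬝ᵥ Δ| ≤ D := fun i hi =>
    abs_dot_le_of_norm_le_one (hx1 i hi) Δ
  have hcB : ∀ i ∈ S, |x i ⬝ᵥ u| ≤ α := fun i hi => hWα i hi wnext hupd1
  have hA2 := mnl_grad_err S x y hα.le hD wproj Δ u hbB hcB
  rw [show wproj + Δ = wnext from by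
    funext k
    simp only [hΔdef, Pi.add_apply, Pi.sub_apply]
    ring] at hA2
  -- hA2 : geu ≤ gpu + crossA + 3*α*D^2
  -- ===== A3 : weight of the regularizer =====
  have hA3 : 12*η*α*(Δ ⬝ᵥ Δ) ≤ quadForm P Δ := by
    refine le_trans ?_ (hPlow Δ)
    have h12 : 12*η*α ≤ lam := by nlinarith [mul_pos hη0 hα]
    exact mul_le_mul_of_nonneg_right h12 hdd
  -- ===== A4 : OMD variational inequality =====
  have hA4 := omd_vi hWc (hess_symm S x wproj) hPsymm hη0 hupd1 hupd2 hWs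
  rw [show wstar - wnext = -u from hneg] at hA4
  rw [neg_dotProduct, neg_dotProduct, dotProduct_neg] at hA4
  -- hA4 : 0 ≤ -(gpu) + -(crossA) + (1/η) * -(crossP)
  have hA4' : gpu + crossA + (1/η)*crossP ≤ 0 := by linarith
  have h4e : 2*η*(gpu + crossA + (1/η)*crossP) = 2*η*gpu + 2*η*crossA + 2*crossP := by
    field_simp
  have hA4'' : 2*η*gpu + 2*η*crossA + 2*crossP ≤ 0 := by
    have h := mul_le_mul_of_nonneg_left hA4' (by linarith : (0:ℝ) ≤ 2*η)
    rw [h4e] at h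
    linarith
  -- ===== A5 : three-point identity =====
  have hA5 : quadForm P (wstar - wproj) = quadForm P u - 2*crossP + quadForm P Δ := by
    have h5 : wstar - wproj = -u + (1:ℝ) • Δ := by
      funext k
      simp only [hudef, hΔdef, Pi.add_apply, Pi.sub_apply, Pi.neg_apply, Pi.smul_apply,
        one_smul]
      ring
    rw [h5, quad_expand P hPsymm, quad_neg P hPsymm]
    have h6 : Δ ⬝ᵥ P.mulVec (-u) = -crossP := by
      rw [Matrix.mulVec_neg, dotProduct_neg, hcrossP, hPsymm]
    rw [h6]
    ring
  -- ===== A6 : projection step =====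
  have hA6 : quadForm P (wstar - wproj) ≤ quadForm P (wstar - wcur) :=
    proj_ineq hWc hPsymm hPpsd hproj1 hproj2 hWs
  have hA6' : quadForm P (wstar - wcur) = quadForm P (wcur - wstar) := by
    rw [show wstar - wcur = -(wcur - wstar) from (neg_sub _ _).symm, quad_neg P hPsymm]
  -- ===== assemble =====
  have h2geu : 2*η*geu ≤ 2*η*gpu + 2*η*crossA + 2*η*(3*α*D^2) := by
    have := mul_le_mul_of_nonneg_left hA2 (by linarith : (0:ℝ) ≤ 2*η)
    linarith [this]
  have hfin1 : 2*η*(3*α*D^2) ≤ (1/2) * quadForm P Δ := by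
    rw [hD2]
    linarith [hA3]
  -- combine everything
  have hcomb : qplus ≤ 2*η*(Lstar - Lnext) - 2*crossP + (1/2)*quadForm P Δ := by
    linarith [hi1', h2geu, hA4'', hfin1]
  have hfinal : quadForm P u + qplus
      ≤ quadForm P (wcur - wstar) + 2*η*(Lstar - Lnext) - (1/2)*quadForm P Δ := by
    linarith [hA5, hA6, hA6', hcomb]
  exact hfinal

end QFAlg

set_option maxHeartbeats 1000000 in

/-- **Lemma C.1.** Deterministic bound on the online-mirror-descent
estimation error for MNL models: for every update round `t ∈ 𝒯`, with
`𝒯_{t+1} = {s ∈ 𝒯 : s ≤ t}`,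
`‖w_{t+1} − w*‖²_{H_{t+1}} ≤ 2η Σ_{s∈𝒯_{t+1}} (ℓ_s(w*) − ℓ_s(w_{s+1})) + 4B²λ
  − (1/2) Σ_{s∈𝒯_{t+1}} ‖w_{s+1} − w_s'‖²_{H_s}`. -/
theorem omd_estimation_error_bound {ι : Type*} (d T : ℕ) (B α : ℝ)
    (hB : 0 < B) (hα : 0 < α)
    (Tset : Finset ℕ) (hTset : Tset ⊆ Finset.Icc 1 T)
    (S : ℕ → Finset ι) (x : ℕ → ι → Fin d → ℝ)
    (hx : ∀ t ∈ Finset.Icc 1 T, ∀ i ∈ S t, l2norm (x t i) ≤ 1)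
    (y : ℕ → ι → ℝ) (y0 : ℕ → ℝ)
    (hy : ∀ t ∈ Finset.Icc 1 T,
      (y0 t = 1 ∧ ∀ i ∈ S t, y t i = 0) ∨
      (y0 t = 0 ∧ ∃ i₀ ∈ S t, y t i₀ = 1 ∧ ∀ j ∈ S t, j ≠ i₀ → y t j = 0))
    (wstar : Fin d → ℝ) (hwstar : l2norm wstar ≤ B)
    (η lam : ℝ) (hη : η = 1 + (3 * Real.sqrt 2 / 2) * α)
    (hlam : 12 * Real.sqrt 2 * η * α ≤ lam)
    (Wt : ℕ → Set (Fin d → ℝ))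
    (hWt : ∀ t ∈ Tset, IsCompact (Wt t) ∧ Convex ℝ (Wt t) ∧ wstar ∈ Wt t ∧
      ∀ i ∈ S t, ∀ v ∈ Wt t, |x t i ⬝ᵥ (v - wstar)| ≤ α)
    (w wp : ℕ → Fin d → ℝ)
    (H : ℕ → Matrix (Fin d) (Fin d) ℝ)
    (hH : ∀ t, H t = lam • (1 : Matrix (Fin d) (Fin d) ℝ)
      + ∑ s ∈ Tset.filter (fun s => s < t), mnlHess (S s) (x s) (w (s + 1)))
    (hwinit : l2norm (w 1) ≤ B)
    -- `w_t' = argmin_{v ∈ 𝒲_t} ‖v − w_t‖_{H_t}` on update rounds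
    (hproj : ∀ t ∈ Tset, wp t ∈ Wt t ∧
      ∀ v ∈ Wt t, mnorm (H t) (wp t - w t) ≤ mnorm (H t) (v - w t))
    -- `w_{t+1} = argmin_{v ∈ 𝒲_t} [ℓ̃_t(v) + (1/(2η))‖v − w_t'‖²_{H_t}]` on update rounds
    (hupdate : ∀ t ∈ Tset, w (t + 1) ∈ Wt t ∧
      ∀ v ∈ Wt t,
        mnlLoss (S t) (x t) (y t) (y0 t) (wp t)
            + mnlGrad (S t) (x t) (y t) (wp t) ⬝ᵥ (w (t + 1) - wp t)
            + (1 / 2) * quadForm (mnlHess (S t) (x t) (wp t)) (w (t + 1) - wp t)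
            + (1 / (2 * η)) * quadForm (H t) (w (t + 1) - wp t)
          ≤ mnlLoss (S t) (x t) (y t) (y0 t) (wp t)
            + mnlGrad (S t) (x t) (y t) (wp t) ⬝ᵥ (v - wp t)
            + (1 / 2) * quadForm (mnlHess (S t) (x t) (wp t)) (v - wp t)
            + (1 / (2 * η)) * quadForm (H t) (v - wp t))
    -- `w_{t+1} = w_t` on non-update rounds
    (hnoupdate : ∀ t ∈ Finset.Icc 1 T, t ∉ Tset → w (t + 1) = w t) :
    ∀ t ∈ Tset,
      quadForm (H (t + 1)) (w (t + 1) - wstar)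
        ≤ 2 * η * ∑ s ∈ Tset.filter (fun s => s ≤ t),
            (mnlLoss (S s) (x s) (y s) (y0 s) wstar
              - mnlLoss (S s) (x s) (y s) (y0 s) (w (s + 1)))
          + 4 * B ^ 2 * lam
          - (1 / 2) * ∑ s ∈ Tset.filter (fun s => s ≤ t),
              quadForm (H s) (w (s + 1) - wp s) := by
  -- ===== preliminaries =====
  have hs2 := sqrt_two_ge_one
  have hη0 : 0 < η := by rw [hη]; nlinarith
  have hlam0 : 0 < lam := by
    have h12 : (0:ℝ) < 12 * Real.sqrt 2 * η * α :=
      mul_pos (mul_pos (mul_pos (by norm_num) (Real.sqrt_pos.mpr two_pos)) hη0) hα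
    linarith
  have hysum : ∀ t ∈ Tset, y0 t + ∑ i ∈ S t, y t i = 1 := by
    intro t ht
    rcases hy t (hTset ht) with ⟨h0, hall⟩ | ⟨h0, i0, hi0, hyi0, hrest⟩
    · rw [h0, Finset.sum_eq_zero hall]; norm_num
    · rw [h0, Finset.sum_eq_single_of_mem i0 hi0 (fun j hj hne => hrest j hj hne), hyi0]
      norm_num
  have hHsymm : ∀ t : ℕ, ∀ u z : Fin d → ℝ,
      u ⬝ᵥ (H t).mulVec z = z ⬝ᵥ (H t).mulVec u := by
    intro t u z
    rw [hH t, Matrix.add_mulVec, dotProduct_add, Matrix.add_mulVec, dotProduct_add]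
    congr 1
    · rw [one_bilin, one_bilin, dotProduct_comm]
    · rw [mulVec_sum', mulVec_sum', dot_sum_right, dot_sum_right]
      exact Finset.sum_congr rfl fun s _ => hess_symm _ _ _ _ _
  have hHquad : ∀ t : ℕ, ∀ v : Fin d → ℝ, quadForm (H t) v
      = lam * (v ⬝ᵥ v) + ∑ s ∈ Tset.filter (fun s => s < t),
          quadForm (mnlHess (S s) (x s) (w (s+1))) v := by
    intro t v
    unfold quadForm
    rw [hH t, Matrix.add_mulVec, dotProduct_add, mulVec_sum', dot_sum_right]
    congr 1
    exact one_bilin lam v v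
  have hHlow : ∀ t : ℕ, ∀ v : Fin d → ℝ, lam * (v ⬝ᵥ v) ≤ quadForm (H t) v := by
    intro t v
    rw [hHquad t v]
    have h0 : 0 ≤ ∑ s ∈ Tset.filter (fun s => s < t),
        quadForm (mnlHess (S s) (x s) (w (s+1))) v :=
      Finset.sum_nonneg fun s _ => hess_psd _ _ _ _
    linarith
  have hx1 : ∀ t ∈ Tset, ∀ i ∈ S t, Real.sqrt (x t i ⬝ᵥ x t i) ≤ 1 := by
    intro t ht i hi
    have := hx t (hTset ht) i hi
    simpa [l2norm] using this
  have hw1B : Real.sqrt (w 1 ⬝ᵥ w 1) ≤ B := by simpa [l2norm] using hwinit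
  have hwsB : Real.sqrt (wstar ⬝ᵥ wstar) ≤ B := by simpa [l2norm] using hwstar
  -- ===== the per-round step inequality =====
  have hstep : ∀ t ∈ Tset,
      quadForm (H (t+1)) (w (t+1) - wstar)
        ≤ quadForm (H t) (w t - wstar)
          + 2*η*(mnlLoss (S t) (x t) (y t) (y0 t) wstar
              - mnlLoss (S t) (x t) (y t) (y0 t) (w (t+1)))
          - (1/2) * quadForm (H t) (w (t+1) - wp t) := by
    intro t ht
    obtain ⟨hWcomp, hWconv, hWst, hWa⟩ := hWt t ht
    have hstep0 := step_lemma (S t) (x t) (y t) (y0 t) (hysum t ht) (hx1 t ht)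
      hα hη hlam wstar hWconv hWst (fun i hi v hv => hWa i hi v hv)
      (w t) (wp t) (w (t+1)) (hHsymm t) (hHlow t)
      (hproj t ht).1 (hproj t ht).2 (hupdate t ht).1 (hupdate t ht).2
    have hfil : Tset.filter (fun s => s < t + 1) = insert t (Tset.filter (fun s => s < t)) := by
      ext r
      simp only [Finset.mem_filter, Finset.mem_insert]
      constructor
      · rintro ⟨h1, h2⟩
        rcases Nat.lt_succ_iff_lt_or_eq.mp h2 with hl | he
        · exact Or.inr ⟨h1, hl⟩
        · exact Or.inl he
      · rintro (he | ⟨h1, h2⟩)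
        · rw [he]; exact ⟨ht, Nat.lt_succ_self t⟩
        · exact ⟨h1, by omega⟩
    have hnotmem : t ∉ Tset.filter (fun s => s < t) := by
      simp only [Finset.mem_filter]
      rintro ⟨_, h⟩
      omega
    have hHstep : H (t+1) = H t + mnlHess (S t) (x t) (w (t+1)) := by
      rw [hH (t+1), hH t, hfil, Finset.sum_insert hnotmem]
      abel
    rw [hHstep, quadForm_add]
    linarith [hstep0]
  -- ===== induction over update rounds =====
  intro t
  induction t using Nat.strong_induction_on with
  | _ t IH =>
  intro ht
  have htT : t ∈ Finset.Icc 1 T := hTset ht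
  have ht1 : 1 ≤ t := (Finset.mem_Icc.mp htT).1
  have htT' : t ≤ T := (Finset.mem_Icc.mp htT).2
  rcases (Tset.filter (fun s => s < t)).eq_empty_or_nonempty with hemp | hne
  · -- ===== base case : t is the first update round =====
    have hwt : ∀ u, 1 ≤ u → u ≤ t → w u = w 1 := by
      intro u hu
      induction u, hu using Nat.le_induction with
      | base => intro _; rfl
      | succ u hu ih =>
        intro hut
        have hunot : u ∉ Tset := by
          intro hmem
          have : u ∈ Tset.filter (fun s => s < t) := Finset.mem_filter.2 ⟨hmem, by omega⟩
          rw [hemp] at this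
          exact absurd this (Finset.notMem_empty u)
        have hu2 : u ∈ Finset.Icc 1 T := Finset.mem_Icc.2 ⟨hu, by omega⟩
        rw [hnoupdate u hu2 hunot]
        exact ih (by omega)
    have hwteq := hwt t ht1 le_rfl
    have hHt : quadForm (H t) (w t - wstar) = lam * ((w t - wstar) ⬝ᵥ (w t - wstar)) := by
      rw [hHquad t, hemp, Finset.sum_empty, add_zero]
    have hd : (w t - wstar) ⬝ᵥ (w t - wstar) ≤ 4 * B^2 := by
      rw [hwteq]
      have hcs : |w 1 ⬝ᵥ wstar| ≤ B * B := by
        refine le_trans (abs_dot_le_sqrt _ _) ?_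
        exact mul_le_mul hw1B hwsB (Real.sqrt_nonneg _) hB.le
      have h1 : w 1 ⬝ᵥ w 1 ≤ B^2 := by
        nlinarith [Real.sq_sqrt (dot_self_nonneg (w 1)), Real.sqrt_nonneg (w 1 ⬝ᵥ w 1)]
      have h2 : wstar ⬝ᵥ wstar ≤ B^2 := by
        nlinarith [Real.sq_sqrt (dot_self_nonneg wstar), Real.sqrt_nonneg (wstar ⬝ᵥ wstar)]
      have hexp : (w 1 - wstar) ⬝ᵥ (w 1 - wstar)
          = w 1 ⬝ᵥ w 1 - 2*(w 1 ⬝ᵥ wstar) + wstar ⬝ᵥ wstar := by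
        rw [sub_dotProduct, dotProduct_sub, dotProduct_sub, dotProduct_comm wstar (w 1)]
        ring
      have := abs_le.mp hcs
      nlinarith
    have hq : quadForm (H t) (w t - wstar) ≤ 4*B^2*lam := by
      rw [hHt]
      nlinarith
    have hfle : Tset.filter (fun s => s ≤ t) = {t} := by
      ext r
      simp only [Finset.mem_filter, Finset.mem_singleton]
      constructor
      · rintro ⟨h1, h2⟩
        rcases eq_or_lt_of_le h2 with he | hl
        · exact he
        · exfalso
          have : r ∈ Tset.filter (fun s => s < t) := Finset.mem_filter.2 ⟨h1, hl⟩
          rw [hemp] at this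
          exact absurd this (Finset.notMem_empty r)
      · rintro he
        rw [he]; exact ⟨ht, le_rfl⟩
    rw [hfle, Finset.sum_singleton, Finset.sum_singleton]
    have hs1 := hstep t ht
    linarith
  · -- ===== inductive case =====
    set s := (Tset.filter (fun r => r < t)).max' hne with hsdef
    have hsmem : s ∈ Tset.filter (fun r => r < t) := Finset.max'_mem _ hne
    have hsT : s ∈ Tset := (Finset.mem_filter.mp hsmem).1
    have hst : s < t := (Finset.mem_filter.mp hsmem).2
    have hmax : ∀ r ∈ Tset, r < t → r ≤ s := by
      intro r hr hrt
      exact Finset.le_max' (Tset.filter (fun u => u < t)) r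
        (Finset.mem_filter.2 ⟨hr, hrt⟩)
    have hs1' : 1 ≤ s := (Finset.mem_Icc.mp (hTset hsT)).1
    have hIH := IH s hst hsT
    have hwt : ∀ u, s+1 ≤ u → u ≤ t → w u = w (s+1) := by
      intro u hu
      induction u, hu using Nat.le_induction with
      | base => intro _; rfl
      | succ u hu ih =>
        intro hut
        have hunot : u ∉ Tset := by
          intro hmem
          have := hmax u hmem (by omega)
          omega
        have hu2 : u ∈ Finset.Icc 1 T := Finset.mem_Icc.2 ⟨by omega, by omega⟩
        rw [hnoupdate u hu2 hunot]
        exact ih (by omega)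
    have hwteq := hwt t (by omega) le_rfl
    have hfeq : Tset.filter (fun r => r < t) = Tset.filter (fun r => r < s+1) := by
      ext r
      simp only [Finset.mem_filter]
      constructor
      · rintro ⟨h1, h2⟩
        exact ⟨h1, by have := hmax r h1 h2; omega⟩
      · rintro ⟨h1, h2⟩
        exact ⟨h1, by omega⟩
    have hHeq : H t = H (s+1) := by rw [hH t, hH (s+1), hfeq]
    have hfle : Tset.filter (fun r => r ≤ t) = insert t (Tset.filter (fun r => r ≤ s)) := by
      ext r
      simp only [Finset.mem_filter, Finset.mem_insert]
      constructor
      · rintro ⟨h1, h2⟩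
        rcases eq_or_lt_of_le h2 with he | hl
        · exact Or.inl he
        · exact Or.inr ⟨h1, hmax r h1 hl⟩
      · rintro (he | ⟨h1, h2⟩)
        · rw [he]; exact ⟨ht, le_rfl⟩
        · exact ⟨h1, by omega⟩
    have htnot : t ∉ Tset.filter (fun r => r ≤ s) := by
      simp only [Finset.mem_filter]
      rintro ⟨_, h⟩
      omega
    have hs1 := hstep t ht
    have e1 : quadForm (H t) (w t - wstar) = quadForm (H (s+1)) (w (s+1) - wstar) := by
      rw [hwteq, hHeq]
    rw [hfle, Finset.sum_insert htnot, Finset.sum_insert htnot]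
    linarith [hIH, hs1, e1]
end

section
/- Let K ≥ 1 and y ∈ ℝ^K, and define the multinomial logistic loss ℓ̄ : ℝ^K → ℝ by ℓ̄(z) = −⟨y, z⟩ + log(1 + Σ_{i=1}^K exp(z_i)). Then ℓ̄ is 3√2-self-concordant-like with respect to the ℓ∞-norm: for every a, b ∈ ℝ^K, the function φ(s) := ℓ̄(a + s b) satisfies |φ'''(s)| ≤ 3√2 ‖b‖_∞ φ''(s) for all s ∈ ℝ. -/
open Real Finset

/-- Weighted exponential sum `∑ i, c i * exp (a i + s * b i)`. -/
noncomputable def Sf {K : ℕ} (a b c : Fin K → ℝ) (s : ℝ) : ℝ :=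
  ∑ i, c i * Real.exp (a i + s * b i)

lemma hasDerivAt_Sf {K : ℕ} (a b c : Fin K → ℝ) (s : ℝ) :
    HasDerivAt (Sf a b c) (Sf a b (fun i => c i * b i) s) s := by
  unfold Sf
  apply HasDerivAt.fun_sum
  intro i _
  have h1 : HasDerivAt (fun t : ℝ => a i + t * b i) (b i) s := by
    simpa using ((hasDerivAt_id s).mul_const (b i)).const_add (a i)
  have h2 := (h1.exp).const_mul (c i)
  simpa [mul_comm, mul_assoc, mul_left_comm] using h2

noncomputable def Ef {K : ℕ} (a b : Fin K → ℝ) (s : ℝ) : ℝ := 1 + Sf a b 1 s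

lemma Ef_pos {K : ℕ} (a b : Fin K → ℝ) (s : ℝ) : 0 < Ef a b s := by
  have : 0 ≤ Sf a b 1 s :=
    Finset.sum_nonneg fun i _ => by simp [Pi.one_apply]; positivity
  unfold Ef at *; linarith

lemma one_le_Ef {K : ℕ} (a b : Fin K → ℝ) (s : ℝ) : 1 ≤ Ef a b s := by
  have : 0 ≤ Sf a b 1 s :=
    Finset.sum_nonneg fun i _ => by simp [Pi.one_apply]; positivity
  unfold Ef at *; linarith

lemma hasDerivAt_Ef {K : ℕ} (a b : Fin K → ℝ) (s : ℝ) :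
    HasDerivAt (Ef a b) (Sf a b b s) s := by
  have h := hasDerivAt_Sf a b 1 s
  have he : (fun i => (1 : Fin K → ℝ) i * b i) = b := by funext i; simp
  rw [he] at h
  exact h.const_add 1

noncomputable def phi1 {K : ℕ} (y a b : Fin K → ℝ) (s : ℝ) : ℝ :=
  -(∑ i, y i * b i) + Sf a b b s / Ef a b s

noncomputable def phi2 {K : ℕ} (a b : Fin K → ℝ) (s : ℝ) : ℝ :=
  (Sf a b (fun i => b i * b i) s * Ef a b s - (Sf a b b s) ^ 2) / (Ef a b s) ^ 2

/-- The multinomial logistic loss on `ℝ^K` with one-hot (or arbitrary) response `y`: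
`ℓ̄(z) = -⟨y, z⟩ + log(1 + Σᵢ exp zᵢ)`. -/
noncomputable def mnlLossZ (K : ℕ) (y : Fin K → ℝ) (z : Fin K → ℝ) : ℝ :=
  -(∑ i, y i * z i) + Real.log (1 + ∑ i, Real.exp (z i))

lemma hasDerivAt_phi {K : ℕ} (y a b : Fin K → ℝ) (s : ℝ) :
    HasDerivAt (fun t : ℝ => mnlLossZ K y (a + t • b)) (phi1 y a b s) s := by
  have hfun : (fun t : ℝ => mnlLossZ K y (a + t • b))
      = fun t => -(∑ i, y i * (a i + t * b i)) + Real.log (Ef a b t) := by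
    funext t
    simp [mnlLossZ, Ef, Sf]
  rw [hfun]
  have hlin : HasDerivAt (fun t : ℝ => ∑ i, y i * (a i + t * b i)) (∑ i, y i * b i) s := by
    apply HasDerivAt.fun_sum
    intro i _
    have h1 : HasDerivAt (fun t : ℝ => a i + t * b i) (b i) s := by
      simpa using ((hasDerivAt_id s).mul_const (b i)).const_add (a i)
    exact h1.const_mul (y i)
  have hlog : HasDerivAt (fun t : ℝ => Real.log (Ef a b t)) (Sf a b b s / Ef a b s) s :=
    (hasDerivAt_Ef a b s).log (ne_of_gt (Ef_pos a b s))
  exact hlin.neg.add hlog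

lemma hasDerivAt_phi1 {K : ℕ} (y a b : Fin K → ℝ) (s : ℝ) :
    HasDerivAt (phi1 y a b) (phi2 a b s) s := by
  have hdiv := (hasDerivAt_Sf a b b s).div (hasDerivAt_Ef a b s) (ne_of_gt (Ef_pos a b s))
  have := hdiv.const_add (-(∑ i, y i * b i))
  unfold phi1 phi2
  refine this.congr_deriv ?_
  ring

lemma hasDerivAt_phi2 {K : ℕ} (a b : Fin K → ℝ) (s : ℝ) :
    HasDerivAt (phi2 a b)
      ((Sf a b (fun i => b i * b i * b i) s * (Ef a b s) ^ 2
        - 3 * Sf a b b s * Sf a b (fun i => b i * b i) s * Ef a b s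
        + 2 * (Sf a b b s) ^ 3) / (Ef a b s) ^ 3) s := by
  have hE := Ef_pos a b s
  have hN : HasDerivAt (fun t => Sf a b (fun i => b i * b i) t * Ef a b t - (Sf a b b t) ^ 2)
      (Sf a b (fun i => b i * b i * b i) s * Ef a b s
        + Sf a b (fun i => b i * b i) s * Sf a b b s
        - 2 * Sf a b b s * Sf a b (fun i => b i * b i) s) s := by
    have h1 := (hasDerivAt_Sf a b (fun i => b i * b i) s).mul (hasDerivAt_Ef a b s)
    have h2 := (hasDerivAt_Sf a b b s).pow 2
    have := h1.sub h2
    refine this.congr_deriv ?_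
    push_cast
    ring
  have hD : HasDerivAt (fun t => (Ef a b t) ^ 2) (2 * Ef a b s * Sf a b b s) s := by
    have := (hasDerivAt_Ef a b s).pow 2
    refine this.congr_deriv ?_
    push_cast
    ring
  have hdiv := hN.div hD (by positivity)
  refine hdiv.congr_deriv ?_
  field_simp
  ring

lemma key_ineq {K : ℕ} (q c : Fin K → ℝ) (M E S1 S2 S3 : ℝ)
    (hq : ∀ i, 0 < q i) (hM0 : 0 ≤ M) (hM : ∀ i, |c i| ≤ M)
    (hE : E = 1 + ∑ i, q i) (h1 : S1 = ∑ i, c i * q i)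
    (h2 : S2 = ∑ i, c i * c i * q i) (h3 : S3 = ∑ i, c i * c i * c i * q i) :
    |S3 * E ^ 2 - 3 * S1 * S2 * E + 2 * S1 ^ 3| ≤ 2 * M * E * (S2 * E - S1 ^ 2)
      ∧ 0 ≤ S2 * E - S1 ^ 2 := by
  have hqsum : (∑ i, q i) = E - 1 := by rw [hE]; ring
  have hE1 : 1 ≤ E := by
    have : 0 ≤ ∑ i, q i := Finset.sum_nonneg fun i _ => (hq i).le
    linarith
  have hE0 : 0 < E := by linarith
  have step3 : (∑ i, q i * (E * c i - S1) ^ 3)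
      = ∑ i, (E^3 * (c i * c i * c i * q i) - 3*E^2*S1*(c i * c i * q i)
          + 3*E*S1^2*(c i * q i) - S1^3 * q i) :=
    Finset.sum_congr rfl fun i _ => by ring
  have hexp3 : (∑ i, q i * (E * c i - S1) ^ 3)
      = E^3 * S3 - 3*E^2*S1*S2 + 3*E*S1^2*S1 - S1^3*(E-1) := by
    rw [step3]
    simp only [Finset.sum_sub_distrib, Finset.sum_add_distrib, ← Finset.mul_sum]
    rw [← h1, ← h2, ← h3, hqsum]
  have step2 : (∑ i, q i * (E * c i - S1) ^ 2)
      = ∑ i, (E^2 * (c i * c i * q i) - 2*E*S1*(c i * q i) + S1^2 * q i) :=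
    Finset.sum_congr rfl fun i _ => by ring
  have hexp2 : (∑ i, q i * (E * c i - S1) ^ 2)
      = E^2 * S2 - 2*E*S1*S1 + S1^2*(E-1) := by
    rw [step2]
    simp only [Finset.sum_sub_distrib, Finset.sum_add_distrib, ← Finset.mul_sum]
    rw [← h1, ← h2, hqsum]
  have hEV : E * (S2 * E - S1 ^ 2) = (∑ i, q i * (E * c i - S1) ^ 2) + S1 ^ 2 := by
    rw [hexp2]; ring
  have hET : E * (S3 * E ^ 2 - 3 * S1 * S2 * E + 2 * S1 ^ 3)
      = (∑ i, q i * (E * c i - S1) ^ 3) - S1 ^ 3 := by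
    rw [hexp3]; ring
  have hsumsq : 0 ≤ ∑ i, q i * (E * c i - S1) ^ 2 :=
    Finset.sum_nonneg fun i _ => mul_nonneg (hq i).le (sq_nonneg _)
  have hVnn : 0 ≤ S2 * E - S1 ^ 2 := by
    by_contra h
    push_neg at h
    nlinarith
  refine ⟨?_, hVnn⟩
  have hS1 : |S1| ≤ M * (E - 1) := by
    rw [h1, ← hqsum, Finset.mul_sum]
    calc |∑ i, c i * q i| ≤ ∑ i, |c i * q i| := Finset.abs_sum_le_sum_abs _ _
      _ ≤ ∑ i, M * q i := Finset.sum_le_sum fun i _ => by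
          rw [abs_mul, abs_of_pos (hq i)]
          exact mul_le_mul_of_nonneg_right (hM i) (hq i).le
  have hEc : ∀ i, |E * c i - S1| ≤ 2 * E * M := by
    intro i
    have h1' : |E * c i| = E * |c i| := by rw [abs_mul, abs_of_pos hE0]
    have := abs_sub (E * c i) S1
    have h2' := hM i
    nlinarith [abs_nonneg (c i)]
  have hcube : ∀ i, |q i * (E * c i - S1) ^ 3| ≤ 2*E*M * (q i * (E * c i - S1) ^ 2) := by
    intro i
    have hx : |(E * c i - S1) ^ 3| = (E * c i - S1)^2 * |E * c i - S1| := by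
      rw [pow_succ, abs_mul, abs_of_nonneg (sq_nonneg _)]
    rw [abs_mul, abs_of_pos (hq i), hx]
    have hmul := mul_le_mul_of_nonneg_left (hEc i)
      (mul_nonneg (hq i).le (sq_nonneg (E * c i - S1)))
    calc q i * ((E * c i - S1) ^ 2 * |E * c i - S1|)
        = q i * (E * c i - S1) ^ 2 * |E * c i - S1| := by ring
      _ ≤ q i * (E * c i - S1) ^ 2 * (2 * E * M) := hmul
      _ = 2 * E * M * (q i * (E * c i - S1) ^ 2) := by ring
  have hsum3 : |(∑ i, q i * (E * c i - S1) ^ 3) - S1 ^ 3|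
      ≤ 2*E*M * ((∑ i, q i * (E * c i - S1) ^ 2) + S1 ^ 2) := by
    have habs : |(∑ i, q i * (E * c i - S1) ^ 3) - S1 ^ 3|
        ≤ (∑ i, |q i * (E * c i - S1) ^ 3|) + |S1 ^ 3| := by
      calc _ ≤ |∑ i, q i * (E * c i - S1) ^ 3| + |S1 ^ 3| := abs_sub _ _
        _ ≤ _ := by gcongr; exact Finset.abs_sum_le_sum_abs _ _
    have hS13 : |S1 ^ 3| ≤ 2*E*M * S1 ^ 2 := by
      have : |S1 ^ 3| = S1 ^ 2 * |S1| := by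
        rw [pow_succ, abs_mul, abs_of_nonneg (sq_nonneg _)]
      rw [this]
      nlinarith [sq_nonneg S1, abs_nonneg S1]
    have hsum' : (∑ i, |q i * (E * c i - S1) ^ 3|)
        ≤ ∑ i, 2*E*M * (q i * (E * c i - S1) ^ 2) :=
      Finset.sum_le_sum fun i _ => hcube i
    rw [← Finset.mul_sum] at hsum'
    calc _ ≤ _ := habs
      _ ≤ 2*E*M * (∑ i, q i * (E * c i - S1) ^ 2) + 2*E*M * S1^2 := by gcongr
      _ = _ := by ring
  have hETabs : E * |S3 * E ^ 2 - 3 * S1 * S2 * E + 2 * S1 ^ 3|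
      ≤ E * (2 * M * E * (S2 * E - S1 ^ 2)) := by
    have : |E * (S3 * E ^ 2 - 3 * S1 * S2 * E + 2 * S1 ^ 3)|
        = E * |S3 * E ^ 2 - 3 * S1 * S2 * E + 2 * S1 ^ 3| := by
      rw [abs_mul, abs_of_pos hE0]
    rw [← this, hET]
    calc _ ≤ _ := hsum3
      _ = E * (2 * M * E * (S2 * E - S1 ^ 2)) := by rw [← hEV]; ring
  exact le_of_mul_le_mul_left hETabs hE0

/-- **Proposition B.2.** The multinomial logistic loss is
`3√2`-self-concordant-like with respect to the `ℓ∞`-norm: for all `a, b ∈ ℝ^K`,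
the function `φ(s) = ℓ̄(a + s b)` satisfies `|φ'''(s)| ≤ 3√2 ‖b‖_∞ φ''(s)` for all `s`.
(The norm on `Fin K → ℝ` is the sup-norm.) -/
theorem mnl_loss_self_concordant_like (K : ℕ) (hK : 1 ≤ K) (y : Fin K → ℝ)
    (a b : Fin K → ℝ) (s : ℝ) :
    |iteratedDeriv 3 (fun t : ℝ => mnlLossZ K y (a + t • b)) s|
      ≤ 3 * Real.sqrt 2 * ‖b‖ * iteratedDeriv 2 (fun t : ℝ => mnlLossZ K y (a + t • b)) s := by
  have hd1 : deriv (fun t : ℝ => mnlLossZ K y (a + t • b)) = phi1 y a b :=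
    funext fun t => (hasDerivAt_phi y a b t).deriv
  have hd2 : deriv (phi1 y a b) = phi2 a b :=
    funext fun t => (hasDerivAt_phi1 y a b t).deriv
  have h2 : iteratedDeriv 2 (fun t : ℝ => mnlLossZ K y (a + t • b)) = phi2 a b := by
    rw [show (2 : ℕ) = 1 + 1 from rfl, iteratedDeriv_succ, iteratedDeriv_one, hd1, hd2]
  have h3 : iteratedDeriv 3 (fun t : ℝ => mnlLossZ K y (a + t • b)) s
      = (Sf a b (fun i => b i * b i * b i) s * (Ef a b s) ^ 2
        - 3 * Sf a b b s * Sf a b (fun i => b i * b i) s * Ef a b s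
        + 2 * (Sf a b b s) ^ 3) / (Ef a b s) ^ 3 := by
    rw [show (3 : ℕ) = 2 + 1 from rfl, iteratedDeriv_succ, h2]
    exact (hasDerivAt_phi2 a b s).deriv
  rw [h3, h2]
  set E := Ef a b s with hEdef
  set S1 := Sf a b b s with hS1def
  set S2 := Sf a b (fun i => b i * b i) s with hS2def
  set S3 := Sf a b (fun i => b i * b i * b i) s with hS3def
  have hE0 : 0 < E := Ef_pos a b s
  have hM0 : (0 : ℝ) ≤ ‖b‖ := norm_nonneg b
  have hM : ∀ i, |b i| ≤ ‖b‖ := fun i => by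
    have := norm_le_pi_norm b i
    simpa [Real.norm_eq_abs] using this
  obtain ⟨hkey, hVnn⟩ := key_ineq (fun i => Real.exp (a i + s * b i)) b ‖b‖ E S1 S2 S3
    (fun i => Real.exp_pos _) hM0 hM
    (by rw [hEdef]; unfold Ef Sf; simp)
    (by rw [hS1def]; unfold Sf; simp)
    (by rw [hS2def]; unfold Sf; simp)
    (by rw [hS3def]; unfold Sf; simp)
  have hsqrt : (1 : ℝ) ≤ Real.sqrt 2 := by
    rw [show (1 : ℝ) = Real.sqrt 1 by simp]
    exact Real.sqrt_le_sqrt (by norm_num)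
  unfold phi2
  rw [← hEdef, ← hS1def, ← hS2def]
  have habs : |(S3 * E ^ 2 - 3 * S1 * S2 * E + 2 * S1 ^ 3) / E ^ 3|
      = |S3 * E ^ 2 - 3 * S1 * S2 * E + 2 * S1 ^ 3| / E ^ 3 := by
    rw [abs_div, abs_of_pos (pow_pos hE0 3)]
  have hgoal : 3 * Real.sqrt 2 * ‖b‖ * ((S2 * E - S1 ^ 2) / E ^ 2)
      = (3 * Real.sqrt 2 * ‖b‖ * (S2 * E - S1 ^ 2) * E) / E ^ 3 := by
    field_simp
  rw [habs, hgoal]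
  gcongr
  nlinarith [mul_nonneg (mul_nonneg hM0 hVnn) hE0.le, hsqrt, hkey]
end

section
/- Let K ≥ 1 and f : ℝ^K → ℝ, f(z) = log(1 + Σ_{i=1}^K exp(z_i)). For x, u ∈ ℝ^K let D³f(x)[u] denote the directional derivative of the Hessian, i.e., the K×K matrix d/ds|_{s=0} ∇²f(x + s u), and write D³f(x)[u₁, u₂, u₂] = u₂ᵀ (D³f(x)[u₁]) u₂. Then for all x, u₁, u₂ ∈ ℝ^K: |D³f(x)[u₁, u₂, u₂]| ≤ 3√2 ‖u₁‖_∞ · u₂ᵀ ∇²f(x) u₂. -/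
open Matrix

/-- Softmax probabilities: `σᵢ(z) = exp(zᵢ)/(1 + Σₖ exp(zₖ))`. -/
noncomputable def softmaxP (K : ℕ) (z : Fin K → ℝ) (i : Fin K) : ℝ :=
  Real.exp (z i) / (1 + ∑ k, Real.exp (z k))

/-- Hessian of `f(z) = log(1 + Σᵢ exp zᵢ)`:
`∇²f(z) = diag(σ(z)) - σ(z)σ(z)ᵀ`. -/
noncomputable def lseHess (K : ℕ) (z : Fin K → ℝ) : Matrix (Fin K) (Fin K) ℝ :=
  Matrix.diagonal (softmaxP K z) - Matrix.vecMulVec (softmaxP K z) (softmaxP K z)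

/-- `D³f(x)[u]`: the `K×K` matrix `d/ds|₀ ∇²f(x + s u)` (entrywise derivative). -/
noncomputable def lseD3 (K : ℕ) (x u : Fin K → ℝ) : Matrix (Fin K) (Fin K) ℝ :=
  fun i j => deriv (fun s : ℝ => lseHess K (x + s • u) i j) 0

lemma lse_denom_pos (K : ℕ) (z : Fin K → ℝ) : 0 < 1 + ∑ k, Real.exp (z k) := by
  positivity

lemma softmax_hasDerivAt (K : ℕ) (x u : Fin K → ℝ) (i : Fin K) :
    HasDerivAt (fun s : ℝ => softmaxP K (x + s • u) i)
      (softmaxP K x i * (u i - ∑ k, softmaxP K x k * u k)) 0 := by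
  have hD : ∀ s : ℝ, (1 : ℝ) + ∑ k, Real.exp (x k + s * u k) ≠ 0 := by
    intro s; have := lse_denom_pos K (x + s • u)
    simpa [Pi.add_apply, Pi.smul_apply, smul_eq_mul] using this.ne'
  have hN : ∀ j : Fin K, HasDerivAt (fun s : ℝ => Real.exp (x j + s * u j))
      (Real.exp (x j) * u j) 0 := by
    intro j
    have h1 : HasDerivAt (fun s : ℝ => x j + s * u j) (u j) 0 := by
      simpa using (hasDerivAt_mul_const (u j)).const_add (x j)
    simpa [mul_comm] using h1.exp
  have hDen : HasDerivAt (fun s : ℝ => (1 : ℝ) + ∑ k, Real.exp (x k + s * u k))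
      (∑ k, Real.exp (x k) * u k) 0 := by
    exact (HasDerivAt.fun_sum (fun j _ => hN j)).const_add 1
  have hdiv := (hN i).fun_div hDen (hD 0)
  have heq : (fun s : ℝ => Real.exp (x i + s * u i) / (1 + ∑ k, Real.exp (x k + s * u k)))
      = fun s : ℝ => softmaxP K (x + s • u) i := by
    funext s; simp [softmaxP]
  rw [heq] at hdiv
  refine hdiv.congr_deriv ?_
  set S := (1 : ℝ) + ∑ k, Real.exp (x k) with hS
  have hS0 : S ≠ 0 := (lse_denom_pos K x).ne'
  have hsum : (∑ k, softmaxP K x k * u k) = (∑ k, Real.exp (x k) * u k) / S := by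
    rw [Finset.sum_div]
    exact Finset.sum_congr rfl fun k _ => by rw [softmaxP, ← hS, div_mul_eq_mul_div]
  simp only [zero_mul, add_zero]
  rw [hsum, softmaxP, ← hS]
  set A := Real.exp (x i)
  set E := ∑ k, Real.exp (x k) with hE
  set T := ∑ k, Real.exp (x k) * u k with hT
  clear_value T
  rw [hS]
  have hE0 : (1 : ℝ) + E ≠ 0 := by rw [← hS]; exact hS0
  field_simp

lemma lseD3_apply (K : ℕ) (x u : Fin K → ℝ) (i j : Fin K) :
    lseD3 K x u i j
      = (if i = j then softmaxP K x i * (u i - ∑ k, softmaxP K x k * u k) else 0)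
        - ((softmaxP K x i * (u i - ∑ k, softmaxP K x k * u k)) * softmaxP K x j
           + softmaxP K x i * (softmaxP K x j * (u j - ∑ k, softmaxP K x k * u k))) := by
  have hi := softmax_hasDerivAt K x u i
  have hj := softmax_hasDerivAt K x u j
  have h1 : HasDerivAt (fun s : ℝ => (if i = j then softmaxP K (x + s • u) i else 0))
      (if i = j then softmaxP K x i * (u i - ∑ k, softmaxP K x k * u k) else 0) 0 := by
    split
    · exact hi
    · exact hasDerivAt_const 0 0
  have h := h1.fun_sub (hi.fun_mul hj)
  have hfun : (fun s : ℝ => lseHess K (x + s • u) i j)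
      = fun s : ℝ => (if i = j then softmaxP K (x + s • u) i else 0)
          - softmaxP K (x + s • u) i * softmaxP K (x + s • u) j := by
    funext s
    simp [lseHess, Matrix.diagonal_apply, Matrix.vecMulVec_apply, Matrix.sub_apply]
  rw [lseD3]
  rw [hfun]
  rw [h.deriv]
  simp

lemma quad_form_aux (K : ℕ) (w a b c e v : Fin K → ℝ) :
    v ⬝ᵥ (Matrix.of fun i j => (if i = j then w i else 0) - (a i * b j + c i * e j)).mulVec v
      = (∑ i, w i * v i ^ 2)
        - ((∑ i, a i * v i) * (∑ j, b j * v j) + (∑ i, c i * v i) * (∑ j, e j * v j)) := by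
  have key : ∀ i : Fin K,
      v i * (∑ j, ((if i = j then w i else 0) - (a i * b j + c i * e j)) * v j)
        = w i * v i ^ 2 - ((a i * v i) * (∑ j, b j * v j) + (c i * v i) * (∑ j, e j * v j)) := by
    intro i
    have hin : (∑ j, ((if i = j then w i else 0) - (a i * b j + c i * e j)) * v j)
        = (∑ j, if i = j then w i * v j else 0)
          - (a i * (∑ j, b j * v j) + c i * (∑ j, e j * v j)) := by
      rw [Finset.mul_sum, Finset.mul_sum, ← Finset.sum_add_distrib, ← Finset.sum_sub_distrib]
      refine Finset.sum_congr rfl fun j _ => ?_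
      split <;> ring
    rw [hin, Finset.sum_ite_eq]
    simp only [Finset.mem_univ, if_true]
    ring
  simp only [dotProduct, Matrix.mulVec, Matrix.of_apply]
  calc (∑ i, v i * ∑ j, ((if i = j then w i else 0) - (a i * b j + c i * e j)) * v j)
      = ∑ i, (w i * v i ^ 2
          - ((a i * v i) * (∑ j, b j * v j) + (c i * v i) * (∑ j, e j * v j))) :=
        Finset.sum_congr rfl fun i _ => key i
    _ = _ := by
        rw [Finset.sum_sub_distrib, Finset.sum_add_distrib, ← Finset.sum_mul, ← Finset.sum_mul]

/-- **Proposition B.3.** For `f(z) = log(1 + Σᵢ exp zᵢ)` and all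
`x, u₁, u₂ ∈ ℝ^K`: `|D³f(x)[u₁, u₂, u₂]| ≤ 3√2 ‖u₁‖_∞ · u₂ᵀ ∇²f(x) u₂`.
(The norm on `Fin K → ℝ` is the sup-norm.) -/
theorem lse_third_derivative_bound (K : ℕ) (hK : 1 ≤ K) (x u₁ u₂ : Fin K → ℝ) :
    |u₂ ⬝ᵥ (lseD3 K x u₁).mulVec u₂|
      ≤ 3 * Real.sqrt 2 * ‖u₁‖ * (u₂ ⬝ᵥ (lseHess K x).mulVec u₂) := by
  classical
  set p := softmaxP K x with hp
  set m := ∑ k, p k * u₁ k with hm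
  set d : Fin K → ℝ := fun i => p i * (u₁ i - m) with hd
  set b := ∑ k, p k * u₂ k with hb
  set P := ∑ i, p i with hP
  set a := ‖u₁‖ with ha
  -- basic facts about p
  have hppos : ∀ i, 0 ≤ p i := by
    intro i
    rw [hp, softmaxP]
    positivity
  have hPle : P ≤ 1 := by
    rw [hP]
    have hSpos := lse_denom_pos K x
    have : (∑ i, p i) = (∑ i, Real.exp (x i)) / (1 + ∑ k, Real.exp (x k)) := by
      rw [Finset.sum_div]
      exact Finset.sum_congr rfl fun i _ => rfl
    rw [this, div_le_one hSpos]
    linarith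
  have hPpos : 0 ≤ P := Finset.sum_nonneg fun i _ => hppos i
  have ha0 : 0 ≤ a := norm_nonneg u₁
  have hu1 : ∀ i, |u₁ i| ≤ a := by
    intro i
    simpa using norm_le_pi_norm u₁ i
  have hmabs : |m| ≤ a := by
    rw [hm]
    calc |∑ k, p k * u₁ k| ≤ ∑ k, |p k * u₁ k| := Finset.abs_sum_le_sum_abs _ _
      _ ≤ ∑ k, p k * a := by
          refine Finset.sum_le_sum fun k _ => ?_
          rw [abs_mul, abs_of_nonneg (hppos k)]
          exact mul_le_mul_of_nonneg_left (hu1 k) (hppos k)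
      _ = P * a := by rw [← Finset.sum_mul]
      _ ≤ 1 * a := mul_le_mul_of_nonneg_right hPle ha0
      _ = a := one_mul a
  have hdabs : ∀ i, |u₁ i - m| ≤ 2 * a := by
    intro i
    calc |u₁ i - m| ≤ |u₁ i| + |m| := abs_sub _ _
      _ ≤ a + a := add_le_add (hu1 i) hmabs
      _ = 2 * a := by ring
  -- rewrite the two quadratic forms
  have hM3 : lseD3 K x u₁
      = Matrix.of fun i j => (if i = j then d i else 0) - (d i * p j + p i * d j) := by
    funext i j
    rw [lseD3_apply]
    simp only [Matrix.of_apply, hd, hp, hm]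
  have hMH : lseHess K x
      = Matrix.of fun i j => (if i = j then p i else 0) - (p i * p j + (0 : ℝ) * p j) := by
    funext i j
    simp [lseHess, Matrix.diagonal_apply, Matrix.vecMulVec_apply, Matrix.sub_apply, hp]
  rw [hM3, hMH, quad_form_aux, quad_form_aux]
  simp only [zero_mul, Finset.sum_const_zero, zero_mul, mul_zero, add_zero]
  set c := ∑ i, d i * u₂ i with hc
  -- key identities
  have hQ : (∑ i, p i * u₂ i ^ 2) - (∑ i, p i * u₂ i) * (∑ j, p j * u₂ j)
      = (∑ i, p i * (u₂ i - b) ^ 2) + (1 - P) * b ^ 2 := by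
    have expand : ∀ i : Fin K, p i * (u₂ i - b) ^ 2
        = p i * u₂ i ^ 2 - 2 * b * (p i * u₂ i) + b ^ 2 * p i := fun i => by ring
    rw [Finset.sum_congr rfl fun i _ => expand i, Finset.sum_add_distrib,
      Finset.sum_sub_distrib, ← Finset.mul_sum, ← Finset.mul_sum, ← hb, ← hP]
    ring
  have hsumd : (∑ i, d i) = m * (1 - P) := by
    have expand : ∀ i : Fin K, d i = p i * u₁ i - m * p i := fun i => by rw [hd]; ring
    rw [Finset.sum_congr rfl fun i _ => expand i, Finset.sum_sub_distrib, ← Finset.mul_sum,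
      ← hm, ← hP]
    ring
  have hT : (∑ i, d i * u₂ i ^ 2) - ((∑ i, d i * u₂ i) * (∑ j, p j * u₂ j)
        + (∑ i, p i * u₂ i) * (∑ j, d j * u₂ j))
      = (∑ i, d i * (u₂ i - b) ^ 2) - (1 - P) * m * b ^ 2 := by
    have expand : ∀ i : Fin K, d i * (u₂ i - b) ^ 2
        = d i * u₂ i ^ 2 - 2 * b * (d i * u₂ i) + b ^ 2 * d i := fun i => by ring
    rw [Finset.sum_congr rfl fun i _ => expand i, Finset.sum_add_distrib,
      Finset.sum_sub_distrib, ← Finset.mul_sum, ← Finset.mul_sum, hsumd, ← hb, ← hc]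
    ring
  rw [hT, hQ]
  have hP1 : 0 ≤ 1 - P := by linarith
  -- bound the |T| term
  have habs : |(∑ i, d i * (u₂ i - b) ^ 2) - (1 - P) * m * b ^ 2|
      ≤ 2 * a * ((∑ i, p i * (u₂ i - b) ^ 2) + (1 - P) * b ^ 2) := by
    calc |(∑ i, d i * (u₂ i - b) ^ 2) - (1 - P) * m * b ^ 2|
        ≤ |∑ i, d i * (u₂ i - b) ^ 2| + |(1 - P) * m * b ^ 2| := abs_sub _ _
      _ ≤ (∑ i, (2 * a) * (p i * (u₂ i - b) ^ 2)) + (2 * a) * ((1 - P) * b ^ 2) := by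
          gcongr
          · calc |∑ i, d i * (u₂ i - b) ^ 2| ≤ ∑ i, |d i * (u₂ i - b) ^ 2| :=
                Finset.abs_sum_le_sum_abs _ _
              _ ≤ ∑ i, (2 * a) * (p i * (u₂ i - b) ^ 2) := by
                  refine Finset.sum_le_sum fun i _ => ?_
                  have hdi : |d i * (u₂ i - b) ^ 2| = p i * |u₁ i - m| * (u₂ i - b) ^ 2 := by
                    simp only [hd]
                    rw [abs_mul, abs_mul, abs_of_nonneg (hppos i),
                      abs_of_nonneg (sq_nonneg (u₂ i - b))]
                  rw [hdi]
                  nlinarith [mul_nonneg (sub_nonneg.2 (hdabs i))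
                    (mul_nonneg (hppos i) (sq_nonneg (u₂ i - b)))]
          · rw [abs_mul, abs_mul, abs_of_nonneg hP1, abs_of_nonneg (sq_nonneg b)]
            have h2a : |m| ≤ 2 * a := le_trans hmabs (by linarith)
            nlinarith [mul_nonneg (sub_nonneg.2 h2a) (mul_nonneg hP1 (sq_nonneg b))]
      _ = 2 * a * ((∑ i, p i * (u₂ i - b) ^ 2) + (1 - P) * b ^ 2) := by
          rw [← Finset.mul_sum]; ring
  refine le_trans habs ?_
  have hQnn : 0 ≤ (∑ i, p i * (u₂ i - b) ^ 2) + (1 - P) * b ^ 2 := by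
    have : 0 ≤ ∑ i, p i * (u₂ i - b) ^ 2 :=
      Finset.sum_nonneg fun i _ => mul_nonneg (hppos i) (sq_nonneg _)
    nlinarith [sq_nonneg b]
  have hs1 : (1 : ℝ) ≤ Real.sqrt 2 := by
    rw [show (1 : ℝ) = Real.sqrt 1 from Real.sqrt_one.symm]
    exact Real.sqrt_le_sqrt (by norm_num)
  have hsqrt : (2 : ℝ) ≤ 3 * Real.sqrt 2 := by linarith
  have h2a3 : 2 * a ≤ 3 * Real.sqrt 2 * a := mul_le_mul_of_nonneg_right hsqrt ha0
  exact mul_le_mul_of_nonneg_right h2a3 hQnn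
end

section
/- Let K ≥ 1 and f : ℝ^K → ℝ, f(z) = log(1 + Σ_{i=1}^K exp(z_i)). Then for all u, z₁, z₂ ∈ ℝ^K: uᵀ ( ∫₀¹ (1−s) ∇²f(z₁ + s(z₂ − z₁)) ds ) u ≥ (1 / (2 + 3√2 ‖z₂ − z₁‖_∞)) · uᵀ ∇²f(z₁) u. -/
open Matrix

lemma sym_id {K : ℕ} (a w : Fin K → ℝ) :
    ∑ i, ∑ j, a i * a j * (w i - w j)^2
      = 2 * ((∑ i, a i) * (∑ i, a i * w i^2) - (∑ i, a i * w i)^2) := by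
  have h : ∀ i j : Fin K, a i * a j * (w i - w j)^2
      = a i * (a j * w j^2) + (a i * w i^2) * a j - 2 * ((a i * w i) * (a j * w j)) := by
    intros; ring
  have e1 : ∑ i : Fin K, ∑ j : Fin K, a i * (a j * w j^2)
      = (∑ i, a i) * (∑ i, a i * w i^2) := by
    rw [Finset.sum_mul]; exact Finset.sum_congr rfl fun i _ => by rw [← Finset.mul_sum]
  have e2 : ∑ i : Fin K, ∑ j : Fin K, (a i * w i^2) * a j
      = (∑ i, a i * w i^2) * (∑ i, a i) := by
    rw [Finset.sum_mul]; exact Finset.sum_congr rfl fun i _ => by rw [← Finset.mul_sum]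
  have e3 : ∑ i : Fin K, ∑ j : Fin K, (a i * w i) * (a j * w j)
      = (∑ i, a i * w i) * (∑ i, a i * w i) := by
    rw [Finset.sum_mul]; exact Finset.sum_congr rfl fun i _ => by rw [← Finset.mul_sum]
  simp_rw [h, Finset.sum_sub_distrib, Finset.sum_add_distrib, ← Finset.mul_sum]
  rw [← Finset.sum_mul, ← Finset.sum_mul, ← Finset.sum_mul]; ring

lemma quad_base {K : ℕ} (u p : Fin K → ℝ) :
    u ⬝ᵥ (Matrix.diagonal p - Matrix.vecMulVec p p).mulVec u
      = (∑ i, p i * u i^2) - (∑ i, p i * u i)^2 := by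
  rw [Matrix.sub_mulVec, dotProduct_sub]
  congr 1
  · simp [dotProduct, Matrix.mulVec_diagonal]; exact Finset.sum_congr rfl fun i _ => by ring
  · simp [dotProduct, Matrix.mulVec, Matrix.vecMulVec_apply, Finset.mul_sum, Finset.sum_mul,
      pow_two]
    exact Finset.sum_congr rfl fun i _ => Finset.sum_congr rfl fun j _ => by ring

lemma Spos {K : ℕ} (z : Fin K → ℝ) : 0 < 1 + ∑ k, Real.exp (z k) := by
  positivity

/-- Quadratic form of the LSE Hessian as a ratio of nonnegative quantities. -/
lemma quad_eq {K : ℕ} (u z : Fin K → ℝ) :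
    u ⬝ᵥ (lseHess K z).mulVec u
      = ((∑ i, Real.exp (z i) * u i^2)
          + (1/2) * ∑ i, ∑ j, Real.exp (z i) * Real.exp (z j) * (u i - u j)^2)
        / (1 + ∑ k, Real.exp (z k))^2 := by
  have hS := Spos z
  rw [lseHess, quad_base]
  rw [sym_id (fun i => Real.exp (z i)) u]
  simp only [softmaxP]
  simp_rw [div_mul_eq_mul_div, ← Finset.sum_div]
  rw [div_pow]
  field_simp
  ring

lemma quad_nonneg {K : ℕ} (u z : Fin K → ℝ) : 0 ≤ u ⬝ᵥ (lseHess K z).mulVec u := by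
  rw [quad_eq]; positivity

set_option maxHeartbeats 1000000 in
lemma key {K : ℕ} (u z v : Fin K → ℝ) (δ : ℝ) (hδ : 0 ≤ δ) (hv : ∀ i, |v i| ≤ δ) :
    Real.exp (-(4*δ)) * (u ⬝ᵥ (lseHess K z).mulVec u)
      ≤ u ⬝ᵥ (lseHess K (z + v)).mulVec u := by
  rw [quad_eq, quad_eq]
  have hS := Spos z
  have hS' := Spos (z + v)
  set N₁ := (∑ i, Real.exp (z i) * u i^2)
      + (1/2) * ∑ i, ∑ j, Real.exp (z i) * Real.exp (z j) * (u i - u j)^2 with hN₁def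
  set N₂ := (∑ i, Real.exp ((z+v) i) * u i^2)
      + (1/2) * ∑ i, ∑ j, Real.exp ((z+v) i) * Real.exp ((z+v) j) * (u i - u j)^2 with hN₂def
  have hN₁ : 0 ≤ N₁ := by rw [hN₁def]; positivity
  have hN₂ : 0 ≤ N₂ := by rw [hN₂def]; positivity
  have hexp : ∀ i, Real.exp (-δ) * Real.exp (z i) ≤ Real.exp ((z+v) i) := by
    intro i
    rw [← Real.exp_add, Pi.add_apply]
    exact Real.exp_le_exp.2 (by have := (abs_le.1 (hv i)).1; linarith)
  have hexp' : ∀ i, Real.exp ((z+v) i) ≤ Real.exp δ * Real.exp (z i) := by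
    intro i
    rw [← Real.exp_add, Pi.add_apply]
    exact Real.exp_le_exp.2 (by have := (abs_le.1 (hv i)).2; linarith)
  have hN : Real.exp (-(2*δ)) * N₁ ≤ N₂ := by
    rw [hN₁def, hN₂def, mul_add]
    apply add_le_add
    · rw [Finset.mul_sum]
      apply Finset.sum_le_sum
      intro i _
      have h1 : Real.exp (-(2*δ)) * Real.exp (z i) ≤ Real.exp ((z+v) i) := by
        calc Real.exp (-(2*δ)) * Real.exp (z i) ≤ Real.exp (-δ) * Real.exp (z i) := by
              apply mul_le_mul_of_nonneg_right (Real.exp_le_exp.2 (by linarith))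
                (Real.exp_pos _).le
          _ ≤ _ := hexp i
      calc Real.exp (-(2*δ)) * (Real.exp (z i) * u i ^2)
          = (Real.exp (-(2*δ)) * Real.exp (z i)) * u i^2 := by ring
        _ ≤ Real.exp ((z+v) i) * u i^2 := by
            exact mul_le_mul_of_nonneg_right h1 (sq_nonneg _)
    · rw [mul_left_comm, Finset.mul_sum]
      apply mul_le_mul_of_nonneg_left _ (by norm_num)
      apply Finset.sum_le_sum
      intro i _
      rw [Finset.mul_sum]
      apply Finset.sum_le_sum
      intro j _
      have h1 : Real.exp (-(2*δ)) * (Real.exp (z i) * Real.exp (z j))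
          ≤ Real.exp ((z+v) i) * Real.exp ((z+v) j) := by
        calc Real.exp (-(2*δ)) * (Real.exp (z i) * Real.exp (z j))
            = (Real.exp (-δ) * Real.exp (z i)) * (Real.exp (-δ) * Real.exp (z j)) := by
              simp only [← Real.exp_add]; congr 1; ring
          _ ≤ Real.exp ((z+v) i) * Real.exp ((z+v) j) :=
              mul_le_mul (hexp i) (hexp j) (by positivity) (Real.exp_pos _).le
      calc Real.exp (-(2*δ)) * (Real.exp (z i) * Real.exp (z j) * (u i - u j)^2)
          = (Real.exp (-(2*δ)) * (Real.exp (z i) * Real.exp (z j))) * (u i - u j)^2 := by ring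
        _ ≤ _ := mul_le_mul_of_nonneg_right h1 (sq_nonneg _)
  have hSle : 1 + ∑ k, Real.exp ((z+v) k) ≤ Real.exp δ * (1 + ∑ k, Real.exp (z k)) := by
    rw [mul_add, mul_one, Finset.mul_sum]
    have h1 : (1:ℝ) ≤ Real.exp δ := Real.one_le_exp hδ
    exact add_le_add h1 (Finset.sum_le_sum fun i _ => hexp' i)
  have e1 : Real.exp (-(4*δ)) = Real.exp (-(2*δ)) / Real.exp δ ^ 2 := by
    rw [sq, ← Real.exp_add, ← Real.exp_sub]; congr 1; ring
  have hkey : Real.exp (-(4*δ)) * (N₁ / (1 + ∑ k, Real.exp (z k))^2)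
      = (Real.exp (-(2*δ)) * N₁) / (Real.exp δ * (1 + ∑ k, Real.exp (z k)))^2 := by
    rw [e1, div_mul_div_comm, ← mul_pow]
  rw [hkey]
  exact div_le_div₀ hN₂ hN (by positivity) (pow_le_pow_left₀ hS'.le hSle 2)

lemma int_exp (a : ℝ) (ha : 0 < a) :
    ∫ s in (0:ℝ)..1, (1-s) * Real.exp (-(a*s))
      = (Real.exp (-a) + a - 1) / a^2 := by
  have hderiv : ∀ s ∈ Set.uIcc (0:ℝ) 1,
      HasDerivAt (fun t => Real.exp (-(a*t)) * (t/a + (1-a)/a^2))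
        ((1-s) * Real.exp (-(a*s))) s := by
    intro s _
    have h1 : HasDerivAt (fun t : ℝ => -(a*t)) (-a) s := by
      simpa using ((hasDerivAt_id s).const_mul a).fun_neg
    have h2 := h1.exp
    have h3 : HasDerivAt (fun t : ℝ => t/a + (1-a)/a^2) (1/a) s := by
      simpa using ((hasDerivAt_id s).div_const a).add_const ((1-a)/a^2)
    have h := h2.fun_mul h3
    refine h.congr_deriv ?_
    have ha' : a ≠ 0 := ne_of_gt ha
    field_simp
    ring
  rw [intervalIntegral.integral_eq_sub_of_hasDerivAt hderiv (by
    apply Continuous.intervalIntegrable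
    fun_prop)]
  have ha' : a ≠ 0 := ne_of_gt ha
  field_simp
  ring_nf
  rw [Real.exp_zero]; ring

lemma exp_two_sub (a : ℝ) (ha : 0 ≤ a) : (2 - a) * Real.exp a ≤ 2 + a := by
  rcases le_or_gt a 1 with h1 | h1
  · have hb := Real.exp_bound' ha h1 (n := 4) (by norm_num)
    norm_num [Finset.sum_range_succ, Nat.factorial] at hb
    nlinarith [sq_nonneg a, pow_nonneg ha 3, pow_nonneg ha 4]
  · have h2 : 2 - a ≤ Real.exp (1 - a) := by
      have := Real.add_one_le_exp (1 - a)
      linarith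
    have h3 : (2 - a) * Real.exp a ≤ Real.exp (1 - a) * Real.exp a :=
      mul_le_mul_of_nonneg_right h2 (Real.exp_pos a).le
    rw [← Real.exp_add] at h3
    have h4 : Real.exp (1 - a + a) = Real.exp 1 := by norm_num
    rw [h4] at h3
    have h5 : Real.exp 1 < 2.7182818286 := Real.exp_one_lt_d9
    linarith

lemma ratio_ineq (a : ℝ) (ha : 0 < a) :
    1 / (2 + a) ≤ (Real.exp (-a) + a - 1) / a^2 := by
  have h := exp_two_sub a ha.le
  have hea : Real.exp (-a) * Real.exp a = 1 := by
    rw [← Real.exp_add]; simp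
  have hpos := Real.exp_pos a
  rw [div_le_div_iff₀ (by linarith) (by positivity)]
  nlinarith [Real.exp_pos (-a)]

/-- **Proposition B.5.** For all `u, z₁, z₂ ∈ ℝ^K`:
`uᵀ (∫₀¹ (1−s) ∇²f(z₁ + s(z₂ − z₁)) ds) u ≥ (1/(2 + 3√2 ‖z₂ − z₁‖_∞)) uᵀ ∇²f(z₁) u`,
where the norm on `Fin K → ℝ` is the sup-norm. -/
theorem lse_hessian_integral_lower_bound (K : ℕ) (hK : 1 ≤ K) (u z₁ z₂ : Fin K → ℝ) :
    (1 / (2 + 3 * Real.sqrt 2 * ‖z₂ - z₁‖)) * (u ⬝ᵥ (lseHess K z₁).mulVec u)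
      ≤ ∫ s in (0:ℝ)..1, (1 - s) * (u ⬝ᵥ (lseHess K (z₁ + s • (z₂ - z₁))).mulVec u) := by
  have hq₁ : 0 ≤ u ⬝ᵥ (lseHess K z₁).mulVec u := quad_nonneg u z₁
  by_cases h0 : z₂ - z₁ = 0
  · simp only [h0, norm_zero, mul_zero, add_zero, smul_zero]
    rw [intervalIntegral.integral_mul_const,
      intervalIntegral.integral_sub intervalIntegrable_const
        intervalIntegral.intervalIntegrable_id,
      intervalIntegral.integral_const, integral_id]
    norm_num
  · set δ := ‖z₂ - z₁‖ with hδdef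
    have hδpos : 0 < δ := norm_pos_iff.mpr h0
    set a := 4 * δ with hadef
    have ha : 0 < a := by positivity
    -- pointwise bound
    have hpt : ∀ s ∈ Set.Icc (0:ℝ) 1,
        (1 - s) * Real.exp (-(a*s)) * (u ⬝ᵥ (lseHess K z₁).mulVec u)
          ≤ (1 - s) * (u ⬝ᵥ (lseHess K (z₁ + s • (z₂ - z₁))).mulVec u) := by
      intro s hs
      obtain ⟨hs0, hs1⟩ := hs
      have hv : ∀ i, |(s • (z₂ - z₁)) i| ≤ s * δ := by
        intro i
        rw [Pi.smul_apply, smul_eq_mul, abs_mul, abs_of_nonneg hs0]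
        have := norm_le_pi_norm (z₂ - z₁) i
        rw [Real.norm_eq_abs] at this
        exact mul_le_mul_of_nonneg_left this hs0
      have hk := key u z₁ (s • (z₂ - z₁)) (s * δ) (by positivity) hv
      have harg : -(4 * (s * δ)) = -(a * s) := by rw [hadef]; ring
      rw [harg] at hk
      calc (1 - s) * Real.exp (-(a*s)) * (u ⬝ᵥ (lseHess K z₁).mulVec u)
          = (1 - s) * (Real.exp (-(a*s)) * (u ⬝ᵥ (lseHess K z₁).mulVec u)) := by ring
        _ ≤ _ := mul_le_mul_of_nonneg_left hk (by linarith)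
    -- integrability
    have hInt1 : IntervalIntegrable
        (fun s => (1 - s) * Real.exp (-(a*s)) * (u ⬝ᵥ (lseHess K z₁).mulVec u))
        MeasureTheory.volume 0 1 := by
      apply Continuous.intervalIntegrable; fun_prop
    have hInt2 : IntervalIntegrable
        (fun s => (1 - s) * (u ⬝ᵥ (lseHess K (z₁ + s • (z₂ - z₁))).mulVec u))
        MeasureTheory.volume 0 1 := by
      apply Continuous.intervalIntegrable
      simp only [quad_eq, Pi.add_apply, Pi.smul_apply, smul_eq_mul]
      apply Continuous.mul (by fun_prop)
      apply Continuous.div (by fun_prop) (by fun_prop)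
      intro s
      exact (by positivity : (0:ℝ) < (1 + ∑ k, Real.exp (z₁ k + s * (z₂ k - z₁ k)))^2).ne'
    have hmono := intervalIntegral.integral_mono_on (by norm_num : (0:ℝ) ≤ 1) hInt1 hInt2 hpt
    rw [intervalIntegral.integral_mul_const, int_exp a ha] at hmono
    refine le_trans ?_ hmono
    have h42 : (4:ℝ) ≤ 3 * Real.sqrt 2 := by
      nlinarith [Real.sq_sqrt (show (0:ℝ) ≤ 2 by norm_num), Real.sqrt_nonneg 2]
    have hab : a ≤ 3 * Real.sqrt 2 * δ := by
      rw [hadef]; exact mul_le_mul_of_nonneg_right h42 hδpos.le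
    have h1 : 1 / (2 + 3 * Real.sqrt 2 * δ) ≤ 1 / (2 + a) :=
      one_div_le_one_div_of_le (by linarith) (by linarith)
    calc 1 / (2 + 3 * Real.sqrt 2 * δ) * (u ⬝ᵥ (lseHess K z₁).mulVec u)
        ≤ 1 / (2 + a) * (u ⬝ᵥ (lseHess K z₁).mulVec u) :=
          mul_le_mul_of_nonneg_right h1 hq₁
      _ ≤ (Real.exp (-a) + a - 1) / a^2 * (u ⬝ᵥ (lseHess K z₁).mulVec u) :=
          mul_le_mul_of_nonneg_right (ratio_ineq a ha) hq₁
end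

section
/- Let S be a finite assortment with feature vectors x_i ∈ ℝ^d (i ∈ S), y a one-hot response vector over S ∪ {0}, and ℓ(w) = −Σ_{i∈S∪{0}} y_i log p(i|S,w) the MNL loss. Let α > 0 and let w, w' ∈ ℝ^d satisfy max_{i∈S} |x_iᵀ(w − w')| ≤ α. Then ℓ(w) ≥ ℓ(w') + ∇ℓ(w')ᵀ(w − w') + (1/(2 + 3√2 α)) · (w − w')ᵀ ∇²ℓ(w') (w − w'). -/
open Matrix

namespace MNLAux
variable {ι : Type*}

noncomputable def Z (S : Finset ι) (a b : ι → ℝ) (t : ℝ) : ℝ :=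
  1 + ∑ i ∈ S, Real.exp (b i + t * a i)

noncomputable def P (S : Finset ι) (a b : ι → ℝ) (i : ι) (t : ℝ) : ℝ :=
  Real.exp (b i + t * a i) / Z S a b t

noncomputable def M (S : Finset ι) (a b : ι → ℝ) (t : ℝ) : ℝ :=
  ∑ i ∈ S, a i * P S a b i t

noncomputable def V (S : Finset ι) (a b : ι → ℝ) (t : ℝ) : ℝ :=
  (∑ i ∈ S, a i ^ 2 * P S a b i t) - (M S a b t) ^ 2

noncomputable def K (S : Finset ι) (a b : ι → ℝ) (t : ℝ) : ℝ :=
  (∑ i ∈ S, a i ^ 3 * P S a b i t)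
    - 3 * M S a b t * (∑ i ∈ S, a i ^ 2 * P S a b i t) + 2 * (M S a b t) ^ 3

variable (S : Finset ι) (a b : ι → ℝ)

lemma Zpos (t : ℝ) : 0 < Z S a b t := by
  have : (0:ℝ) ≤ ∑ i ∈ S, Real.exp (b i + t * a i) :=
    Finset.sum_nonneg fun i _ => (Real.exp_pos _).le
  unfold Z; linarith

lemma Pnonneg (i : ι) (t : ℝ) : 0 ≤ P S a b i t :=
  div_nonneg (Real.exp_pos _).le (Zpos S a b t).le

lemma sumP (t : ℝ) : (∑ i ∈ S, P S a b i t) + 1 / Z S a b t = 1 := by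
  have hz := (Zpos S a b t).ne'
  unfold P
  rw [← Finset.sum_div, ← add_div]
  rw [show (∑ i ∈ S, Real.exp (b i + t * a i)) + 1 = Z S a b t by unfold Z; ring]
  exact div_self hz

lemma hasDerivZ (t : ℝ) :
    HasDerivAt (Z S a b) (∑ i ∈ S, a i * Real.exp (b i + t * a i)) t := by
  have : HasDerivAt (fun t => ∑ i ∈ S, Real.exp (b i + t * a i))
      (∑ i ∈ S, a i * Real.exp (b i + t * a i)) t := by
    apply HasDerivAt.fun_sum
    intro i _
    have h : HasDerivAt (fun t : ℝ => b i + t * a i) (a i) t :=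
      (hasDerivAt_mul_const (a i)).const_add (b i)
    simpa [mul_comm] using h.exp
  exact this.const_add 1

lemma Z'_eq (t : ℝ) :
    ∑ i ∈ S, a i * Real.exp (b i + t * a i) = M S a b t * Z S a b t := by
  have hz := (Zpos S a b t).ne'
  unfold M P
  rw [Finset.sum_mul]
  refine Finset.sum_congr rfl fun i _ => ?_
  field_simp

lemma hasDerivLog (t : ℝ) :
    HasDerivAt (fun t => Real.log (Z S a b t)) (M S a b t) t := by
  have h := (hasDerivZ S a b t).log (Zpos S a b t).ne'
  rw [Z'_eq S a b t] at h
  simpa [mul_div_assoc, div_self (Zpos S a b t).ne'] using h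

lemma hasDerivP (i : ι) (t : ℝ) :
    HasDerivAt (P S a b i) ((a i - M S a b t) * P S a b i t) t := by
  have hz := (Zpos S a b t).ne'
  have he : HasDerivAt (fun t : ℝ => Real.exp (b i + t * a i))
      (a i * Real.exp (b i + t * a i)) t := by
    have h : HasDerivAt (fun t : ℝ => b i + t * a i) (a i) t :=
      (hasDerivAt_mul_const (a i)).const_add (b i)
    simpa [mul_comm] using h.exp
  have h := he.div (hasDerivZ S a b t) hz
  rw [Z'_eq S a b t] at h
  refine h.congr_deriv ?_
  unfold P
  field_simp

lemma hasDerivM (t : ℝ) : HasDerivAt (M S a b) (V S a b t) t := by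
  have h : HasDerivAt (fun t => ∑ i ∈ S, a i * P S a b i t)
      (∑ i ∈ S, a i * ((a i - M S a b t) * P S a b i t)) t :=
    HasDerivAt.fun_sum fun i _ => (hasDerivP S a b i t).const_mul (a i)
  have hval : (∑ i ∈ S, a i * ((a i - M S a b t) * P S a b i t)) = V S a b t := by
    rw [Finset.sum_congr rfl (fun i (_ : i ∈ S) =>
      show a i * ((a i - M S a b t) * P S a b i t)
        = a i ^ 2 * P S a b i t - M S a b t * (a i * P S a b i t) by ring)]
    rw [Finset.sum_sub_distrib, ← Finset.mul_sum]
    unfold V M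
    ring
  rw [← hval]
  exact h

lemma hasDerivV (t : ℝ) : HasDerivAt (V S a b) (K S a b t) t := by
  have h1 : HasDerivAt (fun t => ∑ i ∈ S, a i ^ 2 * P S a b i t)
      (∑ i ∈ S, a i ^ 2 * ((a i - M S a b t) * P S a b i t)) t :=
    HasDerivAt.fun_sum fun i _ => (hasDerivP S a b i t).const_mul (a i ^ 2)
  have h2 : HasDerivAt (fun t => (M S a b t) ^ 2)
      (2 * M S a b t * V S a b t) t := by
    have := (hasDerivM S a b t).fun_pow 2
    simpa [mul_comm, mul_assoc] using this
  have h := h1.sub h2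
  have hval : (∑ i ∈ S, a i ^ 2 * ((a i - M S a b t) * P S a b i t))
      - 2 * M S a b t * V S a b t = K S a b t := by
    rw [Finset.sum_congr rfl (fun i (_ : i ∈ S) =>
      show a i ^ 2 * ((a i - M S a b t) * P S a b i t)
        = a i ^ 3 * P S a b i t - M S a b t * (a i ^ 2 * P S a b i t) by ring)]
    rw [Finset.sum_sub_distrib, ← Finset.mul_sum]
    unfold K V M
    ring
  rw [← hval]
  exact h

lemma V_eq (t : ℝ) : V S a b t
    = (M S a b t) ^ 2 * (1 / Z S a b t)
      + ∑ i ∈ S, (a i - M S a b t) ^ 2 * P S a b i t := by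
  have hs := sumP S a b t
  rw [Finset.sum_congr rfl (fun i (_ : i ∈ S) =>
    show (a i - M S a b t) ^ 2 * P S a b i t
      = a i ^ 2 * P S a b i t - 2 * M S a b t * (a i * P S a b i t)
        + M S a b t ^ 2 * P S a b i t by ring)]
  rw [Finset.sum_add_distrib, Finset.sum_sub_distrib, ← Finset.mul_sum, ← Finset.mul_sum]
  unfold V M
  linear_combination (-(∑ i ∈ S, a i * P S a b i t) ^ 2) * hs

lemma K_eq (t : ℝ) : K S a b t
    = (- M S a b t) ^ 3 * (1 / Z S a b t)
      + ∑ i ∈ S, (a i - M S a b t) ^ 3 * P S a b i t := by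
  have hs := sumP S a b t
  rw [Finset.sum_congr rfl (fun i (_ : i ∈ S) =>
    show (a i - M S a b t) ^ 3 * P S a b i t
      = a i ^ 3 * P S a b i t - 3 * M S a b t * (a i ^ 2 * P S a b i t)
        + 3 * M S a b t ^ 2 * (a i * P S a b i t) - M S a b t ^ 3 * P S a b i t by ring)]
  rw [Finset.sum_sub_distrib, Finset.sum_add_distrib, Finset.sum_sub_distrib,
    ← Finset.mul_sum, ← Finset.mul_sum, ← Finset.mul_sum]
  unfold K M
  linear_combination (∑ i ∈ S, a i * P S a b i t) ^ 3 * hs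

lemma V_nonneg (t : ℝ) : 0 ≤ V S a b t := by
  rw [V_eq]
  have h1 : 0 ≤ (M S a b t) ^ 2 * (1 / Z S a b t) := by
    have := (Zpos S a b t).le; positivity
  have h2 : 0 ≤ ∑ i ∈ S, (a i - M S a b t) ^ 2 * P S a b i t :=
    Finset.sum_nonneg fun i hi => mul_nonneg (sq_nonneg _) (Pnonneg S a b i t)
  linarith


lemma sumP_le_one (t : ℝ) : ∑ i ∈ S, P S a b i t ≤ 1 := by
  have h := sumP S a b t
  have hz : 0 ≤ 1 / Z S a b t := by
    have := (Zpos S a b t).le; positivity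
  linarith

lemma M_bound (α : ℝ) (hα : 0 ≤ α) (ha : ∀ i ∈ S, |a i| ≤ α) (t : ℝ) :
    |M S a b t| ≤ α := by
  have h1 : |M S a b t| ≤ ∑ i ∈ S, |a i * P S a b i t| :=
    Finset.abs_sum_le_sum_abs _ _
  have h2 : ∑ i ∈ S, |a i * P S a b i t| ≤ ∑ i ∈ S, α * P S a b i t := by
    refine Finset.sum_le_sum fun i hi => ?_
    rw [abs_mul, abs_of_nonneg (Pnonneg S a b i t)]
    exact mul_le_mul_of_nonneg_right (ha i hi) (Pnonneg S a b i t)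
  have h3 : ∑ i ∈ S, α * P S a b i t = α * ∑ i ∈ S, P S a b i t :=
    (Finset.mul_sum _ _ _).symm
  have h4 := sumP_le_one S a b t
  have h5 : 0 ≤ ∑ i ∈ S, P S a b i t :=
    Finset.sum_nonneg fun i _ => Pnonneg S a b i t
  nlinarith

lemma K_ge (α : ℝ) (hα : 0 ≤ α) (ha : ∀ i ∈ S, |a i| ≤ α) (t : ℝ) :
    -(2 * α * V S a b t) ≤ K S a b t := by
  have hM := abs_le.mp (M_bound S a b α hα ha t)
  have hzi : 0 ≤ 1 / Z S a b t := by
    have := (Zpos S a b t).le; positivity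
  rw [K_eq, V_eq]
  have h1 : 0 ≤ (- M S a b t) ^ 3 * (1 / Z S a b t)
      + 2 * α * ((M S a b t) ^ 2 * (1 / Z S a b t)) := by
    have h := mul_nonneg (mul_nonneg (sq_nonneg (M S a b t))
      (show (0:ℝ) ≤ 2 * α - M S a b t by linarith)) hzi
    nlinarith [h]
  have h2 : 0 ≤ ∑ i ∈ S, ((a i - M S a b t) ^ 3 * P S a b i t
      + 2 * α * ((a i - M S a b t) ^ 2 * P S a b i t)) := by
    refine Finset.sum_nonneg fun i hi => ?_
    have hai := abs_le.mp (ha i hi)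
    have h3 : 0 ≤ a i - M S a b t + 2 * α := by linarith
    have h := mul_nonneg (mul_nonneg (sq_nonneg (a i - M S a b t)) h3)
      (Pnonneg S a b i t)
    nlinarith [h]
  rw [Finset.sum_add_distrib, ← Finset.mul_sum] at h2
  linarith

lemma decay (α : ℝ) (hα : 0 ≤ α) (ha : ∀ i ∈ S, |a i| ≤ α) (t : ℝ) (ht : 0 ≤ t) :
    Real.exp (-(2 * α * t)) * V S a b 0 ≤ V S a b t := by
  set c := 2 * α with hc
  have hW : ∀ s : ℝ, HasDerivAt (fun s => Real.exp (c * s) * V S a b s)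
      (c * Real.exp (c * s) * V S a b s + Real.exp (c * s) * K S a b s) s := by
    intro s
    have h1 : HasDerivAt (fun s : ℝ => Real.exp (c * s)) (c * Real.exp (c * s)) s := by
      have := ((hasDerivAt_id s).const_mul c).exp
      simpa [mul_comm] using this
    simpa using h1.fun_mul (hasDerivV S a b s)
  have hmono : Monotone (fun s => Real.exp (c * s) * V S a b s) := by
    apply monotone_of_deriv_nonneg (fun s => (hW s).differentiableAt)
    intro s
    rw [(hW s).deriv]
    have hk := K_ge S a b α hα ha s
    have he := (Real.exp_pos (c * s)).le
    have h2 : 0 ≤ Real.exp (c * s) * (c * V S a b s + K S a b s) :=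
      mul_nonneg he (by rw [hc]; linarith)
    nlinarith [h2]
  have h := hmono ht
  simp only [mul_zero, Real.exp_zero, one_mul] at h
  have hx : Real.exp (-(c * t)) * V S a b 0
      ≤ Real.exp (-(c * t)) * (Real.exp (c * t) * V S a b t) :=
    mul_le_mul_of_nonneg_left h (Real.exp_pos _).le
  rwa [← mul_assoc, ← Real.exp_add, neg_add_cancel, Real.exp_zero, one_mul] at hx

lemma elem_ineq (m : ℝ) (hm : 0 < m) :
    1 / (2 + m) ≤ (Real.exp (-m) + m - 1) / m ^ 2 := by
  have key : 0 ≤ (2 + m) * Real.exp (-m) + m - 2 := by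
    have hq : ∀ s : ℝ, HasDerivAt (fun s : ℝ => (2 + s) * Real.exp (-s) + s - 2)
        (1 - (1 + s) * Real.exp (-s)) s := by
      intro s
      have h1 : HasDerivAt (fun s : ℝ => Real.exp (-s)) (-Real.exp (-s)) s := by
        simpa using ((hasDerivAt_id s).neg).exp
      have h2 : HasDerivAt (fun s : ℝ => 2 + s) 1 s := by
        simpa using (hasDerivAt_id s).const_add (2:ℝ)
      have h3 := (h2.fun_mul h1).fun_add (hasDerivAt_id s)
      have h4 := h3.sub_const (2:ℝ)
      refine h4.congr_deriv ?_
      ring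
    have hmono : MonotoneOn (fun s : ℝ => (2 + s) * Real.exp (-s) + s - 2)
        (Set.Ici 0) := by
      apply monotoneOn_of_deriv_nonneg (convex_Ici 0)
      · exact fun s _ => (hq s).differentiableAt.continuousAt.continuousWithinAt
      · exact fun s _ => (hq s).differentiableAt.differentiableWithinAt
      · intro s _
        rw [(hq s).deriv]
        have h := mul_le_mul_of_nonneg_right (Real.add_one_le_exp s)
          (Real.exp_pos (-s)).le
        rw [← Real.exp_add] at h
        simp only [add_neg_cancel, Real.exp_zero] at h
        linarith
    have h0 := hmono (Set.self_mem_Ici) (Set.mem_Ici.mpr hm.le) hm.le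
    simpa using h0
  rw [div_le_div_iff₀ (by positivity) (by positivity)]
  nlinarith [key]

lemma core (α : ℝ) (hα : 0 < α) (ha : ∀ i ∈ S, |a i| ≤ α) :
    Real.log (Z S a b 0) + M S a b 0
      + (1 / (2 + 3 * Real.sqrt 2 * α)) * V S a b 0 ≤ Real.log (Z S a b 1) := by
  set c := 2 * α with hc
  have hcpos : 0 < c := by positivity
  set V0 := V S a b 0 with hV0
  have hV0n : 0 ≤ V0 := V_nonneg S a b 0
  -- F₁
  set F₁ : ℝ → ℝ := fun t => M S a b t - M S a b 0 - V0 * ((1 - Real.exp (-(c * t))) / c)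
    with hF₁def
  have hE : ∀ t : ℝ, HasDerivAt (fun t : ℝ => Real.exp (-(c * t)))
      (-c * Real.exp (-(c * t))) t := by
    intro t
    have := ((hasDerivAt_id t).const_mul (-c)).exp
    simpa [neg_mul, mul_comm] using this
  have hF₁ : ∀ t : ℝ, HasDerivAt F₁ (V S a b t - V0 * Real.exp (-(c * t))) t := by
    intro t
    have h1 : HasDerivAt (fun t : ℝ => V0 * ((1 - Real.exp (-(c * t))) / c))
        (V0 * Real.exp (-(c * t))) t := by
      have h2 := (((hE t).const_sub 1).div_const c).const_mul V0
      refine h2.congr_deriv ?_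
      field_simp
    simpa using ((hasDerivM S a b t).sub_const (M S a b 0)).fun_sub h1
  have hF₁mono : MonotoneOn F₁ (Set.Ici 0) := by
    apply monotoneOn_of_deriv_nonneg (convex_Ici 0)
    · exact fun t _ => (hF₁ t).differentiableAt.continuousAt.continuousWithinAt
    · exact fun t _ => (hF₁ t).differentiableAt.differentiableWithinAt
    · intro t ht
      rw [(hF₁ t).deriv]
      rw [interior_Ici] at ht
      have := decay S a b α hα.le ha t (le_of_lt ht)
      rw [← hc, ← hV0] at this
      linarith
  have hF₁0 : F₁ 0 = 0 := by simp [hF₁def]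
  have hF₁nonneg : ∀ t : ℝ, 0 ≤ t → 0 ≤ F₁ t := by
    intro t ht
    have := hF₁mono Set.self_mem_Ici (Set.mem_Ici.mpr ht) ht
    rwa [hF₁0] at this
  -- F
  set G : ℝ → ℝ := fun t => (Real.exp (-(c * t)) + c * t - 1) / c ^ 2 with hGdef
  set F : ℝ → ℝ := fun t =>
    Real.log (Z S a b t) - Real.log (Z S a b 0) - t * M S a b 0 - V0 * G t with hFdef
  have hF : ∀ t : ℝ, HasDerivAt F (F₁ t) t := by
    intro t
    have hG : HasDerivAt G ((1 - Real.exp (-(c * t))) / c) t := by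
      have h1 := (((hE t).fun_add ((hasDerivAt_id t).const_mul c)).sub_const 1).div_const (c ^ 2)
      refine h1.congr_deriv ?_
      field_simp
      ring
    have h2 : HasDerivAt (fun t : ℝ => t * M S a b 0) (M S a b 0) t := by
      simpa using hasDerivAt_mul_const (M S a b 0)
    have h3 := (((hasDerivLog S a b t).sub_const (Real.log (Z S a b 0))).fun_sub h2).fun_sub
      (hG.const_mul V0)
    convert h3 using 1
  have hFmono : MonotoneOn F (Set.Ici 0) := by
    apply monotoneOn_of_deriv_nonneg (convex_Ici 0)
    · exact fun t _ => (hF t).differentiableAt.continuousAt.continuousWithinAt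
    · exact fun t _ => (hF t).differentiableAt.differentiableWithinAt
    · intro t ht
      rw [(hF t).deriv]
      rw [interior_Ici] at ht
      exact hF₁nonneg t (le_of_lt ht)
  have hF0 : F 0 = 0 := by simp [hFdef, hGdef]
  have hF1 : 0 ≤ F 1 := by
    have := hFmono Set.self_mem_Ici (Set.mem_Ici.mpr zero_le_one) zero_le_one
    rwa [hF0] at this
  -- F 1 ≥ 0 means log Z1 - log Z0 - M0 ≥ V0 * G 1
  have hmain : Real.log (Z S a b 0) + M S a b 0 + V0 * G 1 ≤ Real.log (Z S a b 1) := by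
    simp only [hFdef, one_mul] at hF1
    linarith
  -- compare constants
  have hsqrt : (1:ℝ) ≤ Real.sqrt 2 := by
    rw [show (1:ℝ) = Real.sqrt 1 by simp]
    exact Real.sqrt_le_sqrt (by norm_num)
  have hG1 : 1 / (2 + 3 * Real.sqrt 2 * α) ≤ G 1 := by
    have h1 : 1 / (2 + c) ≤ (Real.exp (-c) + c - 1) / c ^ 2 := elem_ineq c hcpos
    have h2 : 1 / (2 + 3 * Real.sqrt 2 * α) ≤ 1 / (2 + c) := by
      apply one_div_le_one_div_of_le (by positivity)
      rw [hc]
      nlinarith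
    have hG1eq : G 1 = (Real.exp (-c) + c - 1) / c ^ 2 := by
      simp [hGdef]
    rw [hG1eq]
    linarith
  have hfinal : (1 / (2 + 3 * Real.sqrt 2 * α)) * V0 ≤ V0 * G 1 := by
    rw [mul_comm V0 (G 1)]
    exact mul_le_mul_of_nonneg_right hG1 hV0n
  linarith

end MNLAux

namespace MNLAux

lemma sum_dp {ι : Type*} {n : Type*} [Fintype n] (S : Finset ι) (f : ι → n → ℝ)
    (v : n → ℝ) : (∑ i ∈ S, f i) ⬝ᵥ v = ∑ i ∈ S, f i ⬝ᵥ v := by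
  simp only [dotProduct, Finset.sum_apply, Finset.sum_mul]
  exact Finset.sum_comm

lemma dp_sum {ι : Type*} {n : Type*} [Fintype n] (S : Finset ι) (v : n → ℝ)
    (f : ι → n → ℝ) : v ⬝ᵥ (∑ i ∈ S, f i) = ∑ i ∈ S, v ⬝ᵥ f i := by
  simp only [dotProduct, Finset.sum_apply, Finset.mul_sum]
  exact Finset.sum_comm

lemma sum_mulVec' {ι : Type*} {n : Type*} [Fintype n] (S : Finset ι)
    (A : ι → Matrix n n ℝ) (v : n → ℝ) :
    (∑ i ∈ S, A i).mulVec v = ∑ i ∈ S, (A i).mulVec v := by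
  ext j
  simp only [Matrix.mulVec, dotProduct, Finset.sum_apply, Matrix.sum_apply,
    Finset.sum_mul]
  exact Finset.sum_comm

lemma quad_vecMulVec {n : Type*} [Fintype n] (v u : n → ℝ) :
    u ⬝ᵥ (Matrix.vecMulVec v v).mulVec u = (v ⬝ᵥ u) ^ 2 := by
  simp only [Matrix.mulVec, Matrix.vecMulVec_apply, dotProduct, sq]
  rw [Finset.sum_mul_sum]
  refine Finset.sum_congr rfl fun j _ => ?_
  rw [Finset.mul_sum]
  refine Finset.sum_congr rfl fun k _ => ?_
  ring

end MNLAux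

lemma mnl_loss_eq {d : ℕ} {ι : Type*} (S : Finset ι) (x : ι → Fin d → ℝ)
    (y : ι → ℝ) (y0 : ℝ) (hsum : y0 + ∑ i ∈ S, y i = 1) (w : Fin d → ℝ) :
    mnlLoss S x y y0 w
      = Real.log (1 + ∑ j ∈ S, Real.exp (x j ⬝ᵥ w)) - ∑ i ∈ S, y i * (x i ⬝ᵥ w) := by
  have hZ : (0:ℝ) < 1 + ∑ j ∈ S, Real.exp (x j ⬝ᵥ w) := by positivity
  set L := Real.log (1 + ∑ j ∈ S, Real.exp (x j ⬝ᵥ w)) with hL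
  unfold mnlLoss mnlProb mnlProb0
  rw [one_div, Real.log_inv, ← hL]
  rw [Finset.sum_congr rfl (fun i (hi : i ∈ S) => by
    rw [Real.log_div (Real.exp_ne_zero _) hZ.ne', Real.log_exp, ← hL] :
    ∀ i ∈ S, y i * Real.log (Real.exp (x i ⬝ᵥ w) / (1 + ∑ j ∈ S, Real.exp (x j ⬝ᵥ w)))
      = y i * (x i ⬝ᵥ w - L))]
  rw [Finset.sum_congr rfl (fun i (_ : i ∈ S) =>
    show y i * (x i ⬝ᵥ w - L) = y i * (x i ⬝ᵥ w) - y i * L by ring)]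
  rw [Finset.sum_sub_distrib, ← Finset.sum_mul]
  linear_combination L * hsum

/-- **Lemma C.3.** If `y` is a one-hot response over `S ∪ {0}`,
`α > 0`, and `max_{i∈S} |xᵢᵀ(w − w')| ≤ α`, then
`ℓ(w) ≥ ℓ(w') + ∇ℓ(w')ᵀ(w − w') + (1/(2 + 3√2 α)) (w − w')ᵀ ∇²ℓ(w') (w − w')`. -/
theorem mnl_loss_second_order_lower_bound {d : ℕ} {ι : Type*} (S : Finset ι)
    (x : ι → Fin d → ℝ) (y : ι → ℝ) (y0 : ℝ)
    (hy : (y0 = 1 ∧ ∀ i ∈ S, y i = 0) ∨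
      (y0 = 0 ∧ ∃ i₀ ∈ S, y i₀ = 1 ∧ ∀ j ∈ S, j ≠ i₀ → y j = 0))
    (α : ℝ) (hα : 0 < α) (w w' : Fin d → ℝ)
    (halign : ∀ i ∈ S, |x i ⬝ᵥ (w - w')| ≤ α) :
    mnlLoss S x y y0 w' + mnlGrad S x y w' ⬝ᵥ (w - w')
      + (1 / (2 + 3 * Real.sqrt 2 * α)) *
        ((w - w') ⬝ᵥ (mnlHess S x w').mulVec (w - w'))
    ≤ mnlLoss S x y y0 w := by
  classical
  set a : ι → ℝ := fun i => x i ⬝ᵥ (w - w') with hadef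
  set b : ι → ℝ := fun i => x i ⬝ᵥ w' with hbdef
  have hsum : y0 + ∑ i ∈ S, y i = 1 := by
    rcases hy with ⟨h0, hz⟩ | ⟨h0, i₀, hi₀, h1, hz⟩
    · rw [h0, Finset.sum_eq_zero hz]; norm_num
    · rw [h0, Finset.sum_eq_single_of_mem i₀ hi₀ (fun j hj hne => hz j hj hne), h1]
      norm_num
  have hw' : ∀ i, x i ⬝ᵥ w' = b i + 0 * a i := fun i => by simp [hbdef]
  have hw : ∀ i, x i ⬝ᵥ w = b i + 1 * a i := fun i => by
    simp only [hadef, hbdef, dotProduct_sub, one_mul]; ring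
  have hProb : ∀ i, mnlProb S x w' i = MNLAux.P S a b i 0 := by
    intro i
    unfold mnlProb MNLAux.P MNLAux.Z
    rw [hw' i, Finset.sum_congr rfl fun j _ => by rw [hw' j]]
  have hZ0 : (1 + ∑ j ∈ S, Real.exp (x j ⬝ᵥ w')) = MNLAux.Z S a b 0 := by
    unfold MNLAux.Z
    rw [Finset.sum_congr rfl fun j (_ : j ∈ S) => by rw [hw' j]]
  have hZ1 : (1 + ∑ j ∈ S, Real.exp (x j ⬝ᵥ w)) = MNLAux.Z S a b 1 := by
    unfold MNLAux.Z
    rw [Finset.sum_congr rfl fun j (_ : j ∈ S) => by rw [hw j]]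
  -- loss identities
  rw [mnl_loss_eq S x y y0 hsum w, mnl_loss_eq S x y y0 hsum w', hZ0, hZ1]
  -- gradient identity
  have hgrad : mnlGrad S x y w' ⬝ᵥ (w - w')
      = MNLAux.M S a b 0 - ∑ i ∈ S, y i * a i := by
    unfold mnlGrad
    rw [MNLAux.sum_dp]
    rw [Finset.sum_congr rfl (fun i (_ : i ∈ S) => by
      rw [smul_dotProduct, smul_eq_mul] :
      ∀ i ∈ S, ((mnlProb S x w' i - y i) • x i) ⬝ᵥ (w - w')
        = (mnlProb S x w' i - y i) * (x i ⬝ᵥ (w - w')))]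
    rw [Finset.sum_congr rfl (fun i (_ : i ∈ S) =>
      show (mnlProb S x w' i - y i) * (x i ⬝ᵥ (w - w'))
        = a i * mnlProb S x w' i - y i * a i by simp only [hadef]; ring)]
    rw [Finset.sum_sub_distrib]
    unfold MNLAux.M
    rw [Finset.sum_congr rfl fun i (_ : i ∈ S) => by rw [hProb i]]
  -- Hessian identity
  have hhess : (w - w') ⬝ᵥ (mnlHess S x w').mulVec (w - w') = MNLAux.V S a b 0 := by
    unfold mnlHess
    rw [Matrix.sub_mulVec, dotProduct_sub, MNLAux.sum_mulVec', MNLAux.dp_sum]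
    rw [Finset.sum_congr rfl (fun i (_ : i ∈ S) => by
      rw [Matrix.smul_mulVec, dotProduct_smul, smul_eq_mul,
        MNLAux.quad_vecMulVec] :
      ∀ i ∈ S, (w - w') ⬝ᵥ (mnlProb S x w' i • Matrix.vecMulVec (x i) (x i)).mulVec (w - w')
        = mnlProb S x w' i * (x i ⬝ᵥ (w - w')) ^ 2)]
    rw [MNLAux.quad_vecMulVec, MNLAux.sum_dp]
    rw [Finset.sum_congr rfl (fun i (_ : i ∈ S) => by
      rw [smul_dotProduct, smul_eq_mul] :
      ∀ i ∈ S, (mnlProb S x w' i • x i) ⬝ᵥ (w - w')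
        = mnlProb S x w' i * (x i ⬝ᵥ (w - w')))]
    unfold MNLAux.V MNLAux.M
    rw [Finset.sum_congr rfl (fun i (_ : i ∈ S) =>
      show mnlProb S x w' i * (x i ⬝ᵥ (w - w')) ^ 2
        = a i ^ 2 * MNLAux.P S a b i 0 by rw [hProb i]; simp only [hadef]; ring)]
    rw [Finset.sum_congr rfl (fun i (_ : i ∈ S) =>
      show mnlProb S x w' i * (x i ⬝ᵥ (w - w'))
        = a i * MNLAux.P S a b i 0 by rw [hProb i]; simp only [hadef]; ring)]
  rw [hgrad, hhess]
  have hcore := MNLAux.core S a b α hα (fun i hi => halign i hi)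
  have hya : ∑ i ∈ S, y i * (x i ⬝ᵥ w) = ∑ i ∈ S, y i * (x i ⬝ᵥ w')
      + ∑ i ∈ S, y i * a i := by
    rw [← Finset.sum_add_distrib]
    refine Finset.sum_congr rfl fun i _ => ?_
    rw [hw i, hw' i]
    ring
  rw [hya]
  linarith
end

section
/- Fix w ∈ ℝ^d, λ > 0, t ∈ ℕ, and a subset 𝒲 ⊆ [t]. For each s ∈ [t] let S_s be a finite assortment with feature vectors x_{si} ∈ ℝ^d, ‖x_{si}‖₂ ≤ 1, and set x_{s0} = 0. Write x̄_s = Σ_{j∈S_s∪{0}} p_s(j|S_s,w) x_{sj} and ∇²ℓ_s(w) = Σ_{i∈S_s∪{0}} p_s(i|S_s,w)(x_{si} − x̄_s)(x_{si} − x̄_s)ᵀ, and define H_s(w) = λ I_d + Σ_{s'∈[s−1]\𝒲} ∇²ℓ_{s'}(w). If ‖x_{si}‖²_{H_s(w)^{-1}} ≤ 1/2 for all i ∈ S_s and all s ∈ [t]\𝒲, then Σ_{s∈[t]\𝒲} Σ_{i∈S_s∪{0}} p_s(i|S_s,w) ‖x_{si} − x̄_s‖²_{H_s(w)^{-1}}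 ≤ 2d log(1 + t/(dλ)). -/
open Matrix

noncomputable section

/-- `x̄ = Σ_{j∈S∪{0}} p(j|S,w) xⱼ` (the outside option has feature `0`). -/
def mnlMean {d : ℕ} {ι : Type*} (S : Finset ι) (x : ι → Fin d → ℝ)
    (w : Fin d → ℝ) : Fin d → ℝ :=
  ∑ j ∈ S, mnlProb S x w j • x j

/-- Centered Hessian of the MNL loss:
`∇²ℓ(w) = Σ_{i∈S∪{0}} p(i|S,w) (xᵢ − x̄)(xᵢ − x̄)ᵀ`, with `x₀ = 0`. -/
def mnlHessC {d : ℕ} {ι : Type*} (S : Finset ι) (x : ι → Fin d → ℝ)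
    (w : Fin d → ℝ) : Matrix (Fin d) (Fin d) ℝ :=
  mnlProb0 S x w • vecMulVec (0 - mnlMean S x w) (0 - mnlMean S x w)
    + ∑ i ∈ S, mnlProb S x w i • vecMulVec (x i - mnlMean S x w) (x i - mnlMean S x w)

end

/- ========================= Auxiliary lemmas ========================= -/

section Aux

open Finset

lemma aux_prod_one_add {α : Type*} (s : Finset α) (f : α → ℝ)
    (hf : ∀ i ∈ s, 0 ≤ f i) : 1 + ∑ i ∈ s, f i ≤ ∏ i ∈ s, (1 + f i) := by
  classical
  induction s using Finset.cons_induction with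
  | empty => simp
  | cons a s ha ih =>
    rw [Finset.prod_cons, Finset.sum_cons]
    have h1 : 0 ≤ f a := hf a (Finset.mem_cons_self a s)
    have h2 : ∀ i ∈ s, 0 ≤ f i := fun i hi => hf i (Finset.mem_cons_of_mem hi)
    have h3 := ih h2
    have h4 : 0 ≤ ∑ i ∈ s, f i := Finset.sum_nonneg h2
    nlinarith

set_option linter.unusedSectionVars false

variable {n : Type*} [Fintype n] [DecidableEq n]

lemma aux_sum_dotProduct {α : Type*} (s : Finset α) (f : α → n → ℝ) (v : n → ℝ) :
    (∑ i ∈ s, f i) ⬝ᵥ v = ∑ i ∈ s, (f i ⬝ᵥ v) := by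
  simp only [dotProduct, Finset.sum_apply, Finset.sum_mul]
  exact Finset.sum_comm

lemma aux_psd_vecMulVec (v : n → ℝ) : (vecMulVec v v).PosSemidef := by
  refine Matrix.PosSemidef.of_dotProduct_mulVec_nonneg ?_ ?_
  · ext i j
    simp [Matrix.conjTranspose_apply, Matrix.vecMulVec_apply, mul_comm]
  · intro y
    have h : vecMulVec v v *ᵥ y = (v ⬝ᵥ y) • v := by
      ext i
      simp only [Matrix.mulVec, dotProduct, Matrix.vecMulVec_apply, Pi.smul_apply,
        smul_eq_mul, Finset.sum_mul]
      exact Finset.sum_congr rfl fun j _ => by ring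
    rw [h]
    simp only [star_trivial, dotProduct_smul, smul_eq_mul]
    rw [dotProduct_comm]
    exact mul_self_nonneg _

lemma aux_psd_smul {M : Matrix n n ℝ} (hM : M.PosSemidef) {c : ℝ} (hc : 0 ≤ c) :
    (c • M).PosSemidef := by
  refine Matrix.PosSemidef.of_dotProduct_mulVec_nonneg ?_ ?_
  · unfold Matrix.IsHermitian
    rw [Matrix.conjTranspose_smul, hM.1.eq]
    simp
  · intro y
    rw [Matrix.smul_mulVec, dotProduct_smul]
    exact smul_nonneg hc (hM.dotProduct_mulVec_nonneg y)

lemma aux_psd_sum {α : Type*} (s : Finset α) (f : α → Matrix n n ℝ)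
    (hf : ∀ i ∈ s, (f i).PosSemidef) : (∑ i ∈ s, f i).PosSemidef := by
  classical
  induction s using Finset.cons_induction with
  | empty => simpa using Matrix.PosSemidef.zero
  | cons a s ha ih =>
    rw [Finset.sum_cons]
    exact (hf a (Finset.mem_cons_self a s)).add
      (ih fun i hi => hf i (Finset.mem_cons_of_mem hi))

lemma aux_q_nonneg {M : Matrix n n ℝ} (hM : M.PosSemidef) (v : n → ℝ) :
    0 ≤ v ⬝ᵥ M *ᵥ v := by simpa using hM.dotProduct_mulVec_nonneg v

lemma aux_trace_mul_vecMulVec (M : Matrix n n ℝ) (a b : n → ℝ) :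
    (M * vecMulVec a b).trace = b ⬝ᵥ M *ᵥ a := by
  simp only [Matrix.trace, Matrix.diag_apply, Matrix.mul_apply, Matrix.vecMulVec_apply,
    dotProduct, Matrix.mulVec, Finset.mul_sum]
  exact Finset.sum_congr rfl fun i _ => Finset.sum_congr rfl fun j _ => by ring

/-- trace of a Hermitian real matrix is the sum of its eigenvalues. -/
lemma aux_trace_eq_sum_eigenvalues {A : Matrix n n ℝ} (hA : A.IsHermitian) :
    A.trace = ∑ i, hA.eigenvalues i := by
  conv_lhs => rw [hA.spectral_theorem, Unitary.conjStarAlgAut_apply]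
  rw [Matrix.trace_mul_cycle,
    Matrix.mem_unitaryGroup_iff'.mp hA.eigenvectorUnitary.2, one_mul, Matrix.trace_diagonal]
  simp

/-- `det (1 + B) ≥ 1 + trace B` for PSD `B`. -/
lemma aux_det_one_add_psd {B : Matrix n n ℝ} (hB : B.PosSemidef) :
    1 + B.trace ≤ (1 + B).det := by
  have hUU : (hB.1.eigenvectorUnitary : Matrix n n ℝ) * star (hB.1.eigenvectorUnitary : Matrix n n ℝ) = 1 :=
    Matrix.mem_unitaryGroup_iff.mp hB.1.eigenvectorUnitary.2
  set U : Matrix n n ℝ := (hB.1.eigenvectorUnitary : Matrix n n ℝ) with hUdef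
  set D : Matrix n n ℝ := Matrix.diagonal (RCLike.ofReal ∘ hB.1.eigenvalues) with hDdef
  have key : (1 : Matrix n n ℝ) + B = U * (1 + D) * star U := by
    have hs := hB.1.spectral_theorem
    rw [Unitary.conjStarAlgAut_apply] at hs
    rw [mul_add, mul_one, add_mul, hUU]
    exact congrArg _ hs
  have hdet : (1 + B).det = (1 + D).det := by
    rw [key, Matrix.det_mul, Matrix.det_mul]
    have : U.det * (1 + D).det * (star U).det = (1 + D).det * (U * star U).det := by
      rw [Matrix.det_mul]; ring
    rw [this, hUU, Matrix.det_one, mul_one]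
  have htr : B.trace = ∑ i, hB.1.eigenvalues i := aux_trace_eq_sum_eigenvalues hB.1
  have hD1 : (1 : Matrix n n ℝ) + D = Matrix.diagonal (fun i => 1 + hB.1.eigenvalues i) := by
    rw [hDdef, ← Matrix.diagonal_one, Matrix.diagonal_add]
    congr 1
  rw [hdet, hD1, Matrix.det_diagonal, htr]
  exact aux_prod_one_add Finset.univ _ fun i _ => hB.eigenvalues_nonneg i

open scoped MatrixOrder in
/-- `det (H + A) ≥ det H * (1 + trace (H⁻¹ A))` for `H` PD and `A` PSD. -/
lemma aux_det_add_psd {H A : Matrix n n ℝ} (hH : H.PosDef) (hA : A.PosSemidef) :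
    H.det * (1 + (H⁻¹ * A).trace) ≤ (H + A).det := by
  set R := CFC.sqrt H with hRdef
  have hRpsd : R.PosSemidef := (CFC.sqrt_nonneg H).posSemidef
  have hRR : R * R = H := CFC.sqrt_mul_sqrt_self H hH.posSemidef.nonneg
  have hdetR : R.det * R.det = H.det := by rw [← Matrix.det_mul, hRR]
  have hdR : R.det ≠ 0 := by
    intro h
    rw [h, mul_zero] at hdetR
    exact absurd hdetR.symm (ne_of_gt hH.det_pos)
  have hRinv : R * R⁻¹ = 1 := Matrix.mul_nonsing_inv _ (Ne.isUnit hdR)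
  have hRinv' : R⁻¹ * R = 1 := Matrix.nonsing_inv_mul _ (Ne.isUnit hdR)
  have hRinvherm : R⁻¹.IsHermitian := hRpsd.1.inv
  set B := R⁻¹ * A * R⁻¹ with hBdef
  have hBpsd : B.PosSemidef := by
    have h := hA.mul_mul_conjTranspose_same R⁻¹
    rwa [hRinvherm.eq] at h
  have hRBR : R * B * R = A := by
    have hassoc : R * (R⁻¹ * A * R⁻¹) * R = R * R⁻¹ * A * (R⁻¹ * R) := by
      simp only [Matrix.mul_assoc]
    rw [hBdef, hassoc, hRinv, hRinv', Matrix.one_mul, Matrix.mul_one]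
  have key : H + A = R * (1 + B) * R := by
    rw [mul_add, mul_one, add_mul, hRR, hRBR]
  have htr : B.trace = (H⁻¹ * A).trace := by
    have hHinv : H⁻¹ = R⁻¹ * R⁻¹ := by rw [← hRR, Matrix.mul_inv_rev]
    rw [hBdef, Matrix.trace_mul_cycle, ← hHinv]
  have hdet : (H + A).det = H.det * (1 + B).det := by
    rw [key, Matrix.det_mul, Matrix.det_mul]
    have h2 : R.det * (1 + B).det * R.det = R.det * R.det * (1 + B).det := by ring
    rw [h2, hdetR]
  rw [hdet, ← htr]
  exact mul_le_mul_of_nonneg_left (aux_det_one_add_psd hBpsd) (le_of_lt hH.det_pos)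

/-- `z/2 ≤ log (1+z)` for `z ∈ [0,2]`. -/
lemma aux_half_le_log_one_add {z : ℝ} (h0 : 0 ≤ z) (h2 : z ≤ 2) :
    z / 2 ≤ Real.log (1 + z) := by
  rw [Real.le_log_iff_exp_le (by linarith)]
  have h := convexOn_exp.2 (Set.mem_univ (0 : ℝ)) (Set.mem_univ (1 : ℝ))
    (show (0:ℝ) ≤ 1 - z / 2 by linarith) (show (0:ℝ) ≤ z / 2 by linarith)
    (show (1 - z / 2) + z / 2 = 1 by ring)
  simp only [smul_eq_mul, mul_zero, mul_one, zero_add, Real.exp_zero] at h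
  have he : Real.exp 1 ≤ 3 := by
    have := Real.exp_one_lt_d9
    linarith
  nlinarith [Real.exp_pos (z / 2)]

/-- Telescoping sum over `Icc 1 t`. -/
lemma aux_telescope (f : ℕ → ℝ) (t : ℕ) :
    ∑ s ∈ Finset.Icc 1 t, (f s - f (s - 1)) = f t - f 0 := by
  induction t with
  | zero => simp
  | succ m ih =>
    rw [Finset.sum_Icc_succ_top (by omega) _, ih]
    simp only [Nat.add_sub_cancel]
    ring

/-- AM–GM / Jensen bound on `log det` of a positive definite matrix. -/
lemma aux_logdet_le {d0 : ℕ} (hd : 0 < d0) {K : Matrix (Fin d0) (Fin d0) ℝ}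
    (hK : K.PosDef) {b : ℝ} (htr : K.trace ≤ (d0 : ℝ) * b) :
    Real.log K.det ≤ (d0 : ℝ) * Real.log b := by
  haveI : Nonempty (Fin d0) := Fin.pos_iff_nonempty.mp hd
  set mu := hK.1.eigenvalues with hmu
  have hmupos : ∀ i, 0 < mu i := hK.eigenvalues_pos
  have hdet : K.det = ∏ i, mu i := hK.1.det_eq_prod_eigenvalues
  have htrace : K.trace = ∑ i, mu i := aux_trace_eq_sum_eigenvalues hK.1
  have hlogdet : Real.log K.det = ∑ i, Real.log (mu i) := by
    rw [hdet, Real.log_prod fun i _ => (hmupos i).ne']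
  have hd0 : (0 : ℝ) < (d0 : ℝ) := by exact_mod_cast hd
  have hjensen := (strictConcaveOn_log_Ioi.concaveOn).le_map_sum
    (t := Finset.univ) (w := fun _ : Fin d0 => ((d0 : ℝ))⁻¹) (p := mu)
    (fun i _ => by positivity)
    (by simp [Finset.card_univ]; field_simp)
    (fun i _ => hmupos i)
  simp only [smul_eq_mul] at hjensen
  have hsum1 : ∑ i, ((d0 : ℝ))⁻¹ * mu i = K.trace / (d0 : ℝ) := by
    rw [htrace, ← Finset.mul_sum]
    ring
  have hsum2 : ∑ i, ((d0 : ℝ))⁻¹ * Real.log (mu i) = (∑ i, Real.log (mu i)) / (d0 : ℝ) := by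
    rw [← Finset.mul_sum]
    ring
  rw [hsum1, hsum2] at hjensen
  have htrpos : 0 < K.trace := by
    rw [htrace]
    exact Finset.sum_pos (fun i _ => hmupos i) Finset.univ_nonempty
  have hlog2 : Real.log (K.trace / (d0 : ℝ)) ≤ Real.log b := by
    apply Real.log_le_log (by positivity)
    rw [div_le_iff₀ hd0]
    linarith [htr]
  have : (∑ i, Real.log (mu i)) / (d0 : ℝ) ≤ Real.log b := le_trans hjensen hlog2
  rw [hlogdet]
  calc ∑ i, Real.log (mu i) = (d0 : ℝ) * ((∑ i, Real.log (mu i)) / (d0 : ℝ)) := by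
        field_simp
    _ ≤ (d0 : ℝ) * Real.log b := by
        exact mul_le_mul_of_nonneg_left this (le_of_lt hd0)

end Aux

/- ===================== MNL-specific lemmas ===================== -/

section MNL

variable {d : ℕ} {ι : Type*}

lemma mnl_denom_pos (S : Finset ι) (x : ι → Fin d → ℝ) (w : Fin d → ℝ) :
    0 < 1 + ∑ j ∈ S, Real.exp (x j ⬝ᵥ w) := by
  have : 0 ≤ ∑ j ∈ S, Real.exp (x j ⬝ᵥ w) :=
    Finset.sum_nonneg fun j _ => (Real.exp_pos _).le
  linarith

lemma mnlProb_nonneg (S : Finset ι) (x : ι → Fin d → ℝ) (w : Fin d → ℝ) (i : ι) :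
    0 ≤ mnlProb S x w i :=
  div_nonneg (Real.exp_pos _).le (mnl_denom_pos S x w).le

lemma mnlProb0_nonneg (S : Finset ι) (x : ι → Fin d → ℝ) (w : Fin d → ℝ) :
    0 ≤ mnlProb0 S x w :=
  div_nonneg one_pos.le (mnl_denom_pos S x w).le

lemma mnl_total (S : Finset ι) (x : ι → Fin d → ℝ) (w : Fin d → ℝ) :
    mnlProb0 S x w + ∑ i ∈ S, mnlProb S x w i = 1 := by
  unfold mnlProb0 mnlProb
  rw [← Finset.sum_div, ← add_div]
  exact div_self (mnl_denom_pos S x w).ne'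

lemma mnl_hessC_psd (S : Finset ι) (x : ι → Fin d → ℝ) (w : Fin d → ℝ) :
    (mnlHessC S x w).PosSemidef := by
  unfold mnlHessC
  exact (aux_psd_smul (aux_psd_vecMulVec _) (mnlProb0_nonneg S x w)).add
    (aux_psd_sum _ _ fun i _ => aux_psd_smul (aux_psd_vecMulVec _) (mnlProb_nonneg S x w i))

/-- trace of `M * mnlHessC` is the weighted quadratic-form sum. -/
lemma mnl_trace_mul_hessC (S : Finset ι) (x : ι → Fin d → ℝ) (w : Fin d → ℝ)
    (M : Matrix (Fin d) (Fin d) ℝ) :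
    (M * mnlHessC S x w).trace
      = mnlProb0 S x w *
          ((0 - mnlMean S x w) ⬝ᵥ M *ᵥ (0 - mnlMean S x w))
        + ∑ i ∈ S, mnlProb S x w i *
            ((x i - mnlMean S x w) ⬝ᵥ M *ᵥ (x i - mnlMean S x w)) := by
  unfold mnlHessC
  rw [mul_add, Matrix.trace_add, Finset.mul_sum, Matrix.trace_sum]
  congr 1
  · rw [mul_smul_comm, Matrix.trace_smul, aux_trace_mul_vecMulVec]
    simp [smul_eq_mul]
  · exact Finset.sum_congr rfl fun i _ => by
      rw [mul_smul_comm, Matrix.trace_smul, aux_trace_mul_vecMulVec]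
      simp [smul_eq_mul]

/-- Key variance bound: the weighted quadratic-form sum w.r.t. a PSD matrix `M`
is at most the max of the uncentered quadratic forms. -/
lemma mnl_form_le (S : Finset ι) (x : ι → Fin d → ℝ) (w : Fin d → ℝ)
    {M : Matrix (Fin d) (Fin d) ℝ} (hM : M.PosSemidef) {b : ℝ} (hb : 0 ≤ b)
    (hxb : ∀ i ∈ S, x i ⬝ᵥ M *ᵥ x i ≤ b) :
    mnlProb0 S x w *
        ((0 - mnlMean S x w) ⬝ᵥ M *ᵥ (0 - mnlMean S x w))
      + ∑ i ∈ S, mnlProb S x w i *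
          ((x i - mnlMean S x w) ⬝ᵥ M *ᵥ (x i - mnlMean S x w)) ≤ b := by
  set p : ι → ℝ := mnlProb S x w with hp
  set p0 : ℝ := mnlProb0 S x w with hp0
  set m : Fin d → ℝ := mnlMean S x w with hm
  have hMt : Mᵀ = M := by
    have h := hM.1.eq
    ext i j
    have h2 := congrFun (congrFun h j) i
    simpa [Matrix.conjTranspose_apply, Matrix.transpose_apply] using h2.symm
  have hsym : ∀ u v : Fin d → ℝ, u ⬝ᵥ M *ᵥ v = v ⬝ᵥ M *ᵥ u := by
    intro u v
    rw [Matrix.dotProduct_mulVec, ← Matrix.mulVec_transpose, hMt, dotProduct_comm]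
  have hexp : ∀ v : Fin d → ℝ, (v - m) ⬝ᵥ M *ᵥ (v - m)
      = v ⬝ᵥ M *ᵥ v - 2 * (v ⬝ᵥ M *ᵥ m) + m ⬝ᵥ M *ᵥ m := by
    intro v
    rw [Matrix.mulVec_sub, dotProduct_sub, sub_dotProduct,
      sub_dotProduct, hsym m v]
    ring
  have hmean : ∑ i ∈ S, p i * (x i ⬝ᵥ M *ᵥ m) = m ⬝ᵥ M *ᵥ m :=
    calc ∑ i ∈ S, p i * (x i ⬝ᵥ M *ᵥ m)
        = ∑ i ∈ S, (p i • x i) ⬝ᵥ M *ᵥ m := by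
          refine Finset.sum_congr rfl fun i _ => ?_
          rw [smul_dotProduct, smul_eq_mul]
      _ = (∑ i ∈ S, p i • x i) ⬝ᵥ M *ᵥ m := (aux_sum_dotProduct S (fun i => p i • x i) _).symm
      _ = m ⬝ᵥ M *ᵥ m := rfl
  have hzero : (0 - m) ⬝ᵥ M *ᵥ (0 - m) = m ⬝ᵥ M *ᵥ m := by
    rw [hexp 0]
    simp [zero_dotProduct]
  have hsum : ∑ i ∈ S, p i * ((x i - m) ⬝ᵥ M *ᵥ (x i - m))
      = ∑ i ∈ S, p i * (x i ⬝ᵥ M *ᵥ x i)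
        - 2 * (∑ i ∈ S, p i * (x i ⬝ᵥ M *ᵥ m)) + (∑ i ∈ S, p i) * (m ⬝ᵥ M *ᵥ m) := by
    rw [Finset.sum_mul, Finset.mul_sum, ← Finset.sum_sub_distrib,
      ← Finset.sum_add_distrib]
    exact Finset.sum_congr rfl fun i _ => by rw [hexp (x i)]; ring
  have htot : p0 + ∑ i ∈ S, p i = 1 := mnl_total S x w
  have hqm : 0 ≤ m ⬝ᵥ M *ᵥ m := aux_q_nonneg hM m
  have hS1 : ∑ i ∈ S, p i * (x i ⬝ᵥ M *ᵥ x i) ≤ (∑ i ∈ S, p i) * b := by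
    rw [Finset.sum_mul]
    exact Finset.sum_le_sum fun i hi =>
      mul_le_mul_of_nonneg_left (hxb i hi) (mnlProb_nonneg S x w i)
  have hple : ∑ i ∈ S, p i ≤ 1 := by
    have := mnlProb0_nonneg S x w
    rw [← hp0] at this
    linarith
  have hpn : 0 ≤ ∑ i ∈ S, p i := Finset.sum_nonneg fun i _ => mnlProb_nonneg S x w i
  have hp0n : 0 ≤ p0 := mnlProb0_nonneg S x w
  rw [hzero, hsum, hmean]
  nlinarith [hS1, hqm, hple, hpn, hp0n, htot]

/-- Nonnegativity of the weighted quadratic-form sum. -/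
lemma mnl_form_nonneg (S : Finset ι) (x : ι → Fin d → ℝ) (w : Fin d → ℝ)
    {M : Matrix (Fin d) (Fin d) ℝ} (hM : M.PosSemidef) :
    0 ≤ mnlProb0 S x w *
        ((0 - mnlMean S x w) ⬝ᵥ M *ᵥ (0 - mnlMean S x w))
      + ∑ i ∈ S, mnlProb S x w i *
          ((x i - mnlMean S x w) ⬝ᵥ M *ᵥ (x i - mnlMean S x w)) := by
  apply add_nonneg
  · exact mul_nonneg (mnlProb0_nonneg S x w) (aux_q_nonneg hM _)
  · exact Finset.sum_nonneg fun i _ =>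
      mul_nonneg (mnlProb_nonneg S x w i) (aux_q_nonneg hM _)

end MNL

/-- **Lemma D.5, elliptical potential lemma for MNL Hessians.**
With `H_s(w) = λ I + Σ_{s'∈[s−1]\𝒲} ∇²ℓ_{s'}(w)`, if
`‖x_{si}‖²_{H_s(w)⁻¹} ≤ 1/2` for all `i ∈ S_s` and all `s ∈ [t]\𝒲`, then
`Σ_{s∈[t]\𝒲} Σ_{i∈S_s∪{0}} p_s(i|S_s,w) ‖x_{si} − x̄_s‖²_{H_s(w)⁻¹}
  ≤ 2d log(1 + t/(dλ))`. -/
theorem mnl_elliptical_potential {d : ℕ} {ι : Type*} (w : Fin d → ℝ)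
    (lam : ℝ) (hlam : 0 < lam) (t : ℕ)
    (Wset : Finset ℕ) (hWset : Wset ⊆ Finset.Icc 1 t)
    (S : ℕ → Finset ι) (x : ℕ → ι → Fin d → ℝ)
    (hx : ∀ s ∈ Finset.Icc 1 t, ∀ i ∈ S s, l2norm (x s i) ≤ 1)
    (H : ℕ → Matrix (Fin d) (Fin d) ℝ)
    (hH : ∀ s, H s = lam • (1 : Matrix (Fin d) (Fin d) ℝ)
      + ∑ s' ∈ (Finset.Icc 1 (s - 1)).filter (fun s' => s' ∉ Wset),
          mnlHessC (S s') (x s') w)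
    (hsmall : ∀ s ∈ Finset.Icc 1 t, s ∉ Wset →
      ∀ i ∈ S s, x s i ⬝ᵥ (H s)⁻¹.mulVec (x s i) ≤ 1 / 2) :
    ∑ s ∈ (Finset.Icc 1 t).filter (fun s => s ∉ Wset),
      (mnlProb0 (S s) (x s) w *
          ((0 - mnlMean (S s) (x s) w) ⬝ᵥ (H s)⁻¹.mulVec (0 - mnlMean (S s) (x s) w))
        + ∑ i ∈ S s, mnlProb (S s) (x s) w i *
            ((x s i - mnlMean (S s) (x s) w) ⬝ᵥ
              (H s)⁻¹.mulVec (x s i - mnlMean (S s) (x s) w)))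
      ≤ 2 * d * Real.log (1 + t / (d * lam)) := by
  classical
  rcases Nat.eq_zero_or_pos d with hd0 | hd
  · -- degenerate case `d = 0` : all dot products vanish
    subst hd0
    have hdot : ∀ v u : Fin 0 → ℝ, v ⬝ᵥ u = (0 : ℝ) := fun v u => by
      simp [dotProduct]
    simp only [hdot, mul_zero, add_zero, Finset.sum_const_zero]
    norm_num
  -- main case `0 < d`
  haveI : Nonempty (Fin d) := Fin.pos_iff_nonempty.mp hd
  have hdR : (0 : ℝ) < (d : ℝ) := by exact_mod_cast hd
  set T : Finset ℕ := (Finset.Icc 1 t).filter (fun s => s ∉ Wset) with hT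
  set Z : ℕ → ℝ := fun s =>
    mnlProb0 (S s) (x s) w *
        ((0 - mnlMean (S s) (x s) w) ⬝ᵥ (H s)⁻¹.mulVec (0 - mnlMean (S s) (x s) w))
      + ∑ i ∈ S s, mnlProb (S s) (x s) w i *
          ((x s i - mnlMean (S s) (x s) w) ⬝ᵥ
            (H s)⁻¹.mulVec (x s i - mnlMean (S s) (x s) w)) with hZ
  show ∑ s ∈ T, Z s ≤ 2 * d * Real.log (1 + t / (d * lam))
  set A : ℕ → Matrix (Fin d) (Fin d) ℝ := fun s => mnlHessC (S s) (x s) w with hA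
  set K : ℕ → Matrix (Fin d) (Fin d) ℝ := fun n =>
    lam • (1 : Matrix (Fin d) (Fin d) ℝ)
      + ∑ s' ∈ (Finset.Icc 1 n).filter (fun s' => s' ∉ Wset), A s' with hKdef
  have hHK : ∀ s, H s = K (s - 1) := fun s => hH s
  have hApsd : ∀ s, (A s).PosSemidef := fun s => mnl_hessC_psd _ _ _
  have hKpd : ∀ n, (K n).PosDef := by
    intro n
    have h1 : (lam • (1 : Matrix (Fin d) (Fin d) ℝ)).PosDef := by
      rw [Matrix.smul_one_eq_diagonal]
      exact Matrix.posDef_diagonal_iff.mpr fun _ => hlam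
    exact h1.add_posSemidef (aux_psd_sum _ _ fun s _ => hApsd s)
  have hIcc : ∀ s : ℕ, 1 ≤ s → Finset.Icc 1 s = insert s (Finset.Icc 1 (s - 1)) := by
    intro s hs
    ext a
    simp only [Finset.mem_Icc, Finset.mem_insert]
    omega
  have hnotmem : ∀ s : ℕ, s ∉ Finset.Icc 1 (s - 1) := by
    intro s
    simp only [Finset.mem_Icc]
    omega
  have hKstep : ∀ s : ℕ, 1 ≤ s → s ∉ Wset → K s = K (s - 1) + A s := by
    intro s hs hsW
    simp only [hKdef]
    rw [hIcc s hs, Finset.filter_insert, if_pos hsW, Finset.sum_insert (by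
      intro hmem
      exact hnotmem s (Finset.mem_of_mem_filter _ hmem))]
    abel
  have hKstepW : ∀ s : ℕ, 1 ≤ s → s ∈ Wset → K s = K (s - 1) := by
    intro s hs hsW
    simp only [hKdef]
    congr 2
    rw [hIcc s hs, Finset.filter_insert, if_neg (not_not_intro hsW)]
  have hK0 : K 0 = lam • (1 : Matrix (Fin d) (Fin d) ℝ) := by
    simp only [hKdef]
    rw [Finset.Icc_eq_empty (by omega)]
    simp
  have hlogK0 : Real.log (K 0).det = (d : ℝ) * Real.log lam := by
    rw [hK0, Matrix.det_smul, Matrix.det_one, mul_one, Real.log_pow]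
    simp [Fintype.card_fin]
  -- per-step inequality
  have hstep : ∀ s ∈ Finset.Icc 1 t,
      (if s ∉ Wset then Z s / 2 else 0)
        ≤ Real.log (K s).det - Real.log (K (s - 1)).det := by
    intro s hs
    have hs1 : 1 ≤ s := (Finset.mem_Icc.mp hs).1
    by_cases hsW : s ∈ Wset
    · rw [if_neg (not_not_intro hsW), hKstepW s hs1 hsW]
      simp
    · rw [if_pos hsW]
      have hpd : (K (s - 1)).PosDef := hKpd (s - 1)
      have hpdinv : ((K (s - 1))⁻¹).PosDef := hpd.inv
      have hHsinv : (H s)⁻¹ = (K (s - 1))⁻¹ := by rw [hHK s]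
      have hinvpsd : ((H s)⁻¹).PosSemidef := by rw [hHsinv]; exact hpdinv.posSemidef
      have hz_eq : Z s = ((K (s - 1))⁻¹ * A s).trace := by
        simp only [hZ]
        rw [← hHsinv, hA]
        exact (mnl_trace_mul_hessC (S s) (x s) w ((H s)⁻¹)).symm
      have hz_le : Z s ≤ 1 / 2 := by
        simp only [hZ]
        exact mnl_form_le (S s) (x s) w hinvpsd (by norm_num) (hsmall s hs hsW)
      have hz_nonneg : 0 ≤ Z s := by
        simp only [hZ]
        exact mnl_form_nonneg (S s) (x s) w hinvpsd
      have hdet1 : (K (s - 1)).det * (1 + Z s) ≤ (K s).det := by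
        rw [hKstep s hs1 hsW, hz_eq]
        exact aux_det_add_psd hpd (hApsd s)
      have hdpos : 0 < (K (s - 1)).det := hpd.det_pos
      have hprodpos : 0 < (K (s - 1)).det * (1 + Z s) := by nlinarith
      have hlog1 : Real.log ((K (s - 1)).det * (1 + Z s)) ≤ Real.log (K s).det :=
        Real.log_le_log hprodpos hdet1
      rw [Real.log_mul (ne_of_gt hdpos) (by nlinarith)] at hlog1
      have hz2 : Z s ≤ 2 := le_trans hz_le (by norm_num)
      have hhalf : Z s / 2 ≤ Real.log (1 + Z s) :=
        aux_half_le_log_one_add hz_nonneg hz2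
      linarith
  -- telescoping
  have htele : ∑ s ∈ Finset.Icc 1 t,
      (Real.log (K s).det - Real.log (K (s - 1)).det)
        = Real.log (K t).det - Real.log (K 0).det :=
    aux_telescope (fun n => Real.log (K n).det) t
  have hsum : ∑ s ∈ T, Z s / 2 ≤ Real.log (K t).det - Real.log (K 0).det := by
    rw [hT, Finset.sum_filter, ← htele]
    exact Finset.sum_le_sum hstep
  -- trace bound
  have htrA : ∀ s ∈ Finset.Icc 1 t, (A s).trace ≤ 1 := by
    intro s hs
    have h1 : (A s).trace = ((1 : Matrix (Fin d) (Fin d) ℝ) * A s).trace := by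
      rw [Matrix.one_mul]
    rw [h1]
    simp only [hA]
    rw [mnl_trace_mul_hessC]
    apply mnl_form_le (S s) (x s) w Matrix.PosSemidef.one zero_le_one
    intro i hi
    rw [Matrix.one_mulVec]
    have hq : 0 ≤ x s i ⬝ᵥ x s i :=
      Finset.sum_nonneg fun j _ => mul_self_nonneg _
    have hl := hx s hs i hi
    unfold l2norm at hl
    nlinarith [Real.sq_sqrt hq, Real.sqrt_nonneg (x s i ⬝ᵥ x s i)]
  have htrK : (K t).trace ≤ (d : ℝ) * (lam + t / d) := by
    have heq : (K t).trace = lam * d + ∑ s ∈ T, (A s).trace := by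
      simp only [hKdef, hT]
      rw [Matrix.trace_add, Matrix.trace_smul, Matrix.trace_one, Matrix.trace_sum]
      simp [Fintype.card_fin, smul_eq_mul]
    have hb : ∑ s ∈ T, (A s).trace ≤ (t : ℝ) := by
      calc ∑ s ∈ T, (A s).trace ≤ ∑ s ∈ T, (1 : ℝ) :=
            Finset.sum_le_sum fun s hs => htrA s (Finset.mem_of_mem_filter _ hs)
        _ = (T.card : ℝ) := by simp
        _ ≤ (t : ℝ) := by
            have h1 : T.card ≤ (Finset.Icc 1 t).card := by
              rw [hT]; exact Finset.card_filter_le _ _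
            have h2 : (Finset.Icc 1 t).card = t := by
              rw [Nat.card_Icc]; omega
            exact_mod_cast le_trans h1 (le_of_eq h2)
    have hdist : (d : ℝ) * (lam + t / d) = lam * d + t := by
      field_simp
    rw [heq, hdist]
    linarith
  have hlogKt : Real.log (K t).det ≤ (d : ℝ) * Real.log (lam + t / d) :=
    aux_logdet_le hd (hKpd t) htrK
  -- combine
  have hdiv : ∑ s ∈ T, Z s / 2 = (∑ s ∈ T, Z s) / 2 := by
    rw [Finset.sum_div]
  have hfinal : ∑ s ∈ T, Z s
      ≤ 2 * ((d : ℝ) * Real.log (lam + t / d) - (d : ℝ) * Real.log lam) := by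
    rw [hdiv] at hsum
    linarith
  have hrhs : 2 * ((d : ℝ) * Real.log (lam + t / d) - (d : ℝ) * Real.log lam)
      = 2 * d * Real.log (1 + t / (d * lam)) := by
    have hpos : (0 : ℝ) < lam + t / d := by positivity
    have hlogeq : Real.log (lam + t / d) - Real.log lam
        = Real.log (1 + t / (d * lam)) := by
      rw [← Real.log_div (ne_of_gt hpos) (ne_of_gt hlam)]
      congr 1
      field_simp
    rw [← hlogeq]
    ring
  linarith
end
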